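/- arXiv:2507.06953 — 12 statements merged into one kernel-verified Lean document; each statement's English description precedes it below -/
import Mathlib

section
/- Let G be a finitely generated nilpotent group. If the commutator subgroup [G,G] is cyclic and contained in the center Z(G), then no positive cone of G is condensed for the conjugation action; that is, for every positive cone P of G there exists a finite subset F ⊆ P such that every g ∈ G with F ⊆ g⁻¹Pg satisfies g⁻¹Pg = P. (Equivalently, the conjugacy orbit equivalence relation E_lo(G) on the space of left orders of G is smooth.) -/
/-- A positive cone of a group `G`: a subsemigroup `P` such that `G` is the disjoint
union of `P`, `P⁻¹` and `{1}`. -/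
def IsPositiveCone {G : Type*} [Group G] (P : Set G) : Prop :=
  (∀ a ∈ P, ∀ b ∈ P, a * b ∈ P) ∧
  (∀ g : G, g ∈ P ∨ g⁻¹ ∈ P ∨ g = 1) ∧
  (∀ g ∈ P, g⁻¹ ∉ P) ∧
  (1 : G) ∉ P

/-- The conjugate `g⁻¹ P g` of a subset `P` of a group. -/
def conjCone {G : Type*} [Group G] (g : G) (P : Set G) : Set G :=
  (fun p => g⁻¹ * p * g) '' P

/-- From a finitely generated span of an image, extract a finite subset of the base
set whose image has the same span. -/
private lemma exists_finite_span_eq {α M : Type*} [AddCommGroup M] [Module ℤ M]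
    (s : Set α) (f : α → M) (hfg : (Submodule.span ℤ (f '' s)).FG) :
    ∃ S : Set α, S ⊆ s ∧ S.Finite ∧
      Submodule.span ℤ (f '' S) = Submodule.span ℤ (f '' s) := by
  classical
  obtain ⟨B, hB⟩ := hfg
  have h1 : ∀ b : (B : Set M), ∃ T : Finset M,
      ↑T ⊆ f '' s ∧ (b : M) ∈ Submodule.span ℤ (↑T : Set M) :=
    fun b => Submodule.mem_span_finite_of_mem_span (hB ▸ Submodule.subset_span b.2)
  choose T hT1 hT2 using h1
  set Tall : Set M := ⋃ b : (B : Set M), (T b : Set M) with hTall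
  have hTallsub : Tall ⊆ f '' s := Set.iUnion_subset fun b => hT1 b
  have hTallfin : Tall.Finite := Set.finite_iUnion fun b => (T b).finite_toSet
  haveI := hTallfin.to_subtype
  have hpre : ∀ t : Tall, ∃ x, x ∈ s ∧ f x = (t : M) := fun t => hTallsub t.2
  choose φ hφ1 hφ2 using hpre
  refine ⟨Set.range φ, Set.range_subset_iff.mpr hφ1, Set.finite_range φ, le_antisymm ?_ ?_⟩
  · exact Submodule.span_mono (Set.image_mono (Set.range_subset_iff.mpr hφ1))
  · rw [← hB]
    refine Submodule.span_le.mpr fun b hb => ?_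
    have hTb : (T ⟨b, hb⟩ : Set M) ⊆ Tall :=
      Set.subset_iUnion (fun b : (B : Set M) => (T b : Set M)) ⟨b, hb⟩
    have h2 : Tall ⊆ f '' Set.range φ := fun t ht => ⟨φ ⟨t, ht⟩, Set.mem_range_self _, hφ2 _⟩
    exact Submodule.span_mono (hTb.trans h2) (hT2 ⟨b, hb⟩)

/-- If `G` is a finitely generated nilpotent group whose commutator subgroup is cyclic
and contained in the center, then no positive cone of `G` is condensed for the
conjugation action. -/
theorem no_condensed_cone_of_cyclic_central_commutator
    {G : Type*} [Group G] [Group.FG G] [Group.IsNilpotent G]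
    (hcyc : ∃ g : G, commutator G = Subgroup.zpowers g)
    (hcen : commutator G ≤ Subgroup.center G)
    (P : Set G) (hP : IsPositiveCone P) :
    ∃ F : Finset G, ↑F ⊆ P ∧
      ∀ g : G, ↑F ⊆ conjCone g P → conjCone g P = P := by
  classical
  by_cases hbot : commutator G = ⊥
  · -- trivial commutator: conjugation is trivial
    refine ⟨∅, by simp, fun g _ => ?_⟩
    have hcomm : ∀ p : G, g⁻¹ * p * g = p := by
      intro p
      open scoped commutatorElement in
      have h1 : ⁅g⁻¹, p⁆ ∈ commutator G := by
        rw [commutator_def]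
        exact Subgroup.commutator_mem_commutator (Subgroup.mem_top _) (Subgroup.mem_top _)
      rw [hbot, Subgroup.mem_bot, commutatorElement_def, inv_inv] at h1
      have h2 := mul_eq_one_iff_eq_inv.mp h1
      rwa [inv_inv] at h2
    ext y
    constructor
    · rintro ⟨p, hp, rfl⟩
      show g⁻¹ * p * g ∈ P
      rwa [hcomm p]
    · intro hy
      exact ⟨y, hy, hcomm y⟩
  · -- main case
    obtain ⟨c₀, hzp₀⟩ := hcyc
    obtain ⟨c, hzp, hcP⟩ : ∃ c : G, commutator G = Subgroup.zpowers c ∧ c ∈ P := by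
      rcases hP.2.1 c₀ with hc | hc | hc
      · exact ⟨c₀, hzp₀, hc⟩
      · exact ⟨c₀⁻¹, by rw [hzp₀, Subgroup.zpowers_inv], hc⟩
      · refine absurd ?_ hbot
        rw [hzp₀, hc]
        exact Subgroup.zpowers_one_eq_bot
    -- centrality
    have hc_center : c ∈ Subgroup.center G :=
      hcen (hzp ▸ Subgroup.mem_zpowers c)
    have hcC : ∀ (k : ℤ) (y : G), c ^ k * y = y * c ^ k := by
      intro k y
      exact (Subgroup.mem_center_iff.mp (Subgroup.zpow_mem _ hc_center k) y).symm
    have hconjc : ∀ (g : G) (k : ℤ), g * c ^ k * g⁻¹ = c ^ k := by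
      intro g k
      rw [mul_assoc, hcC k g⁻¹]
      group
    -- positive powers of c
    have hposP : ∀ n : ℤ, 0 < n → c ^ n ∈ P := by
      intro n hn
      have hnat : ∀ m : ℕ, c ^ (m + 1) ∈ P := by
        intro m
        induction m with
        | zero => simpa using hcP
        | succ k ih => rw [pow_succ]; exact hP.1 _ ih _ hcP
      have he : n = ((n.toNat - 1 : ℕ) + 1 : ℕ) := by omega
      rw [he, zpow_natCast]
      exact hnat _
    have hinj : ∀ a b : ℤ, c ^ a = c ^ b → a = b := by
      intro a b h
      by_contra hne
      rcases lt_or_gt_of_ne hne with hlt | hlt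
      · have h1 : c ^ (b - a) = 1 := by rw [zpow_sub, h]; simp
        have h2 := hposP (b - a) (by omega)
        rw [h1] at h2
        exact hP.2.2.2 h2
      · have h1 : c ^ (a - b) = 1 := by rw [zpow_sub, ← h]; simp
        have h2 := hposP (a - b) (by omega)
        rw [h1] at h2
        exact hP.2.2.2 h2
    -- the exponent function E
    have hw : ∀ g x : G, ∃ k : ℤ, g * x * g⁻¹ * x⁻¹ = c ^ k := by
      intro g x
      open scoped commutatorElement in
      have h1 : ⁅g, x⁆ ∈ commutator G := by
        rw [commutator_def]
        exact Subgroup.commutator_mem_commutator (Subgroup.mem_top _) (Subgroup.mem_top _)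
      rw [hzp, Subgroup.mem_zpowers_iff] at h1
      obtain ⟨k, hk⟩ := h1
      refine ⟨k, ?_⟩
      rw [← commutatorElement_def]
      exact hk.symm
    choose E hE using hw
    have hconj : ∀ g x : G, g * x * g⁻¹ = x * c ^ E g x := by
      intro g x
      have h := hE g x
      have h2 : g * x * g⁻¹ = c ^ E g x * x := by
        rw [← h]; group
      rw [h2, hcC]
    have hEc : ∀ (g : G) (k : ℤ), E g (c ^ k) = 0 := by
      intro g k
      apply hinj
      rw [← hE g (c ^ k), zpow_zero, hconjc]
      group
    have hEmul_x : ∀ g x y : G, E g (x * y) = E g x + E g y := by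
      intro g x y
      apply hinj _ _ (mul_left_cancel (a := x * y) ?_)
      rw [← hconj g (x * y)]
      have e1 : g * (x * y) * g⁻¹ = (g * x * g⁻¹) * (g * y * g⁻¹) := by group
      rw [e1, hconj g x, hconj g y, zpow_add]
      calc x * c ^ E g x * (y * c ^ E g y)
          = x * (c ^ E g x * y) * c ^ E g y := by group
        _ = x * (y * c ^ E g x) * c ^ E g y := by rw [hcC]
        _ = x * y * (c ^ E g x * c ^ E g y) := by group
    have hEmul_g : ∀ g h x : G, E (g * h) x = E g x + E h x := by
      intro g h x
      apply hinj _ _ (mul_left_cancel (a := x) ?_)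
      rw [← hconj (g * h) x]
      have e1 : (g * h) * x * (g * h)⁻¹ = g * (h * x * h⁻¹) * g⁻¹ := by group
      rw [e1, hconj h x]
      have e2 : g * (x * c ^ E h x) * g⁻¹ = (g * x * g⁻¹) * (g * c ^ E h x * g⁻¹) := by group
      rw [e2, hconjc, hconj g x, zpow_add]
      group
    have hE1g : ∀ x : G, E 1 x = 0 := by
      intro x
      have h := hEmul_g 1 1 x
      rw [mul_one] at h
      omega
    have hEinv_g : ∀ g x : G, E g⁻¹ x = - E g x := by
      intro g x
      have := hEmul_g g⁻¹ g x
      rw [inv_mul_cancel, hE1g] at this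
      omega
    have hEinv_x : ∀ g x : G, E g x⁻¹ = - E g x := by
      intro g x
      have := hEmul_x g x x⁻¹
      rw [mul_inv_cancel] at this
      have h1 : E g (1 : G) = 0 := by
        have := hEc g 0
        rwa [zpow_zero] at this
      omega
    -- the set C
    set Cset : Set G := {x : G | (∃ k : ℤ, x * c ^ k ∈ P) ∧ (∃ k : ℤ, x⁻¹ * c ^ k ∈ P)}
      with hCset
    have hCinv : ∀ x ∈ Cset, x⁻¹ ∈ Cset := by
      intro x hx
      refine ⟨hx.2, ?_⟩
      simpa [inv_inv] using hx.1
    have hleast : ∀ x, x ∈ Cset →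
        ∃ mm : ℤ, (x * c ^ mm ∈ P ∧ ∀ k, x * c ^ k ∈ P → mm ≤ k) := by
      rintro x ⟨⟨k1, hk1⟩, ⟨k2, hk2⟩⟩
      apply Int.exists_least_of_bdd (P := fun k => x * c ^ k ∈ P)
      · refine ⟨-k2, fun z hz => ?_⟩
        by_contra hlt
        push_neg at hlt
        have hmem : c ^ (z + k2) ∈ P := by
          have hmul := hP.1 _ hz _ hk2
          have e : (x * c ^ z) * (x⁻¹ * c ^ k2) = c ^ (z + k2) := by
            rw [show (x * c ^ z) * (x⁻¹ * c ^ k2) = (x * c ^ z * x⁻¹) * c ^ k2 by group,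
              hconjc, ← zpow_add]
          rwa [e] at hmul
        have hmem2 : c ^ (-(z + k2)) ∈ P := hposP _ (by omega)
        rw [zpow_neg] at hmem2
        exact hP.2.2.1 _ hmem hmem2
      · exact ⟨k1, hk1⟩
    choose! m hm using hleast
    -- generators
    obtain ⟨Sg, hSgtop, hSgfin⟩ := Group.fg_iff.mp (inferInstance : Group.FG G)
    haveI := hSgfin.fintype
    set Θ : G → (G → ℤ) := fun g x => E g x with hΘ
    have hΘmem : ∀ g : G, Θ g ∈ Submodule.span ℤ (Set.range fun i : Sg => Θ i) := by
      intro g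
      have hg : g ∈ Subgroup.closure Sg := by rw [hSgtop]; trivial
      induction hg using Subgroup.closure_induction with
      | mem x hx => exact Submodule.subset_span ⟨⟨x, hx⟩, rfl⟩
      | one =>
        have h0 : Θ (1 : G) = 0 := funext fun x => hE1g x
        rw [h0]; exact Submodule.zero_mem _
      | mul x y _ _ hx hy =>
        have h0 : Θ (x * y) = Θ x + Θ y := funext fun z => hEmul_g x y z
        rw [h0]; exact Submodule.add_mem _ hx hy
      | inv x _ hx =>
        have h0 : Θ x⁻¹ = - Θ x := funext fun z => hEinv_g x z
        rw [h0]; exact Submodule.neg_mem _ hx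
    set vec : G → (Sg → ℤ) := fun x i => E (i : G) x with hvec
    have hUfg : (Submodule.span ℤ (vec '' Cset)).FG :=
      IsNoetherian.noetherian _
    obtain ⟨Sfin, hSfinsub, hSfinfin, hspaneq⟩ := exists_finite_span_eq Cset vec hUfg
    -- the finite family F
    refine ⟨hSfinfin.toFinset.image (fun x => x * c ^ m x) ∪
      hSfinfin.toFinset.image (fun x => x⁻¹ * c ^ m x⁻¹), ?_, ?_⟩
    · intro f hf
      simp only [Finset.coe_union, Set.mem_union, Finset.coe_image, Set.mem_image,
        Set.Finite.coe_toFinset] at hf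
      rcases hf with ⟨x, hx, rfl⟩ | ⟨x, hx, rfl⟩
      · exact (hm x (hSfinsub hx)).1
      · exact (hm x⁻¹ (hCinv x (hSfinsub hx))).1
    · intro g hFQ
      have hQmem : ∀ y, y ∈ conjCone g P ↔ g * y * g⁻¹ ∈ P := by
        intro y
        constructor
        · rintro ⟨p, hp, rfl⟩
          have e : g * (g⁻¹ * p * g) * g⁻¹ = p := by group
          rwa [e]
        · intro h
          exact ⟨g * y * g⁻¹, h, by group⟩
      -- Step 1 : E g x = 0 for x in Sfin
      have step1 : ∀ x ∈ Sfin, E g x = 0 := by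
        intro x hx
        have hxC : x ∈ Cset := hSfinsub hx
        have hone : ∀ y ∈ Cset, y * c ^ m y ∈ conjCone g P → 0 ≤ E g y := by
          intro y hyC hmem
          rw [hQmem] at hmem
          have e1 : g * (y * c ^ m y) * g⁻¹ = y * c ^ (m y + E g y) := by
            have e2 : E g (y * c ^ m y) = E g y := by
              rw [hEmul_x, hEc]; ring
            rw [hconj, e2, mul_assoc, ← zpow_add]
          rw [e1] at hmem
          have := (hm y hyC).2 _ hmem
          omega
        have h1 : x * c ^ m x ∈ conjCone g P := by
          apply hFQ
          simp only [Finset.coe_union, Set.mem_union, Finset.coe_image, Set.mem_image,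
            Set.Finite.coe_toFinset]
          exact Or.inl ⟨x, hx, rfl⟩
        have h2 : x⁻¹ * c ^ m x⁻¹ ∈ conjCone g P := by
          apply hFQ
          simp only [Finset.coe_union, Set.mem_union, Finset.coe_image, Set.mem_image,
            Set.Finite.coe_toFinset]
          exact Or.inr ⟨x, hx, rfl⟩
        have ha := hone x hxC h1
        have hb := hone x⁻¹ (hCinv x hxC) h2
        rw [hEinv_x] at hb
        omega
      -- Step 2 : E g x = 0 for all x in Cset
      have step2 : ∀ x ∈ Cset, E g x = 0 := by
        obtain ⟨a, ha⟩ := (Submodule.mem_span_range_iff_exists_fun ℤ).mp (hΘmem g)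
        have hEval : ∀ x : G, (∑ i : Sg, a i * E (i : G) x) = E g x := by
          intro x
          have h2 := congrFun ha x
          simpa [Finset.sum_apply, hΘ] using h2
        let l : (Sg → ℤ) →ₗ[ℤ] ℤ :=
          { toFun := fun u => ∑ i : Sg, a i * u i
            map_add' := by
              intro u v
              simp [mul_add, Finset.sum_add_distrib]
            map_smul' := by
              intro r u
              simp only [Pi.smul_apply, smul_eq_mul, RingHom.id_apply]
              rw [Finset.mul_sum]
              exact Finset.sum_congr rfl fun i _ => by ring }
        have hker : Submodule.span ℤ (vec '' Sfin) ≤ LinearMap.ker l := by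
          rw [Submodule.span_le]
          rintro _ ⟨x, hx, rfl⟩
          simp only [SetLike.mem_coe, LinearMap.mem_ker]
          show (∑ i : Sg, a i * vec x i) = 0
          have : (∑ i : Sg, a i * vec x i) = E g x := hEval x
          rw [this, step1 x hx]
        intro x hx
        have hvx : vec x ∈ Submodule.span ℤ (vec '' Sfin) := by
          rw [hspaneq]
          exact Submodule.subset_span ⟨x, hx, rfl⟩
        have h0 := hker hvx
        rw [LinearMap.mem_ker] at h0
        have : (∑ i : Sg, a i * vec x i) = E g x := hEval x
        rw [← this]
        exact h0
      -- Step 3 : conclude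
      ext y
      rw [hQmem y]
      by_cases hyC : y ∈ Cset
      · rw [hconj, step2 y hyC, zpow_zero, mul_one]
      · have hcases : (∀ k : ℤ, y * c ^ k ∉ P) ∨ (∀ k : ℤ, y⁻¹ * c ^ k ∉ P) := by
          rw [hCset] at hyC
          simp only [Set.mem_setOf_eq, not_and_or, not_exists] at hyC
          exact hyC
        rcases hcases with h1 | h2
        · constructor
          · intro hmem
            exfalso
            rw [hconj g y] at hmem
            exact h1 _ hmem
          · intro hmem
            exfalso
            have := h1 0
            rw [zpow_zero, mul_one] at this
            exact this hmem
        · have hy1 : y ≠ 1 := by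
            rintro rfl
            have := h2 1
            rw [inv_one, one_mul, zpow_one] at this
            exact this hcP
          have hyP : y ∈ P := by
            rcases hP.2.1 y with h | h | h
            · exact h
            · exfalso
              have := h2 0
              rw [zpow_zero, mul_one] at this
              exact this h
            · exact absurd h hy1
          constructor
          · intro _; exact hyP
          · intro _
            rw [hconj]
            rcases hP.2.1 (y * c ^ E g y) with h | h | h
            · exact h
            · exfalso
              have e : (y * c ^ E g y)⁻¹ = y⁻¹ * c ^ (-(E g y)) := by
                rw [mul_inv_rev, ← zpow_neg, hcC]
              rw [e] at h
              exact h2 _ h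
            · exfalso
              have hy' := eq_inv_of_mul_eq_one_right h
              have := h2 (1 - E g y)
              apply this
              rw [← hy', ← zpow_add]
              have e : E g y + (1 - E g y) = 1 := by ring
              rw [e, zpow_one]
              exact hcP
end

section
/- For every n ≥ 1, no positive cone of the generalized discrete Heisenberg group H_{2n+1} is condensed for the conjugation action: for every positive cone P of H_{2n+1} there exists a finite subset F ⊆ P such that every g ∈ H_{2n+1} with F ⊆ g⁻¹Pg satisfies g⁻¹Pg = P. (Equivalently, E_lo(H_{2n+1}) is smooth.) -/
open Matrix

/-- The defining pattern of a (generalized) Heisenberg matrix: block form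
`(1 a c; 0 Iₙ bᵀ; 0 0 1)`, i.e. ones on the diagonal and zeros everywhere outside the
first row, the last column and the diagonal. -/
def IsHeisMat (n : ℕ) (M : Matrix (Fin (n + 2)) (Fin (n + 2)) ℤ) : Prop :=
  (∀ i, M i i = 1) ∧
  ∀ i j : Fin (n + 2), i ≠ j → i ≠ 0 → j ≠ Fin.last (n + 1) → M i j = 0

namespace IsHeisMat

variable {n : ℕ}

lemma zero_ne_last : (0 : Fin (n + 2)) ≠ Fin.last (n + 1) := by
  simp [Fin.ext_iff]

lemma one (n : ℕ) : IsHeisMat n 1 := by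
  constructor
  · intro i; simp
  · intro i j hij _ _; simp [Matrix.one_apply, hij]

lemma mul {M N : Matrix (Fin (n + 2)) (Fin (n + 2)) ℤ}
    (hM : IsHeisMat n M) (hN : IsHeisMat n N) : IsHeisMat n (M * N) := by
  constructor
  · intro i
    rw [Matrix.mul_apply, Finset.sum_eq_single i]
    · rw [hM.1, hN.1, one_mul]
    · intro l _ hl
      by_cases hi0 : i = 0
      · subst hi0
        rw [hN.2 l 0 hl hl zero_ne_last, mul_zero]
      · by_cases hll : l = Fin.last (n + 1)
        · subst hll
          rw [hN.2 (Fin.last (n + 1)) i hl zero_ne_last.symm (Ne.symm hl), mul_zero]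
        · rw [hM.2 i l (Ne.symm hl) hi0 hll, zero_mul]
    · intro hi; exact absurd (Finset.mem_univ i) hi
  · intro i j hij hi0 hjl
    rw [Matrix.mul_apply, Finset.sum_eq_zero]
    intro l _
    by_cases hll : l = Fin.last (n + 1)
    · subst hll
      rw [hN.2 (Fin.last (n + 1)) j (Ne.symm hjl) (Ne.symm zero_ne_last) hjl, mul_zero]
    · by_cases hil : i = l
      · subst hil
        rw [hN.2 i j hij hi0 hjl, mul_zero]
      · rw [hM.2 i l hil hi0 hll, zero_mul]

end IsHeisMat

section InvAux

variable {n : ℕ} {X : Matrix (Fin (n + 2)) (Fin (n + 2)) ℤ}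

lemma sq_supp (hx1 : ∀ i, X i i = 0)
    (hx2 : ∀ i j, i ≠ 0 → j ≠ Fin.last (n + 1) → X i j = 0) :
    ∀ i j, ¬(i = 0 ∧ j = Fin.last (n + 1)) → (X * X) i j = 0 := by
  intro i j hij
  rw [Matrix.mul_apply, Finset.sum_eq_zero]
  intro l _
  by_cases hi0 : i = 0
  · have hjl : j ≠ Fin.last (n + 1) := fun h => hij ⟨hi0, h⟩
    by_cases hl0 : l = 0
    · subst hi0; subst hl0; rw [hx1 0, zero_mul]
    · rw [hx2 l j hl0 hjl, mul_zero]
  · by_cases hll : l = Fin.last (n + 1)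
    · subst hll
      by_cases hjl : j = Fin.last (n + 1)
      · subst hjl; rw [hx1, mul_zero]
      · rw [hx2 _ j IsHeisMat.zero_ne_last.symm hjl, mul_zero]
    · rw [hx2 i l hi0 hll, zero_mul]

lemma cube_zero (hx1 : ∀ i, X i i = 0)
    (hx2 : ∀ i j, i ≠ 0 → j ≠ Fin.last (n + 1) → X i j = 0) :
    X * X * X = 0 := by
  ext i j
  rw [Matrix.mul_apply, Matrix.zero_apply, Finset.sum_eq_zero]
  intro l _
  by_cases h : i = 0 ∧ l = Fin.last (n + 1)
  · obtain ⟨hi0, hll⟩ := h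
    subst hll
    by_cases hjl : j = Fin.last (n + 1)
    · subst hjl; rw [hx1, mul_zero]
    · rw [hx2 _ j IsHeisMat.zero_ne_last.symm hjl, mul_zero]
  · rw [sq_supp hx1 hx2 i l h, zero_mul]

end InvAux

/-- The generalized discrete Heisenberg group `H_{2n+1}`, realized as the subgroup of the
units of the ring of `(n+2) × (n+2)` integer matrices consisting of the matrices of block
form `(1 a c; 0 Iₙ bᵀ; 0 0 1)`. -/
def Heisenberg (n : ℕ) : Subgroup (Matrix (Fin (n + 2)) (Fin (n + 2)) ℤ)ˣ where
  carrier := {U | IsHeisMat n U.val}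
  one_mem' := IsHeisMat.one n
  mul_mem' hA hB := IsHeisMat.mul hA hB
  inv_mem' := by
    intro U hU
    replace hU : IsHeisMat n U.val := hU
    set M : Matrix (Fin (n + 2)) (Fin (n + 2)) ℤ := U.val with hMdef
    set X : Matrix (Fin (n + 2)) (Fin (n + 2)) ℤ := M - 1 with hXdef
    have hx1 : ∀ i, X i i = 0 := by
      intro i; simp [hXdef, Matrix.sub_apply, hU.1 i]
    have hx2 : ∀ i j, i ≠ 0 → j ≠ Fin.last (n + 1) → X i j = 0 := by
      intro i j hi0 hjl
      by_cases hij : i = j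
      · subst hij; exact hx1 i
      · simp [hXdef, Matrix.sub_apply, hU.2 i j hij hi0 hjl, Matrix.one_apply_ne hij]
    have hM1 : M = 1 + X := by rw [hXdef]; abel
    have hcube : X * X * X = 0 := cube_zero hx1 hx2
    have hright : M * (1 - X + X * X) = 1 := by
      rw [hM1]
      have : (1 + X) * (1 - X + X * X) = 1 + X * X * X := by noncomm_ring
      rw [this, hcube, add_zero]
    have hinv : (U⁻¹).val = 1 - X + X * X := Units.inv_eq_of_mul_eq_one_right hright
    show IsHeisMat n _
    rw [hinv]
    constructor
    · intro i
      have h2 : (X * X) i i = 0 :=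
        sq_supp hx1 hx2 i i (by rintro ⟨h0, hl⟩; exact IsHeisMat.zero_ne_last (h0 ▸ hl))
      simp [Matrix.add_apply, Matrix.sub_apply, hx1 i, h2]
    · intro i j hij hi0 hjl
      have h2 : (X * X) i j = 0 := sq_supp hx1 hx2 i j (fun h => hi0 h.1)
      simp [Matrix.add_apply, Matrix.sub_apply, hx2 i j hi0 hjl, h2,
        Matrix.one_apply_ne hij]

lemma abstract_no_condensed {G : Type*} [Group G] (P : Set G) (hP : IsPositiveCone P)
    {V : Type*} [AddCommGroup V] [IsNoetherian ℤ V]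
    (A : G → V) (hA : ∀ g h : G, A (g * h) = A g + A h)
    (z : G) (hzc : ∀ g : G, g * z = z * g) (hzP : z ∈ P) (hAz : A z = 0)
    (w : G → (V →+ ℤ))
    (hconj : ∀ g h : G, g * h * g⁻¹ = h * z ^ (w g (A h)))
    (hker : ∀ h : G, A h = 0 → ∃ k : ℤ, h = z ^ k) :
    ∃ F : Finset G, ↑F ⊆ P ∧ ∀ g : G, ↑F ⊆ conjCone g P → conjCone g P = P := by
  classical
  obtain ⟨hmul, htri, hasym, h1P⟩ := hP
  -- basic facts
  have hA1 : A 1 = 0 := by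
    have h := hA 1 1
    rw [mul_one] at h
    exact (left_eq_add.mp h)
  have hAinv : ∀ g : G, A g⁻¹ = -A g := by
    intro g
    have h := hA g g⁻¹
    rw [mul_inv_cancel, hA1] at h
    exact (neg_eq_of_add_eq_zero_right h.symm).symm
  have hAzn : ∀ m : ℕ, A (z ^ m) = 0 := by
    intro m
    induction m with
    | zero => simpa using hA1
    | succ k ih => rw [pow_succ, hA, ih, hAz, add_zero]
  have hAzk : ∀ k : ℤ, A (z ^ k) = 0 := by
    intro k
    rcases le_or_gt 0 k with hk | hk
    · lift k to ℕ using hk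
      rw [_root_.zpow_natCast]; exact hAzn _
    · have : z ^ k = (z ^ (-k))⁻¹ := by rw [← _root_.zpow_neg, neg_neg]
      rw [this, hAinv]
      have : (0:ℤ) ≤ -k := by omega
      lift (-k) to ℕ using this with m hm
      rw [_root_.zpow_natCast, hAzn, neg_zero]
  have hzcent : ∀ (g : G) (k : ℤ), g * z ^ k = z ^ k * g := by
    intro g k
    have hc : Commute g z := hzc g
    exact hc.zpow_right k
  have hzpowP : ∀ k : ℤ, 1 ≤ k → z ^ k ∈ P := by
    have hn : ∀ m : ℕ, z ^ (m + 1) ∈ P := by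
      intro m
      induction m with
      | zero => simpa using hzP
      | succ j ih => rw [pow_succ]; exact hmul _ ih _ hzP
    intro k hk
    have h0 : (0:ℤ) ≤ k := by omega
    lift k to ℕ using h0
    have : ∃ m : ℕ, k = m + 1 := ⟨k - 1, by omega⟩
    obtain ⟨m, rfl⟩ := this
    rw [_root_.zpow_natCast]; exact hn m
  -- the subgroup E of V
  have hzero_mem : (∃ p ∈ P, A p = (0:V)) ∧ ∃ p ∈ P, A p = -(0:V) := by
    refine ⟨⟨z, hzP, hAz⟩, ⟨z, hzP, by rw [hAz, neg_zero]⟩⟩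
  have hEadd : ∀ a b : V, a ∈ {v : V | (∃ p ∈ P, A p = v) ∧ ∃ p ∈ P, A p = -v} →
      b ∈ {v : V | (∃ p ∈ P, A p = v) ∧ ∃ p ∈ P, A p = -v} →
      a + b ∈ {v : V | (∃ p ∈ P, A p = v) ∧ ∃ p ∈ P, A p = -v} := by
    rintro a c ⟨⟨p, hp, hpa⟩, ⟨q, hq, hqa⟩⟩ ⟨⟨r, hr, hra⟩, ⟨s, hs, hsa⟩⟩
    constructor
    · exact ⟨p * r, hmul _ hp _ hr, by rw [hA, hpa, hra]⟩
    · exact ⟨q * s, hmul _ hq _ hs, by rw [hA, hqa, hsa]; abel⟩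
  have hEneg : ∀ a : V, a ∈ {v : V | (∃ p ∈ P, A p = v) ∧ ∃ p ∈ P, A p = -v} →
      -a ∈ {v : V | (∃ p ∈ P, A p = v) ∧ ∃ p ∈ P, A p = -v} := by
    rintro a ⟨⟨p, hp, hpa⟩, ⟨q, hq, hqa⟩⟩
    exact ⟨⟨q, hq, hqa⟩, ⟨p, hp, by rw [hpa, neg_neg]⟩⟩
  let E : Submodule ℤ V :=
    { carrier := {v : V | (∃ p ∈ P, A p = v) ∧ ∃ p ∈ P, A p = -v}
      zero_mem' := hzero_mem
      add_mem' := fun {a} {b} ha hb => hEadd a b ha hb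
      smul_mem' := by
        intro c v hv
        induction c using Int.induction_on with
        | zero =>
          exact ⟨⟨z, hzP, by rw [hAz, zero_smul]⟩, ⟨z, hzP, by rw [hAz, zero_smul, neg_zero]⟩⟩
        | succ i ih => rw [add_smul, one_smul]; exact hEadd _ _ ih hv
        | pred i ih => rw [sub_smul, one_smul, sub_eq_add_neg]; exact hEadd _ _ ih (hEneg _ hv) }
  have hEmem : ∀ v : V, v ∈ E ↔ (∃ p ∈ P, A p = v) ∧ ∃ p ∈ P, A p = -v := fun v => Iff.rfl
  obtain ⟨S, hS⟩ : E.FG := IsNoetherian.noetherian E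
  have hSsub : (S : Set V) ⊆ E := hS ▸ Submodule.subset_span
  -- boundary elements
  have hbound : ∀ p q : G, p ∈ P → q ∈ P → A q = -A p →
      ∃ b : G, b ∈ P ∧ A b = A p ∧ b * z⁻¹ ∉ P := by
    intro p q hp hq hAq
    obtain ⟨k, hk⟩ : ∃ k : ℤ, p * q = z ^ k := by
      apply hker
      rw [hA, hAq, add_neg_cancel]
    have hqe : q = p⁻¹ * z ^ k := by
      rw [← hk]; group
    have hbdd : ∀ m : ℤ, p * z ^ m ∈ P → 1 - k ≤ m := by
      intro m hm
      by_contra hcon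
      push_neg at hcon
      have hz' : (p * z ^ m) * q ∈ P := hmul _ hm _ hq
      have heq : (p * z ^ m) * q = z ^ (m + k) := by
        rw [hqe, mul_assoc, ← hzcent, ← mul_assoc, ← mul_assoc, mul_inv_cancel, one_mul,
          ← _root_.zpow_add, add_comm]
      rw [heq] at hz'
      rcases eq_or_lt_of_le (show m + k ≤ 0 by omega) with h0 | h0
      · rw [h0, _root_.zpow_zero] at hz'; exact h1P hz'
      · have : (z ^ (m + k))⁻¹ ∈ P := by
          rw [← _root_.zpow_neg]; exact hzpowP _ (by omega)
        exact hasym _ hz' this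
    obtain ⟨m₀, hm₀, hleast⟩ := Int.exists_least_of_bdd (P := fun m => p * z ^ m ∈ P)
      ⟨1 - k, fun m hm => hbdd m hm⟩ ⟨0, by simpa using hp⟩
    refine ⟨p * z ^ m₀, hm₀, by rw [hA, hAzk, add_zero], ?_⟩
    intro hcon
    have : p * z ^ m₀ * z⁻¹ = p * z ^ (m₀ - 1) := by
      rw [mul_assoc, ← _root_.zpow_sub_one]
    rw [this] at hcon
    have := hleast _ hcon
    omega
  -- choose boundary pairs for generators
  have hsel : ∀ v : V, v ∈ S → ∃ b b' : G, b ∈ P ∧ b' ∈ P ∧ A b = v ∧ A b' = -v ∧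
      b * z⁻¹ ∉ P ∧ b' * z⁻¹ ∉ P := by
    intro v hv
    obtain ⟨⟨p, hp, hpa⟩, ⟨q, hq, hqa⟩⟩ := (hEmem v).mp (hSsub hv)
    obtain ⟨b, hb, hba, hbz⟩ := hbound p q hp hq (by rw [hqa, hpa])
    obtain ⟨b', hb', hba', hbz'⟩ := hbound q p hq hp (by rw [hqa, hpa, neg_neg])
    exact ⟨b, b', hb, hb', by rw [hba, hpa], by rw [hba', hqa], hbz, hbz'⟩
  choose! b b' hbP hb'P hAb hAb' hbz hb'z using hsel
  refine ⟨S.image b ∪ S.image b', ?_, ?_⟩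
  · intro x hx
    simp only [Finset.coe_union, Set.mem_union, Finset.coe_image, Set.mem_image,
      Finset.mem_coe] at hx
    rcases hx with ⟨v, hv, rfl⟩ | ⟨v, hv, rfl⟩
    · exact hbP v hv
    · exact hb'P v hv
  · intro g hF
    have hmem : ∀ x : G, x ∈ conjCone g P ↔ x * z ^ (w g (A x)) ∈ P := by
      intro x
      constructor
      · rintro ⟨p, hp, rfl⟩
        have hx : g * (g⁻¹ * p * g) * g⁻¹ = p := by group
        have := hconj g (g⁻¹ * p * g)
        rw [hx] at this
        rw [← this]; exact hp
      · intro hx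
        refine ⟨g * x * g⁻¹, ?_, by group⟩
        rw [hconj g x]; exact hx
    -- from F ⊆ conjCone : w g vanishes on S
    have hwS : ∀ v ∈ S, w g v = 0 := by
      intro v hv
      have hb_mem : b v ∈ conjCone g P := hF (by
        simp only [Finset.coe_union, Set.mem_union, Finset.coe_image, Set.mem_image,
          Finset.mem_coe]
        exact Or.inl ⟨v, hv, rfl⟩)
      have hb'_mem : b' v ∈ conjCone g P := hF (by
        simp only [Finset.coe_union, Set.mem_union, Finset.coe_image, Set.mem_image,
          Finset.mem_coe]
        exact Or.inr ⟨v, hv, rfl⟩)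
      rw [hmem, hAb v hv] at hb_mem
      rw [hmem, hAb' v hv, map_neg] at hb'_mem
      have hge : ∀ (x : G), x ∈ P → x * z⁻¹ ∉ P → ∀ t : ℤ, x * z ^ t ∈ P → 0 ≤ t := by
        intro x hx hxz t hxt
        by_contra hcon
        push_neg at hcon
        apply hxz
        have heq : x * z⁻¹ = (x * z ^ t) * z ^ (-1 - t) := by
          rw [mul_assoc, ← _root_.zpow_add, show t + (-1 - t) = -1 by ring, _root_.zpow_neg_one]
        rw [heq]
        rcases eq_or_lt_of_le (show t ≤ -1 by omega) with h0 | h0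
        · rw [show (-1 - t : ℤ) = 0 by omega, _root_.zpow_zero, mul_one]; exact hxt
        · exact hmul _ hxt _ (hzpowP _ (by omega))
      have h1 := hge (b v) (hbP v hv) (hbz v hv) _ hb_mem
      have h2 := hge (b' v) (hb'P v hv) (hb'z v hv) _ hb'_mem
      omega
    have hwE : ∀ v ∈ E, w g v = 0 := by
      have hle : E ≤ LinearMap.ker (w g).toIntLinearMap := by
        rw [← hS, Submodule.span_le]
        intro v hv
        exact hwS v hv
      intro v hv
      exact hle hv
    -- cosets not meeting E in both directions are full or empty
    have hfull : ∀ x : G, A x ∉ E → ∀ s : ℤ, x ∈ P → x * z ^ s ∈ P := by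
      intro x hxE s hx
      rcases htri (x * z ^ s) with h | h | h
      · exact h
      · exfalso
        apply hxE
        rw [hEmem]
        constructor
        · exact ⟨x, hx, rfl⟩
        · refine ⟨(x * z ^ s)⁻¹, h, ?_⟩
          rw [hAinv, hA, hAzk, add_zero]
      · exfalso
        apply hxE
        have : x = z ^ (-s) := by
          rw [← mul_one x, show (1:G) = z ^ s * z ^ (-s) by rw [← _root_.zpow_add]; simp,
            ← mul_assoc, h, one_mul]
        rw [this, hAzk]
        exact E.zero_mem
    apply Set.ext
    intro x
    rw [hmem x]
    by_cases hxE : A x ∈ E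
    · rw [hwE _ hxE, _root_.zpow_zero, mul_one]
    · constructor
      · intro hx
        have hx' : x * z ^ (w g (A x)) * z ^ (-(w g (A x))) ∈ P := by
          apply hfull _ (by rwa [hA, hAzk, add_zero]) _ hx
        rwa [mul_assoc, ← _root_.zpow_add, add_neg_cancel, _root_.zpow_zero, mul_one] at hx'
      · intro hx
        exact hfull x hxE _ hx
section HeisCoord

variable {n : ℕ}

/-- The "middle" indices of a Heisenberg matrix. -/
def hmid (i : Fin n) : Fin (n + 2) := i.succ.castSucc

lemma hmid_ne_zero (i : Fin n) : hmid i ≠ 0 := by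
  simp [hmid, Fin.ext_iff]

lemma hmid_ne_last (i : Fin n) : hmid i ≠ Fin.last (n + 1) := by
  intro h
  have hv : (i : ℕ) + 1 = n + 1 := by simpa [hmid, Fin.ext_iff] using h
  have := i.isLt
  omega

lemma hmid_inj {i j : Fin n} (h : hmid i = hmid j) : i = j := by
  simpa [hmid, Fin.ext_iff] using h

lemma index_cases (j : Fin (n + 2)) :
    j = 0 ∨ j = Fin.last (n + 1) ∨ ∃ i : Fin n, j = hmid i := by
  by_cases h0 : (j : ℕ) = 0
  · exact Or.inl (Fin.ext (by simp [h0]))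
  · by_cases hl : (j : ℕ) = n + 1
    · exact Or.inr (Or.inl (by simpa [Fin.ext_iff] using hl))
    · refine Or.inr (Or.inr ⟨⟨(j : ℕ) - 1, by omega⟩, ?_⟩)
      have : (j : ℕ) < n + 2 := j.isLt
      simp only [hmid, Fin.ext_iff, Fin.coe_castSucc, Fin.val_succ]
      omega

/-- Decomposition of a sum over `Fin (n+2)` into first, middle and last terms. -/
lemma sum_decomp (f : Fin (n + 2) → ℤ) :
    ∑ l, f l = f 0 + (∑ i : Fin n, f (hmid i)) + f (Fin.last (n + 1)) := by
  have h1 : ∀ i : Fin n, ((i.castSucc).succ : Fin (n + 2)) = hmid i := by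
    intro i
    simp [hmid, Fin.ext_iff]
  rw [Fin.sum_univ_succ, Fin.sum_univ_castSucc]
  simp_rw [h1]
  rw [Fin.succ_last]
  ring

/-- The underlying matrix of an element of the Heisenberg group. -/
def hmat (U : ↥(Heisenberg n)) : Matrix (Fin (n + 2)) (Fin (n + 2)) ℤ :=
  ((U : (Matrix (Fin (n + 2)) (Fin (n + 2)) ℤ)ˣ) : Matrix (Fin (n + 2)) (Fin (n + 2)) ℤ)

lemma hmat_heis (U : ↥(Heisenberg n)) : IsHeisMat n (hmat U) := U.2

lemma hmat_mul (U V : ↥(Heisenberg n)) : hmat (U * V) = hmat U * hmat V := rfl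

lemma hmat_one : hmat (1 : ↥(Heisenberg n)) = 1 := rfl

/-- The `a`-coordinate (first row, middle columns). -/
def av (U : ↥(Heisenberg n)) : Fin n → ℤ := fun i => hmat U 0 (hmid i)

/-- The `b`-coordinate (middle rows, last column). -/
def bv (U : ↥(Heisenberg n)) : Fin n → ℤ := fun i => hmat U (hmid i) (Fin.last (n + 1))

/-- The `c`-coordinate (top-right entry). -/
def cv (U : ↥(Heisenberg n)) : ℤ := hmat U 0 (Fin.last (n + 1))

lemma coords_ext {U V : ↥(Heisenberg n)} (ha : av U = av V) (hb : bv U = bv V)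
    (hc : cv U = cv V) : U = V := by
  apply Subtype.ext
  apply Units.ext
  show hmat U = hmat V
  ext i j
  by_cases hij : i = j
  · subst hij
    rw [(hmat_heis U).1, (hmat_heis V).1]
  rcases index_cases i with hi | hi | ⟨k, hi⟩
  · subst hi
    rcases index_cases j with hj | hj | ⟨l, hj⟩
    · exact absurd hj.symm hij
    · subst hj; exact hc
    · subst hj; exact congrFun ha l
  · subst hi
    have hjl : j ≠ Fin.last (n + 1) := Ne.symm hij
    rw [(hmat_heis U).2 _ _ hij (Ne.symm IsHeisMat.zero_ne_last) hjl,
      (hmat_heis V).2 _ _ hij (Ne.symm IsHeisMat.zero_ne_last) hjl]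
  · subst hi
    by_cases hjl : j = Fin.last (n + 1)
    · subst hjl; exact congrFun hb k
    · rw [(hmat_heis U).2 _ _ hij (hmid_ne_zero k) hjl,
        (hmat_heis V).2 _ _ hij (hmid_ne_zero k) hjl]

lemma av_mul (U V : ↥(Heisenberg n)) : av (U * V) = av U + av V := by
  funext i
  show (hmat U * hmat V) 0 (hmid i) = av U i + av V i
  rw [Matrix.mul_apply, sum_decomp]
  have h0 : hmat U 0 0 * hmat V 0 (hmid i) = av V i := by
    rw [(hmat_heis U).1, one_mul]; rfl
  have hlast : hmat U 0 (Fin.last (n + 1)) * hmat V (Fin.last (n + 1)) (hmid i) = 0 := by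
    rw [(hmat_heis V).2 _ _ (Ne.symm (hmid_ne_last i)) (Ne.symm IsHeisMat.zero_ne_last)
      (hmid_ne_last i), mul_zero]
  have hmids : (∑ k : Fin n, hmat U 0 (hmid k) * hmat V (hmid k) (hmid i)) = av U i := by
    rw [Finset.sum_eq_single i]
    · rw [(hmat_heis V).1, mul_one]; rfl
    · intro k _ hk
      rw [(hmat_heis V).2 _ _ (fun h => hk (hmid_inj h)) (hmid_ne_zero k) (hmid_ne_last i),
        mul_zero]
    · intro h; exact absurd (Finset.mem_univ i) h
  rw [h0, hmids, hlast, add_zero, add_comm]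

lemma bv_mul (U V : ↥(Heisenberg n)) : bv (U * V) = bv U + bv V := by
  funext i
  show (hmat U * hmat V) (hmid i) (Fin.last (n + 1)) = bv U i + bv V i
  rw [Matrix.mul_apply, sum_decomp]
  have h0 : hmat U (hmid i) 0 * hmat V 0 (Fin.last (n + 1)) = 0 := by
    rw [(hmat_heis U).2 _ _ (hmid_ne_zero i) (hmid_ne_zero i) IsHeisMat.zero_ne_last, zero_mul]
  have hlast : hmat U (hmid i) (Fin.last (n + 1)) * hmat V (Fin.last (n + 1)) (Fin.last (n + 1))
      = bv U i := by
    rw [(hmat_heis V).1, mul_one]; rfl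
  have hmids : (∑ k : Fin n, hmat U (hmid i) (hmid k) * hmat V (hmid k) (Fin.last (n + 1)))
      = bv V i := by
    rw [Finset.sum_eq_single i]
    · rw [(hmat_heis U).1, one_mul]; rfl
    · intro k _ hk
      rw [(hmat_heis U).2 _ _ (fun h => hk (hmid_inj h).symm) (hmid_ne_zero i)
        (hmid_ne_last k), zero_mul]
    · intro h; exact absurd (Finset.mem_univ i) h
  rw [h0, hmids, hlast, zero_add, add_comm]

lemma cv_mul (U V : ↥(Heisenberg n)) :
    cv (U * V) = cv U + cv V + ∑ i, av U i * bv V i := by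
  show (hmat U * hmat V) 0 (Fin.last (n + 1)) = _
  rw [Matrix.mul_apply, sum_decomp]
  have h0 : hmat U 0 0 * hmat V 0 (Fin.last (n + 1)) = cv V := by
    rw [(hmat_heis U).1, one_mul]; rfl
  have hlast : hmat U 0 (Fin.last (n + 1)) * hmat V (Fin.last (n + 1)) (Fin.last (n + 1))
      = cv U := by
    rw [(hmat_heis V).1, mul_one]; rfl
  rw [h0, hlast]
  have hmids : (∑ k : Fin n, hmat U 0 (hmid k) * hmat V (hmid k) (Fin.last (n + 1)))
      = ∑ i, av U i * bv V i := rfl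
  rw [hmids]
  ring

lemma av_one : av (1 : ↥(Heisenberg n)) = 0 := by
  funext i
  show (1 : Matrix (Fin (n + 2)) (Fin (n + 2)) ℤ) 0 (hmid i) = 0
  exact Matrix.one_apply_ne (Ne.symm (hmid_ne_zero i))

lemma bv_one : bv (1 : ↥(Heisenberg n)) = 0 := by
  funext i
  show (1 : Matrix (Fin (n + 2)) (Fin (n + 2)) ℤ) (hmid i) (Fin.last (n + 1)) = 0
  exact Matrix.one_apply_ne (hmid_ne_last i)

lemma cv_one : cv (1 : ↥(Heisenberg n)) = 0 :=
  Matrix.one_apply_ne IsHeisMat.zero_ne_last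

lemma av_inv (U : ↥(Heisenberg n)) : av U⁻¹ = -(av U) := by
  have h := av_mul U U⁻¹
  rw [mul_inv_cancel, av_one] at h
  exact (neg_eq_of_add_eq_zero_right h.symm).symm

lemma bv_inv (U : ↥(Heisenberg n)) : bv U⁻¹ = -(bv U) := by
  have h := bv_mul U U⁻¹
  rw [mul_inv_cancel, bv_one] at h
  exact (neg_eq_of_add_eq_zero_right h.symm).symm

lemma cv_inv (U : ↥(Heisenberg n)) : cv U⁻¹ = -(cv U) + ∑ i, av U i * bv U i := by
  have h := cv_mul U U⁻¹
  rw [mul_inv_cancel, cv_one] at h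
  have h2 : ∀ i, av U i * bv U⁻¹ i = -(av U i * bv U i) := by
    intro i
    rw [bv_inv]
    simp
  simp_rw [h2] at h
  rw [Finset.sum_neg_distrib] at h
  linarith

end HeisCoord

section Zeta

variable {n : ℕ}

/-- The matrix of the central generator. -/
def zetaMat (n : ℕ) : Matrix (Fin (n + 2)) (Fin (n + 2)) ℤ :=
  1 + Matrix.single 0 (Fin.last (n + 1)) 1

lemma zeta_mul_aux (a b : ℤ) :
    (1 + Matrix.single (0 : Fin (n + 2)) (Fin.last (n + 1)) a) *
      (1 + Matrix.single 0 (Fin.last (n + 1)) b) =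
      1 + Matrix.single 0 (Fin.last (n + 1)) (a + b) := by
  have hz : Matrix.single (0 : Fin (n + 2)) (Fin.last (n + 1)) a *
      Matrix.single 0 (Fin.last (n + 1)) b = 0 :=
    Matrix.single_mul_single_of_ne (c := a) 0 (Fin.last (n + 1)) 0 (Ne.symm IsHeisMat.zero_ne_last) b
  have expand : (1 + Matrix.single (0 : Fin (n + 2)) (Fin.last (n + 1)) a) *
      (1 + Matrix.single 0 (Fin.last (n + 1)) b) =
      1 + (Matrix.single 0 (Fin.last (n + 1)) a +
        Matrix.single 0 (Fin.last (n + 1)) b) +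
      Matrix.single (0 : Fin (n + 2)) (Fin.last (n + 1)) a *
        Matrix.single 0 (Fin.last (n + 1)) b := by
    noncomm_ring
  rw [expand, hz, add_zero, Matrix.single_add]

/-- The generator of the center, as a unit. -/
def zetaU (n : ℕ) : (Matrix (Fin (n + 2)) (Fin (n + 2)) ℤ)ˣ where
  val := zetaMat n
  inv := 1 + Matrix.single 0 (Fin.last (n + 1)) (-1)
  val_inv := by rw [zetaMat, zeta_mul_aux]; norm_num
  inv_val := by rw [zetaMat, zeta_mul_aux]; norm_num

lemma zetaU_mem : zetaU n ∈ Heisenberg n := by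
  constructor
  · intro i
    show zetaMat n i i = 1
    rw [zetaMat]
    rw [Matrix.add_apply, Matrix.one_apply_eq,
      Matrix.single_apply_of_ne _ _ _ _ _ (by
        rintro ⟨h1, h2⟩
        exact IsHeisMat.zero_ne_last (h1.trans h2.symm)), add_zero]
  · intro i j hij hi0 hjl
    show zetaMat n i j = 0
    rw [zetaMat]
    rw [Matrix.add_apply, Matrix.one_apply_ne hij,
      Matrix.single_apply_of_ne _ _ _ _ _ (by
        rintro ⟨h1, h2⟩
        exact hi0 h1.symm), add_zero]

/-- The generator of the center of the Heisenberg group. -/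
def zeta : ↥(Heisenberg n) := ⟨zetaU n, zetaU_mem⟩

lemma av_zeta : av (zeta : ↥(Heisenberg n)) = 0 := by
  funext i
  show zetaMat n 0 (hmid i) = 0
  rw [zetaMat]
  rw [Matrix.add_apply, Matrix.one_apply_ne (Ne.symm (hmid_ne_zero i)),
    Matrix.single_apply_of_ne _ _ _ _ _ (by
      rintro ⟨h1, h2⟩
      exact hmid_ne_last i h2.symm), add_zero]

lemma bv_zeta : bv (zeta : ↥(Heisenberg n)) = 0 := by
  funext i
  show zetaMat n (hmid i) (Fin.last (n + 1)) = 0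
  rw [zetaMat]
  rw [Matrix.add_apply, Matrix.one_apply_ne (hmid_ne_last i),
    Matrix.single_apply_of_ne _ _ _ _ _ (by
      rintro ⟨h1, h2⟩
      exact hmid_ne_zero i h1.symm), add_zero]

lemma cv_zeta : cv (zeta : ↥(Heisenberg n)) = 1 := by
  show zetaMat n 0 (Fin.last (n + 1)) = 1
  rw [zetaMat]
  rw [Matrix.add_apply, Matrix.one_apply_ne IsHeisMat.zero_ne_last,
    Matrix.single_apply_same, zero_add]

lemma zeta_comm (g : ↥(Heisenberg n)) : g * zeta = zeta * g := by
  apply coords_ext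
  · rw [av_mul, av_mul, av_zeta, add_zero, zero_add]
  · rw [bv_mul, bv_mul, bv_zeta, add_zero, zero_add]
  · rw [cv_mul, cv_mul, cv_zeta, av_zeta, bv_zeta]
    simp
    ring

lemma coords_zeta_zpow (k : ℤ) :
    av ((zeta : ↥(Heisenberg n)) ^ k) = 0 ∧ bv ((zeta : ↥(Heisenberg n)) ^ k) = 0 ∧
      cv ((zeta : ↥(Heisenberg n)) ^ k) = k := by
  induction k using Int.induction_on with
  | zero => rw [_root_.zpow_zero]; exact ⟨av_one, bv_one, cv_one⟩
  | succ i ih =>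
    obtain ⟨ha, hb, hc⟩ := ih
    rw [_root_.zpow_add_one]
    refine ⟨?_, ?_, ?_⟩
    · rw [av_mul, ha, av_zeta, add_zero]
    · rw [bv_mul, hb, bv_zeta, add_zero]
    · rw [cv_mul, hc, cv_zeta, ha]
      simp
  | pred i ih =>
    obtain ⟨ha, hb, hc⟩ := ih
    rw [_root_.zpow_sub_one]
    have hai : av ((zeta : ↥(Heisenberg n))⁻¹) = 0 := by rw [av_inv, av_zeta, neg_zero]
    have hbi : bv ((zeta : ↥(Heisenberg n))⁻¹) = 0 := by rw [bv_inv, bv_zeta, neg_zero]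
    have hci : cv ((zeta : ↥(Heisenberg n))⁻¹) = -1 := by
      rw [cv_inv, cv_zeta, av_zeta]
      simp
    refine ⟨?_, ?_, ?_⟩
    · rw [av_mul, ha, hai, add_zero]
    · rw [bv_mul, hb, hbi, add_zero]
    · rw [cv_mul, hc, hci, ha]
      simp
      ring

lemma eq_zeta_zpow {h : ↥(Heisenberg n)} (ha : av h = 0) (hb : bv h = 0) :
    h = zeta ^ (cv h) := by
  obtain ⟨ha', hb', hc'⟩ := coords_zeta_zpow (n := n) (cv h)
  exact coords_ext (by rw [ha, ha']) (by rw [hb, hb']) (by rw [hc'])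

/-- The symplectic pairing giving the central part of a commutator. -/
def omegaw (g h : ↥(Heisenberg n)) : ℤ :=
  (∑ i, av g i * bv h i) - ∑ i, av h i * bv g i

lemma conj_eq (g h : ↥(Heisenberg n)) : g * h * g⁻¹ = h * zeta ^ (omegaw g h) := by
  obtain ⟨haz, hbz, hcz⟩ := coords_zeta_zpow (n := n) (omegaw g h)
  have key : g * h = (h * zeta ^ (omegaw g h)) * g := by
    apply coords_ext
    · rw [av_mul, av_mul, av_mul, haz, add_zero, add_comm]
    · rw [bv_mul, bv_mul, bv_mul, hbz, add_zero, add_comm]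
    · rw [cv_mul, cv_mul, cv_mul, hcz, hbz, av_mul, haz]
      simp only [add_zero, Pi.add_apply, Pi.zero_apply, mul_zero, Finset.sum_const_zero]
      rw [omegaw]
      ring
  rw [key, mul_inv_cancel_right]

end Zeta

section Assemble

variable {n : ℕ}

/-- The pairing against a fixed group element, as an additive homomorphism. -/
def wHom (ε : ℤ) (g : ↥(Heisenberg n)) : ((Fin n → ℤ) × (Fin n → ℤ)) →+ ℤ where
  toFun v := ε * ((∑ i, av g i * v.2 i) - ∑ i, v.1 i * bv g i)
  map_zero' := by simp
  map_add' x y := by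
    simp only [Prod.fst_add, Prod.snd_add, Pi.add_apply, mul_add, add_mul,
      Finset.sum_add_distrib]
    ring

theorem heisenberg_no_condensed_cone' (n : ℕ)
    (P : Set ↥(Heisenberg n)) (hP : IsPositiveCone P) :
    ∃ F : Finset ↥(Heisenberg n), ↑F ⊆ P ∧
      ∀ g : ↥(Heisenberg n), ↑F ⊆ conjCone g P → conjCone g P = P := by
  classical
  set V := ((Fin n → ℤ) × (Fin n → ℤ)) with hV
  haveI hNoeth : @IsNoetherian ℤ V _ _ (AddCommGroup.toIntModule V) := by
    haveI : Subsingleton (Module ℤ V) :=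
      @Unique.instSubsingleton _ AddCommGroup.uniqueIntModule
    have h : (AddCommGroup.toIntModule V) = (inferInstance : Module ℤ V) :=
      Subsingleton.elim _ _
    rw [h]
    infer_instance
  set A : ↥(Heisenberg n) → V := fun g => (av g, bv g) with hAdef
  have hA : ∀ g h : ↥(Heisenberg n), A (g * h) = A g + A h := by
    intro g h
    simp only [hAdef, av_mul, bv_mul]
    rfl
  have hA0 : ∀ h : ↥(Heisenberg n), A h = 0 → av h = 0 ∧ bv h = 0 := by
    intro h h0
    exact ⟨congrArg Prod.fst h0, congrArg Prod.snd h0⟩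
  have hzeta_ne : (zeta : ↥(Heisenberg n)) ≠ 1 := by
    intro h
    have := congrArg cv h
    rw [cv_zeta, cv_one] at this
    exact one_ne_zero this
  rcases hP.2.1 zeta with hz | hz | hz
  · -- zeta ∈ P
    refine abstract_no_condensed P hP A hA zeta (fun g => (zeta_comm g).symm ▸ zeta_comm g) hz
      ?_ (wHom 1) ?_ ?_
    · show ((av (zeta : ↥(Heisenberg n)), bv (zeta : ↥(Heisenberg n))) : V) = 0
      rw [av_zeta, bv_zeta]
      rfl
    · intro g h
      have : wHom 1 g (A h) = omegaw g h := by
        simp [wHom, omegaw, hAdef]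
      rw [this]
      exact conj_eq g h
    · intro h h0
      obtain ⟨ha, hb⟩ := hA0 h h0
      exact ⟨cv h, eq_zeta_zpow ha hb⟩
  · -- zeta⁻¹ ∈ P
    refine abstract_no_condensed P hP A hA zeta⁻¹ ?_ hz ?_ (wHom (-1)) ?_ ?_
    · intro g
      have hc : Commute g zeta := zeta_comm g
      exact hc.inv_right
    · show ((av ((zeta : ↥(Heisenberg n))⁻¹), bv ((zeta : ↥(Heisenberg n))⁻¹)) : V) = 0
      simp only [av_inv, bv_inv, av_zeta, bv_zeta, neg_zero]
      rfl
    · intro g h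
      have h1 : wHom (-1) g (A h) = -(omegaw g h) := by
        simp [wHom, omegaw, hAdef]
      rw [h1, _root_.inv_zpow, ← _root_.zpow_neg, neg_neg]
      exact conj_eq g h
    · intro h h0
      obtain ⟨ha, hb⟩ := hA0 h h0
      refine ⟨-(cv h), ?_⟩
      rw [_root_.inv_zpow, ← _root_.zpow_neg, neg_neg]
      exact eq_zeta_zpow ha hb
  · exact absurd hz hzeta_ne

end Assemble

/-- No positive cone of the generalized discrete Heisenberg group `H_{2n+1}` (`n ≥ 1`)
is condensed for the conjugation action. -/
theorem heisenberg_no_condensed_cone (n : ℕ) (hn : 1 ≤ n)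
    (P : Set ↥(Heisenberg n)) (hP : IsPositiveCone P) :
    ∃ F : Finset ↥(Heisenberg n), ↑F ⊆ P ∧
      ∀ g : ↥(Heisenberg n), ↑F ⊆ conjCone g P → conjCone g P = P := by
  exact heisenberg_no_condensed_cone' n P hP
end

section
/- There exists a finitely generated nilpotent group G together with a positive cone P of G such that P is condensed for the conjugation action: for every finite subset F ⊆ P there exists g ∈ G with g⁻¹Pg ≠ P and F ⊆ g⁻¹Pg. (Equivalently, there exists a nilpotent left-orderable group G for which E_lo(G) is not smooth.) -/
/-- A positive cone is condensed (for the conjugation action) if every finite subset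
of it is contained in some conjugate of `P` different from `P`. -/
def IsCondensedCone {G : Type*} [Group G] (P : Set G) : Prop :=
  ∀ F : Finset G, ↑F ⊆ P → ∃ g : G, conjCone g P ≠ P ∧ ↑F ⊆ conjCone g P

/-!  Auxiliary construction: the group `G5 = ℤ³ ⋊ ℤ²`, where `(b,c) ∈ ℤ²` acts on
`(x,y,z) ∈ ℤ³` by the commuting shears `(x,y,z) ↦ (x + c z, y + b z, z)`.
This is a finitely generated nilpotent group of class 2. -/

@[ext]
structure G5 where
  x : ℤ
  y : ℤ
  z : ℤ
  b : ℤ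
  c : ℤ

namespace G5

instance : Mul G5 :=
  ⟨fun g h => ⟨g.x + h.x + g.c * h.z, g.y + h.y + g.b * h.z, g.z + h.z, g.b + h.b, g.c + h.c⟩⟩

instance : One G5 := ⟨⟨0, 0, 0, 0, 0⟩⟩

instance : Inv G5 :=
  ⟨fun g => ⟨-g.x + g.c * g.z, -g.y + g.b * g.z, -g.z, -g.b, -g.c⟩⟩

@[simp] lemma mul_x (g h : G5) : (g * h).x = g.x + h.x + g.c * h.z := rfl
@[simp] lemma mul_y (g h : G5) : (g * h).y = g.y + h.y + g.b * h.z := rfl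
@[simp] lemma mul_z (g h : G5) : (g * h).z = g.z + h.z := rfl
@[simp] lemma mul_b (g h : G5) : (g * h).b = g.b + h.b := rfl
@[simp] lemma mul_c (g h : G5) : (g * h).c = g.c + h.c := rfl
@[simp] lemma one_x : (1 : G5).x = 0 := rfl
@[simp] lemma one_y : (1 : G5).y = 0 := rfl
@[simp] lemma one_z : (1 : G5).z = 0 := rfl
@[simp] lemma one_b : (1 : G5).b = 0 := rfl
@[simp] lemma one_c : (1 : G5).c = 0 := rfl
@[simp] lemma inv_x (g : G5) : (g⁻¹).x = -g.x + g.c * g.z := rfl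
@[simp] lemma inv_y (g : G5) : (g⁻¹).y = -g.y + g.b * g.z := rfl
@[simp] lemma inv_z (g : G5) : (g⁻¹).z = -g.z := rfl
@[simp] lemma inv_b (g : G5) : (g⁻¹).b = -g.b := rfl
@[simp] lemma inv_c (g : G5) : (g⁻¹).c = -g.c := rfl

instance : Group G5 where
  mul_assoc a b c := by ext <;> simp <;> ring
  one_mul a := by ext <;> simp
  mul_one a := by ext <;> simp
  inv_mul_cancel a := by ext <;> simp <;> ring

/-- The injective real form on the tie part `ℤ³`. -/
noncomputable def fv (g : G5) : ℝ := (g.x : ℝ) + Real.sqrt 2 * g.y + Real.sqrt 3 * g.z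

/-- Lexicographic positivity on the `(b,c)` part. -/
def lexpos (b c : ℤ) : Prop := 0 < b ∨ (b = 0 ∧ 0 < c)

/-- Positivity for the cone. -/
def pos (g : G5) : Prop := lexpos g.b g.c ∨ (g.b = 0 ∧ g.c = 0 ∧ 0 < fv g)

/-- The positive cone. -/
def P : Set G5 := {g | pos g}

lemma sqrt2_sq : Real.sqrt 2 ^ 2 = 2 := Real.sq_sqrt (by norm_num)
lemma sqrt3_sq : Real.sqrt 3 ^ 2 = 3 := Real.sq_sqrt (by norm_num)

lemma irrational_sqrt6 : Irrational (Real.sqrt 2 * Real.sqrt 3) := by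
  have h6 : Real.sqrt 2 * Real.sqrt 3 = Real.sqrt 6 := by
    rw [← Real.sqrt_mul (by norm_num : (0:ℝ) ≤ 2)]; norm_num
  rw [h6]
  have hsq : Real.sqrt 6 ^ 2 = ((6 : ℤ) : ℝ) := by
    rw [Real.sq_sqrt (by norm_num : (0:ℝ) ≤ 6)]; norm_num
  refine irrational_nrt_of_notint_nrt 2 6 hsq ?_ (by norm_num)
  rintro ⟨y, hy⟩
  have h0 : (0:ℝ) ≤ (y : ℝ) := hy ▸ Real.sqrt_nonneg 6
  have hy2 : ((y : ℝ)) ^ 2 = ((6 : ℤ) : ℝ) := by rw [← hy, hsq]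
  have hy2' : y ^ 2 = 6 := by exact_mod_cast hy2
  have hy0 : 0 ≤ y := by exact_mod_cast h0
  rcases le_or_gt y 2 with h | h
  · nlinarith
  · nlinarith

/-- `1, √2, √3` are linearly independent over `ℚ` (integer version). -/
lemma indep {x y z : ℤ} (h : (x : ℝ) + Real.sqrt 2 * y + Real.sqrt 3 * z = 0) :
    x = 0 ∧ y = 0 ∧ z = 0 := by
  set s2 := Real.sqrt 2 with hs2
  set s3 := Real.sqrt 3 with hs3
  have h2 : s2 ^ 2 = 2 := sqrt2_sq
  have h3 : s3 ^ 2 = 3 := sqrt3_sq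
  have i2 : Irrational s2 := irrational_sqrt_two
  have i3 : Irrational s3 := by
    have := (Nat.prime_three).irrational_sqrt
    simpa [hs3] using this
  have i6 : Irrational (s2 * s3) := irrational_sqrt6
  -- first, z = 0
  have hz : z = 0 := by
    by_contra hz
    have key : s2 * ((2 * x * y : ℤ) : ℝ) = ((3 * z ^ 2 - x ^ 2 - 2 * y ^ 2 : ℤ) : ℝ) := by
      push_cast
      linear_combination ((x : ℝ) + s2 * y - s3 * z) * h - (y : ℝ)^2 * h2 + (z : ℝ)^2 * h3
    have hxy : x * y = 0 := by
      by_contra hxy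
      have h2xy : (2 * x * y : ℤ) ≠ 0 := by
        have h2 : (2:ℤ) * (x * y) ≠ 0 := mul_ne_zero two_ne_zero hxy
        intro hc; apply h2; linear_combination hc
      exact (i2.mul_intCast h2xy).ne_int _ key
    rcases mul_eq_zero.mp hxy with hx | hy
    · -- x = 0 : then s2*s3 * z is an integer
      have hkey : (s2 * s3) * ((z : ℤ) : ℝ) = ((-2 * y : ℤ) : ℝ) := by
        push_cast
        rw [hx] at h
        push_cast at h
        linear_combination s2 * h - (y : ℝ) * h2
      exact (i6.mul_intCast hz).ne_int _ hkey
    · -- y = 0 : then s3 * z is an integer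
      have hkey : s3 * ((z : ℤ) : ℝ) = ((-x : ℤ) : ℝ) := by
        push_cast
        rw [hy] at h
        push_cast at h
        linarith
      exact (i3.mul_intCast hz).ne_int _ hkey
  subst hz
  have hy : y = 0 := by
    by_contra hy
    have hkey : s2 * ((y : ℤ) : ℝ) = ((-x : ℤ) : ℝ) := by
      push_cast
      push_cast at h
      linarith
    exact (i2.mul_intCast hy).ne_int _ hkey
  subst hy
  push_cast at h
  ring_nf at h
  have : x = 0 := by exact_mod_cast h
  exact ⟨this, rfl, rfl⟩

lemma fv_ne_zero {g : G5} (hb : g.b = 0) (hc : g.c = 0) (hg : g ≠ 1) : fv g ≠ 0 := by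
  intro h
  obtain ⟨hx, hy, hz⟩ := indep h
  apply hg
  ext <;> simp [hx, hy, hz, hb, hc]

lemma fv_mul {g h : G5} (hb : g.b = 0) (hc : g.c = 0) : fv (g * h) = fv g + fv h := by
  simp only [fv, mul_x, mul_y, mul_z, hb, hc]
  push_cast
  ring

lemma fv_inv {g : G5} (hb : g.b = 0) (hc : g.c = 0) : fv g⁻¹ = -fv g := by
  simp only [fv, inv_x, inv_y, inv_z, hb, hc]
  push_cast
  ring

/-- The cone `P` is a positive cone. -/
theorem P_isPositiveCone : IsPositiveCone P := by
  refine ⟨?_, ?_, ?_, ?_⟩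
  · -- closed under multiplication
    rintro a ha b hb
    rcases ha with hla | ⟨hab, hac, haf⟩
    · rcases hb with hlb | ⟨hbb, hbc, hbf⟩
      · left; simp only [lexpos] at *; simp only [mul_b, mul_c]; omega
      · left; simp only [lexpos] at *; simp only [mul_b, mul_c]; omega
    · rcases hb with hlb | ⟨hbb, hbc, hbf⟩
      · left; simp only [lexpos] at *; simp only [mul_b, mul_c]; omega
      · right
        refine ⟨by simp [hab, hbb], by simp [hac, hbc], ?_⟩
        rw [fv_mul hab hac]
        linarith
  · -- trichotomy
    intro g
    by_cases hbc : g.b = 0 ∧ g.c = 0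
    · obtain ⟨hb, hc⟩ := hbc
      by_cases hg : g = 1
      · right; right; exact hg
      · have hne := fv_ne_zero hb hc hg
        rcases lt_or_gt_of_ne hne with h | h
        · right; left
          right
          exact ⟨by simp [hb], by simp [hc], by rw [fv_inv hb hc]; linarith⟩
        · left; right; exact ⟨hb, hc, h⟩
    · have : lexpos g.b g.c ∨ lexpos (g⁻¹).b (g⁻¹).c := by
        simp only [lexpos, inv_b, inv_c]; omega
      rcases this with h | h
      · left; left; exact h
      · right; left; left; exact h
  · -- asymmetry
    rintro g (hg | ⟨hb, hc, hf⟩) (hg' | ⟨hb', hc', hf'⟩)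
    · simp only [lexpos, inv_b, inv_c] at hg hg'; omega
    · simp only [lexpos] at hg; simp only [inv_b, inv_c] at hb' hc'; omega
    · simp only [lexpos, inv_b, inv_c] at hg'; omega
    · rw [fv_inv hb hc] at hf'; linarith
  · -- 1 ∉ P
    rintro (h | ⟨-, -, h⟩)
    · simp only [lexpos, one_b, one_c] at h; omega
    · simp only [fv, one_x, one_y, one_z] at h; norm_num at h

lemma conj_eq (g q : G5) :
    g * q * g⁻¹ = ⟨q.x + g.c * q.z - q.c * g.z, q.y + g.b * q.z - q.b * g.z, q.z, q.b, q.c⟩ := by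
  ext <;> simp <;> ring

lemma mem_conjCone {g q : G5} : q ∈ conjCone g P ↔ g * q * g⁻¹ ∈ P := by
  constructor
  · rintro ⟨p, hp, rfl⟩
    have : g * (g⁻¹ * p * g) * g⁻¹ = p := by group
    rwa [this]
  · intro h
    exact ⟨g * q * g⁻¹, h, by group⟩

/-- Density of `ℤ + √2 ℤ` in `ℝ`. -/
lemma dense_S : Dense ((AddSubgroup.closure {(1 : ℝ), Real.sqrt 2} : AddSubgroup ℝ) : Set ℝ) := by
  rcases AddSubgroup.dense_or_cyclic (AddSubgroup.closure {(1 : ℝ), Real.sqrt 2}) with h | ⟨a, ha⟩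
  · exact h
  · exfalso
    have h1 : (1 : ℝ) ∈ AddSubgroup.closure {(1 : ℝ), Real.sqrt 2} :=
      AddSubgroup.subset_closure (by simp)
    have h2 : Real.sqrt 2 ∈ AddSubgroup.closure {(1 : ℝ), Real.sqrt 2} :=
      AddSubgroup.subset_closure (by simp)
    rw [ha, AddSubgroup.mem_closure_singleton] at h1 h2
    obtain ⟨n, hn⟩ := h1
    obtain ⟨m, hm⟩ := h2
    have hkey : Real.sqrt 2 * ((n : ℤ) : ℝ) = ((m : ℤ) : ℝ) := by
      calc Real.sqrt 2 * ((n : ℤ) : ℝ) = (m • a) * n := by rw [hm]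
        _ = (m : ℝ) * (n • a) := by push_cast [zsmul_eq_mul]; ring
        _ = ((m : ℤ) : ℝ) := by rw [hn]; ring
    have hn0 : n ≠ 0 := by
      intro h0
      rw [h0] at hn
      simp at hn
    exact (irrational_sqrt_two.mul_intCast hn0).ne_int _ hkey

/-- In any nonempty interval we can find `C + √2 B` with `B C : ℤ`. -/
lemma exists_eps {a b : ℝ} (h : a < b) :
    ∃ B C : ℤ, a < (C : ℝ) + Real.sqrt 2 * B ∧ (C : ℝ) + Real.sqrt 2 * B < b := by
  obtain ⟨s, hs, hs1, hs2⟩ := dense_S.exists_between h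
  rw [SetLike.mem_coe, AddSubgroup.mem_closure_pair] at hs
  obtain ⟨m, n, hmn⟩ := hs
  refine ⟨n, m, ?_, ?_⟩
  · rw [show ((m : ℝ) + Real.sqrt 2 * n) = s by rw [← hmn]; push_cast [zsmul_eq_mul]; ring]
    exact hs1
  · rw [show ((m : ℝ) + Real.sqrt 2 * n) = s by rw [← hmn]; push_cast [zsmul_eq_mul]; ring]
    exact hs2

/-- The cone `P` is condensed. -/
theorem P_isCondensedCone : IsCondensedCone P := by
  classical
  intro F hF
  set M0 : ℤ := ∑ q ∈ F, |q.z| with hM0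
  have hM0nn : 0 ≤ M0 := Finset.sum_nonneg fun i _ => abs_nonneg _
  have hzle : ∀ q ∈ F, |q.z| ≤ M0 := fun q hq =>
    Finset.single_le_sum (f := fun q : G5 => |q.z|) (fun i _ => abs_nonneg _) hq
  obtain ⟨δ, hδpos, hδle⟩ :
      ∃ δ : ℝ, 0 < δ ∧ ∀ q ∈ F, q.b = 0 → q.c = 0 → δ ≤ fv q := by
    by_cases hT : (F.filter fun q => q.b = 0 ∧ q.c = 0).Nonempty
    · refine ⟨(F.filter fun q => q.b = 0 ∧ q.c = 0).inf' hT fv, ?_, ?_⟩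
      · rw [Finset.lt_inf'_iff]
        intro q hq
        rw [Finset.mem_filter] at hq
        obtain ⟨hqF, hqb, hqc⟩ := hq
        rcases hF hqF with hl | ⟨-, -, hf⟩
        · simp only [lexpos, hqb, hqc] at hl; omega
        · exact hf
      · intro q hq hb hc
        exact Finset.inf'_le fv (Finset.mem_filter.mpr ⟨hq, hb, hc⟩)
    · exact ⟨1, one_pos, fun q hq hb hc => absurd ⟨q, Finset.mem_filter.mpr ⟨hq, hb, hc⟩⟩ hT⟩
  have hMpos : (0 : ℝ) < (M0 : ℝ) + 1 := by positivity
  obtain ⟨B, C, hε1, hε2⟩ := exists_eps (show (0:ℝ) < δ / ((M0 : ℝ) + 1) by positivity)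
  set ε : ℝ := (C : ℝ) + Real.sqrt 2 * B with hε
  have hεpos : 0 < ε := hε1
  have hεδ : ε * ((M0 : ℝ) + 1) < δ := by
    calc ε * ((M0 : ℝ) + 1) < (δ / ((M0 : ℝ) + 1)) * ((M0 : ℝ) + 1) :=
          mul_lt_mul_of_pos_right hε2 hMpos
      _ = δ := div_mul_cancel₀ _ hMpos.ne'
  set g : G5 := ⟨0, 0, 0, B, C⟩ with hg
  refine ⟨g, ?_, ?_⟩
  · -- conjCone g P ≠ P
    obtain ⟨B', C', hu1, hu2⟩ := exists_eps (show -Real.sqrt 3 - ε < -Real.sqrt 3 by linarith)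
    set u : G5 := ⟨C', B', 1, 0, 0⟩ with hu
    have hfu : fv u = (C' : ℝ) + Real.sqrt 2 * B' + Real.sqrt 3 := by
      simp [fv, hu]
    have hu_not : u ∉ P := by
      rintro (hl | ⟨-, -, hf⟩)
      · simp only [lexpos, hu] at hl; omega
      · rw [hfu] at hf; linarith
    have hu_in : u ∈ conjCone g P := by
      rw [mem_conjCone, conj_eq]
      right
      refine ⟨rfl, rfl, ?_⟩
      have : fv (⟨u.x + g.c * u.z - u.c * g.z, u.y + g.b * u.z - u.b * g.z, u.z, u.b, u.c⟩ : G5)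
          = fv u + ε := by
        simp only [fv, hu, hg, hε]
        push_cast
        ring
      rw [this, hfu]
      linarith
    intro heq
    rw [heq] at hu_in
    exact hu_not hu_in
  · -- F ⊆ conjCone g P
    intro q hq
    have hqF : q ∈ F := hq
    rw [mem_conjCone, conj_eq]
    rcases hF hqF with hl | ⟨hb, hc, hf⟩
    · left; exact hl
    · right
      refine ⟨hb, hc, ?_⟩
      have hfc : fv (⟨q.x + g.c * q.z - q.c * g.z, q.y + g.b * q.z - q.b * g.z, q.z, q.b, q.c⟩ : G5)
          = fv q + ε * q.z := by
        simp only [fv, hg, hε, hb, hc]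
        push_cast
        ring
      rw [hfc]
      have h1 : (|q.z| : ℝ) ≤ (M0 : ℝ) := by exact_mod_cast hzle q hqF
      have h2 : ε * (|q.z| : ℝ) ≤ ε * ((M0 : ℝ) + 1) := by
        apply mul_le_mul_of_nonneg_left _ hεpos.le
        linarith
      have h3 : -(ε * (|q.z| : ℝ)) ≤ ε * (q.z : ℝ) := by
        rw [← mul_neg]
        apply mul_le_mul_of_nonneg_left _ hεpos.le
        rw [show -(|q.z| : ℝ) = ((-|q.z| : ℤ) : ℝ) by push_cast; ring]
        exact_mod_cast neg_abs_le q.z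
      have h4 : δ ≤ fv q := hδle q hqF hb hc
      linarith

/-- Generators of `G5`. -/
lemma gen_pow (g : G5) (h1 : g.c * g.z = 0) (h2 : g.b * g.z = 0) (n : ℤ) :
    g ^ n = ⟨n * g.x, n * g.y, n * g.z, n * g.b, n * g.c⟩ := by
  induction n using Int.induction_on with
  | zero => simp only [zpow_zero]; ext <;> simp
  | succ i ih =>
    rw [zpow_add_one, ih]
    ext <;> simp
    · linear_combination (i : ℤ) * h1
    · linear_combination (i : ℤ) * h2
    · ring
    · ring
    · ring
  | pred i ih =>
    rw [zpow_sub_one, ih]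
    ext <;> simp
    · linear_combination ((i : ℤ) + 1) * h1
    · linear_combination ((i : ℤ) + 1) * h2
    · ring
    · ring
    · ring

theorem G5_fg : Group.FG G5 := by
  rw [Group.fg_iff]
  refine ⟨{⟨1,0,0,0,0⟩, ⟨0,1,0,0,0⟩, ⟨0,0,1,0,0⟩, ⟨0,0,0,1,0⟩, ⟨0,0,0,0,1⟩}, ?_, ?_⟩
  · rw [Subgroup.eq_top_iff']
    intro g
    have e1 : (⟨1,0,0,0,0⟩ : G5) ^ g.x = ⟨g.x, 0, 0, 0, 0⟩ := by
      rw [gen_pow _ (by simp) (by simp)]; ext <;> simp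
    have e2 : (⟨0,1,0,0,0⟩ : G5) ^ g.y = ⟨0, g.y, 0, 0, 0⟩ := by
      rw [gen_pow _ (by simp) (by simp)]; ext <;> simp
    have e3 : (⟨0,0,1,0,0⟩ : G5) ^ g.z = ⟨0, 0, g.z, 0, 0⟩ := by
      rw [gen_pow _ (by simp) (by simp)]; ext <;> simp
    have e4 : (⟨0,0,0,1,0⟩ : G5) ^ g.b = ⟨0, 0, 0, g.b, 0⟩ := by
      rw [gen_pow _ (by simp) (by simp)]; ext <;> simp
    have e5 : (⟨0,0,0,0,1⟩ : G5) ^ g.c = ⟨0, 0, 0, 0, g.c⟩ := by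
      rw [gen_pow _ (by simp) (by simp)]; ext <;> simp
    have hdecomp : g = ⟨g.x,0,0,0,0⟩ * ⟨0,g.y,0,0,0⟩ * ⟨0,0,g.z,0,0⟩ * ⟨0,0,0,g.b,0⟩
        * ⟨0,0,0,0,g.c⟩ := by
      ext <;> simp
    rw [hdecomp, ← e1, ← e2, ← e3, ← e4, ← e5]
    have m1 : (⟨1,0,0,0,0⟩ : G5) ∈ ({⟨1,0,0,0,0⟩, ⟨0,1,0,0,0⟩, ⟨0,0,1,0,0⟩, ⟨0,0,0,1,0⟩,
        ⟨0,0,0,0,1⟩} : Set G5) := by simp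
    have m2 : (⟨0,1,0,0,0⟩ : G5) ∈ ({⟨1,0,0,0,0⟩, ⟨0,1,0,0,0⟩, ⟨0,0,1,0,0⟩, ⟨0,0,0,1,0⟩,
        ⟨0,0,0,0,1⟩} : Set G5) := by simp
    have m3 : (⟨0,0,1,0,0⟩ : G5) ∈ ({⟨1,0,0,0,0⟩, ⟨0,1,0,0,0⟩, ⟨0,0,1,0,0⟩, ⟨0,0,0,1,0⟩,
        ⟨0,0,0,0,1⟩} : Set G5) := by simp
    have m4 : (⟨0,0,0,1,0⟩ : G5) ∈ ({⟨1,0,0,0,0⟩, ⟨0,1,0,0,0⟩, ⟨0,0,1,0,0⟩, ⟨0,0,0,1,0⟩,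
        ⟨0,0,0,0,1⟩} : Set G5) := by simp
    have m5 : (⟨0,0,0,0,1⟩ : G5) ∈ ({⟨1,0,0,0,0⟩, ⟨0,1,0,0,0⟩, ⟨0,0,1,0,0⟩, ⟨0,0,0,1,0⟩,
        ⟨0,0,0,0,1⟩} : Set G5) := by simp
    exact mul_mem (mul_mem (mul_mem (mul_mem
      (zpow_mem (Subgroup.subset_closure m1) _)
      (zpow_mem (Subgroup.subset_closure m2) _))
      (zpow_mem (Subgroup.subset_closure m3) _))
      (zpow_mem (Subgroup.subset_closure m4) _))
      (zpow_mem (Subgroup.subset_closure m5) _)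
  · apply Set.Finite.insert
    apply Set.Finite.insert
    apply Set.Finite.insert
    apply Set.Finite.insert
    exact Set.finite_singleton _

/-- The projection onto `(z, b, c)`. -/
def proj : G5 →* Multiplicative (ℤ × ℤ × ℤ) where
  toFun g := Multiplicative.ofAdd (g.z, g.b, g.c)
  map_one' := rfl
  map_mul' g h := rfl

theorem G5_nilpotent : Group.IsNilpotent G5 := by
  apply isNilpotent_of_ker_le_center proj _
  intro g hg
  have h : (g.z, g.b, g.c) = ((0 : ℤ), (0 : ℤ), (0 : ℤ)) := by
    have := hg
    rw [MonoidHom.mem_ker] at this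
    exact this
  have hz : g.z = 0 := by rw [Prod.ext_iff] at h; exact h.1
  have hb : g.b = 0 := by rw [Prod.ext_iff, Prod.ext_iff] at h; exact h.2.1
  have hc : g.c = 0 := by rw [Prod.ext_iff, Prod.ext_iff] at h; exact h.2.2
  rw [Subgroup.mem_center_iff]
  intro h'
  ext <;> simp [hz, hb, hc] <;> ring

end G5

/-- There is a finitely generated nilpotent group possessing a condensed positive cone. -/
theorem exists_nilpotent_group_with_condensed_cone :
    ∃ (G : Type) (_ : Group G), Group.FG G ∧ Group.IsNilpotent G ∧
      ∃ P : Set G, IsPositiveCone P ∧ IsCondensedCone P := by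
  exact ⟨G5, inferInstance, G5.G5_fg, G5.G5_nilpotent, G5.P, G5.P_isPositiveCone,
    G5.P_isCondensedCone⟩
end

section
/- Let G be a finitely generated nilpotent group. Then every positive cone P of G is Conradian: for all f, g ∈ P there exists a natural number n such that g⁻¹ f gⁿ ∈ P. -/
namespace ConradAux

variable {G : Type*} [Group G]

/-- Evaluation of a word in two letters: `true ↦ a`, `false ↦ b`. -/
def eval (a b : G) : List Bool → G
  | [] => 1
  | true :: w => a * eval a b w
  | false :: w => b * eval a b w

lemma eval_append (a b : G) (u v : List Bool) :
    eval a b (u ++ v) = eval a b u * eval a b v := by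
  induction u with
  | nil => simp [eval]
  | cons c w ih => cases c <;> simp [eval, ih, mul_assoc]

/-- The pair of Mal'cev words. -/
def XY : ℕ → List Bool × List Bool
  | 0 => ([true], [false])
  | k + 1 => ((XY k).1 ++ (XY k).2, (XY k).2 ++ (XY k).1)

lemma heads : ∀ k, ∃ u v, (XY k).1 = true :: u ∧ (XY k).2 = false :: v := by
  intro k
  induction k with
  | zero => exact ⟨[], [], rfl, rfl⟩
  | succ k ih =>
      obtain ⟨u, v, hu, hv⟩ := ih
      exact ⟨u ++ (XY k).2, v ++ (XY k).1, by simp [XY, hu], by simp [XY, hv]⟩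

open scoped commutatorElement in
/-- Mal'cev's lemma: the difference of the two Mal'cev words lies deep in the
lower central series. -/
lemma malcev (a b : G) (k : ℕ) :
    eval a b (XY k).1 * (eval a b (XY k).2)⁻¹ ∈ (⊤ : Subgroup G).lowerCentralSeries k := by
  induction k with
  | zero => exact Subgroup.mem_top _
  | succ k ih =>
      have key : eval a b (XY (k + 1)).1 * (eval a b (XY (k + 1)).2)⁻¹
          = ⁅eval a b (XY k).1 * (eval a b (XY k).2)⁻¹, eval a b (XY k).2⁆ := by
        simp only [XY, eval_append, commutatorElement_def]
        group
      rw [key, Subgroup.lowerCentralSeries_succ]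
      exact Subgroup.commutator_mem_commutator ih (Subgroup.mem_top _)

end ConradAux

/-- Every positive cone of a finitely generated nilpotent group is Conradian. -/
theorem positiveCone_conradian_of_nilpotent
    {G : Type*} [Group G] [Group.FG G] [Group.IsNilpotent G]
    (P : Set G) (hP : IsPositiveCone P) :
    ∀ f ∈ P, ∀ g ∈ P, ∃ n : ℕ, g⁻¹ * f * g ^ n ∈ P := by
  obtain ⟨hmul, htri, hninv, hone⟩ := hP
  intro f hf g hg
  by_contra hcon
  push_neg at hcon
  -- helper combinators for "in P or equal to 1"
  have mulQ : ∀ x y : G, x ∈ P → (y ∈ P ∨ y = 1) → x * y ∈ P := by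
    rintro x y hx (hy | rfl)
    · exact hmul x hx y hy
    · simpa using hx
  have Qmul : ∀ x y : G, (x ∈ P ∨ x = 1) → y ∈ P → x * y ∈ P := by
    rintro x y (hx | rfl) hy
    · exact hmul x hx y hy
    · simpa using hy
  -- positive powers of g are in P
  have hpow : ∀ m : ℕ, g ^ (m + 1) ∈ P := by
    intro m
    induction m with
    | zero => simpa using hg
    | succ m ih => rw [pow_succ]; exact hmul _ ih _ hg
  have hpowQ : ∀ m : ℕ, g ^ m ∈ P ∨ g ^ m = 1 := by
    rintro (_ | m)
    · right; simp
    · left; exact hpow m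
  -- strictness: f * g ^ n ≺ g for every n
  have hstrict : ∀ n : ℕ, (g⁻¹ * f * g ^ n)⁻¹ ∈ P := by
    intro n
    rcases htri (g⁻¹ * f * g ^ n) with h | h | h
    · exact absurd h (hcon n)
    · exact h
    · exfalso
      rcases n with _ | _ | m
      · -- f = g, but then g⁻¹ * f * g ^ 1 = g ∈ P
        have hfg : f = g := by
          have := h; rw [pow_zero, mul_one] at this
          calc f = g * (g⁻¹ * f) := by group
            _ = g := by rw [this, mul_one]
        exact hcon 1 (by rw [hfg]; simpa using hg)
      · -- f = 1
        have : f = 1 := by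
          have := h; rw [pow_one] at this
          calc f = g * (g⁻¹ * f * g) * g⁻¹ := by group
            _ = 1 := by rw [this]; group
        exact hone (this ▸ hf)
      · -- f⁻¹ = g ^ (m + 1) ∈ P contradicts f ∈ P
        have : f⁻¹ = g ^ (m + 1) := by
          have h2 : f * g ^ (m + 2) = g := by
            calc f * g ^ (m + 2) = g * (g⁻¹ * f * g ^ (m + 2)) := by group
              _ = g := by rw [h, mul_one]
          have h3 : f * g ^ (m + 1) * g = g := by
            rw [mul_assoc, ← pow_succ, h2]
          have h4 : f * g ^ (m + 1) = 1 := by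
            have h5 : f * g ^ (m + 1) * g = 1 * g := by rw [h3, one_mul]
            exact mul_right_cancel h5
          exact inv_eq_of_mul_eq_one_right h4
        exact hninv f hf (this ▸ hpow m)
  -- Claim A: every word w satisfies  ConradAux.eval w ⪯ g ^ |w|
  have clA : ∀ w : List Bool,
      (ConradAux.eval g (f * g) w)⁻¹ * g ^ w.length ∈ P ∨
      (ConradAux.eval g (f * g) w)⁻¹ * g ^ w.length = 1 := by
    intro w
    induction w with
    | nil => right; simp [ConradAux.eval]
    | cons c w ih =>
        rcases c with _ | _
        · -- c = false : strict
          left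
          have key : (ConradAux.eval g (f * g) (false :: w))⁻¹ * g ^ (false :: w).length
              = ((ConradAux.eval g (f * g) w)⁻¹ * g ^ w.length) *
                ((g⁻¹ * f * g ^ (w.length + 1))⁻¹ * g ^ w.length) := by
            simp only [ConradAux.eval, List.length_cons, pow_succ]
            group
          rw [key]
          exact Qmul _ _ ih (mulQ _ _ (hstrict (w.length + 1)) (hpowQ w.length))
        · -- c = true
          have key : (ConradAux.eval g (f * g) (true :: w))⁻¹ * g ^ (true :: w).length
              = (ConradAux.eval g (f * g) w)⁻¹ * g ^ w.length := by
            simp only [ConradAux.eval, List.length_cons, pow_succ']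
            group
          rw [key]
          exact ih
  -- Claim B: a word starting with b = f*g is ≺ g
  have clB : ∀ w : List Bool, (ConradAux.eval g (f * g) (false :: w))⁻¹ * g ∈ P := by
    intro w
    have key : (ConradAux.eval g (f * g) (false :: w))⁻¹ * g
        = ((ConradAux.eval g (f * g) w)⁻¹ * g ^ w.length) * (g⁻¹ * f * g ^ (w.length + 1))⁻¹ := by
      simp only [ConradAux.eval, pow_succ]
      group
    rw [key]
    exact Qmul _ _ (clA w) (hstrict (w.length + 1))
  -- Claim C: a word starting with a = g is ⪰ g
  have evalQ : ∀ w : List Bool, ConradAux.eval g (f * g) w ∈ P ∨ ConradAux.eval g (f * g) w = 1 := by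
    intro w
    induction w with
    | nil => right; rfl
    | cons c w ih =>
        left
        cases c
        · exact mulQ _ _ (hmul f hf g hg) ih
        · exact mulQ _ _ hg ih
  have clC : ∀ w : List Bool,
      g⁻¹ * ConradAux.eval g (f * g) (true :: w) ∈ P ∨ g⁻¹ * ConradAux.eval g (f * g) (true :: w) = 1 := by
    intro w
    have key : g⁻¹ * ConradAux.eval g (f * g) (true :: w) = ConradAux.eval g (f * g) w := by
      simp only [ConradAux.eval]
      group
    rw [key]
    exact evalQ w
  -- use nilpotency: the Mal'cev words coincide at some stage
  obtain ⟨n, hn⟩ := (nilpotent_iff_lowerCentralSeries (G := G)).mp inferInstance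
  obtain ⟨u, v, hu, hv⟩ := ConradAux.heads n
  have hXY : ConradAux.eval g (f * g) (ConradAux.XY n).1 = ConradAux.eval g (f * g) (ConradAux.XY n).2 := by
    have h := ConradAux.malcev (G := G) g (f * g) n
    rw [hn, Subgroup.mem_bot, mul_inv_eq_one] at h
    exact h
  -- but the order argument shows Y ≺ g ⪯ X
  have hfin : (ConradAux.eval g (f * g) (ConradAux.XY n).2)⁻¹ * ConradAux.eval g (f * g) (ConradAux.XY n).1 ∈ P := by
    have key : (ConradAux.eval g (f * g) (ConradAux.XY n).2)⁻¹ * ConradAux.eval g (f * g) (ConradAux.XY n).1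
        = ((ConradAux.eval g (f * g) (ConradAux.XY n).2)⁻¹ * g) * (g⁻¹ * ConradAux.eval g (f * g) (ConradAux.XY n).1) := by
      group
    rw [key, hu, hv]
    exact mulQ _ _ (clB v) (clC u)
  rw [hXY] at hfin
  simp only [inv_mul_cancel] at hfin
  exact hone hfin
end

section
/- Let G be a finitely generated nilpotent group, P a positive cone of G, and C a normal subgroup of G that is convex with respect to P and satisfies g⁻¹(P \ C)g = P \ C for all g ∈ G. If there exists a finite subset F* ⊆ P ∩ C such that every g ∈ G with F* ⊆ g⁻¹(P ∩ C)g satisfies g⁻¹(P ∩ C)g = P ∩ C, then P is not condensed: there exists a finite subset F ⊆ P such that every g ∈ G with F ⊆ g⁻¹Pg satisfies g⁻¹Pg = P. -/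
/-- A subset `C` of a group is convex with respect to a positive cone `P` if any
element lying between two elements of `C` (for the order `x ≼ y ↔ x⁻¹ * y ∈ P ∪ {1}`)
belongs to `C`. -/
def IsConvexIn {G : Type*} [Group G] (P : Set G) (C : Set G) : Prop :=
  ∀ g ∈ C, ∀ h ∈ C, ∀ f : G,
    (g⁻¹ * f ∈ P ∨ g⁻¹ * f = 1) → (f⁻¹ * h ∈ P ∨ f⁻¹ * h = 1) → f ∈ C

/-- If `C` is a convex normal subgroup with `g⁻¹ (P \ C) g = P \ C` for all `g`, and the
cone `P ∩ C` of `C` has a discrete conjugacy orbit, then `P` is not condensed. -/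
theorem not_condensed_of_discrete_restriction
    {G : Type*} [Group G] [Group.FG G] [Group.IsNilpotent G]
    (P : Set G) (hP : IsPositiveCone P)
    (C : Subgroup G) (hCnormal : C.Normal)
    (hconv : IsConvexIn P (C : Set G))
    (hfix : ∀ g : G, conjCone g (P \ ↑C) = P \ ↑C)
    (hdisc : ∃ Fstar : Finset G, ↑Fstar ⊆ P ∩ ↑C ∧
      ∀ g : G, ↑Fstar ⊆ conjCone g (P ∩ ↑C) → conjCone g (P ∩ ↑C) = P ∩ ↑C) :
    ∃ F : Finset G, ↑F ⊆ P ∧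
      ∀ g : G, ↑F ⊆ conjCone g P → conjCone g P = P := by
  obtain ⟨Fstar, hF1, hF2⟩ := hdisc
  refine ⟨Fstar, fun x hx => (hF1 hx).1, fun g hg => ?_⟩
  have hsplit : P = (P ∩ ↑C) ∪ (P \ ↑C) := (Set.inter_union_diff P ↑C).symm
  have hconj : conjCone g P = conjCone g (P ∩ ↑C) ∪ (P \ ↑C) := by
    conv_lhs => rw [hsplit]
    rw [conjCone, Set.image_union]
    rw [show ((fun p => g⁻¹ * p * g) '' (P \ ↑C)) = conjCone g (P \ ↑C) from rfl, hfix g]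
    rfl
  have hsub : ↑Fstar ⊆ conjCone g (P ∩ ↑C) := by
    intro x hx
    have hx' := hg hx
    rw [hconj] at hx'
    rcases hx' with h | h
    · exact h
    · exact absurd (hF1 hx).2 h.2
  rw [hconj, hF2 g hsub]
  exact Set.inter_union_diff P ↑C
end

section
/- Let G be a finitely generated nilpotent group, P a positive cone of G, and C a normal subgroup of G that is convex with respect to P and satisfies g⁻¹(P \ C)g = P \ C for all g ∈ G. If P ∩ C is a limit point of its G-conjugation orbit, i.e., for every finite subset F* ⊆ P ∩ C there exists g ∈ G with g⁻¹(P ∩ C)g ≠ P ∩ C and F* ⊆ g⁻¹(P ∩ C)g, then P is condensed: for every finite subset F ⊆ P there exists g ∈ G with g⁻¹Pg ≠ P and F ⊆ g⁻¹Pg. -/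
/-- If `C` is a convex normal subgroup with `g⁻¹ (P \ C) g = P \ C` for all `g`, and the
cone `P ∩ C` of `C` is a limit point of its conjugacy orbit, then `P` is condensed. -/
theorem condensed_of_condensed_restriction
    {G : Type*} [Group G] [Group.FG G] [Group.IsNilpotent G]
    (P : Set G) (hP : IsPositiveCone P)
    (C : Subgroup G) (hCnormal : C.Normal)
    (hconv : IsConvexIn P (C : Set G))
    (hfix : ∀ g : G, conjCone g (P \ ↑C) = P \ ↑C)
    (hlim : ∀ Fstar : Finset G, ↑Fstar ⊆ P ∩ ↑C →
      ∃ g : G, conjCone g (P ∩ ↑C) ≠ P ∩ ↑C ∧ ↑Fstar ⊆ conjCone g (P ∩ ↑C)) :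
    ∀ F : Finset G, ↑F ⊆ P →
      ∃ g : G, conjCone g P ≠ P ∧ ↑F ⊆ conjCone g P := by
  classical
  intro F hF
  obtain ⟨g, hne, hsub⟩ := hlim (F.filter (fun x => x ∈ C)) (by
    intro x hx
    simp only [Finset.coe_filter, Set.mem_setOf_eq] at hx
    exact ⟨hF hx.1, hx.2⟩)
  have hCsub : conjCone g (P ∩ ↑C) ⊆ (↑C : Set G) := by
    rintro _ ⟨p, ⟨_, hpC⟩, rfl⟩
    simpa using hCnormal.conj_mem p hpC g⁻¹
  have hsplit : conjCone g P = conjCone g (P ∩ ↑C) ∪ (P \ ↑C) := by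
    rw [← hfix g]
    unfold conjCone
    rw [← Set.image_union, Set.inter_union_diff]
  refine ⟨g, ?_, ?_⟩
  · intro h
    apply hne
    rw [hsplit] at h
    ext x
    constructor
    · intro hx
      refine ⟨?_, hCsub hx⟩
      rw [← h]; exact Or.inl hx
    · rintro ⟨hxP, hxC⟩
      have : x ∈ conjCone g (P ∩ ↑C) ∪ (P \ ↑C) := by rw [h]; exact hxP
      rcases this with h1 | h2
      · exact h1
      · exact absurd hxC h2.2
  · intro x hx
    rw [hsplit]
    by_cases hxC : x ∈ C
    · exact Or.inl (hsub (by simp only [Finset.coe_filter, Set.mem_setOf_eq]; exact ⟨hx, hxC⟩))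
    · exact Or.inr ⟨hF hx, hxC⟩
end

section
/- For every n ≥ 1, the canonical action of L_n on the positive cones of ℤⁿ has no condensed points: for every positive cone P of ℤⁿ there exists a finite subset F ⊆ P such that every A ∈ L_n with F ⊆ A·P satisfies A·P = P. -/
/-- A positive cone of the free abelian group `ℤⁿ`. -/
def IsPosConeZ {n : ℕ} (P : Set (Fin n → ℤ)) : Prop :=
  (∀ a ∈ P, ∀ b ∈ P, a + b ∈ P) ∧
  (∀ v : Fin n → ℤ, v ∈ P ∨ -v ∈ P ∨ v = 0) ∧
  (∀ v ∈ P, -v ∉ P) ∧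
  (0 : Fin n → ℤ) ∉ P

/-- The image `A · P` of a subset `P ⊆ ℤⁿ` under a matrix `A`. -/
def mulVecSet {n : ℕ} (A : Matrix (Fin n) (Fin n) ℤ) (P : Set (Fin n → ℤ)) :
    Set (Fin n → ℤ) :=
  (fun w => A.mulVec w) '' P

/-- Membership in the group `L n ≤ SL n ℤ` of integer matrices agreeing with the identity
except possibly in the off-diagonal entries of the last row. -/
def IsLn {n : ℕ} (A : Matrix (Fin n) (Fin n) ℤ) : Prop :=
  (∀ i, A i i = 1) ∧ ∀ i j : Fin n, i ≠ j → (i : ℕ) + 1 ≠ n → A i j = 0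

/-- The canonical action of `L n` on the positive cones of `ℤⁿ` has no condensed points. -/
theorem Ln_action_no_condensed_points
    (n : ℕ) (hn : 1 ≤ n) (P : Set (Fin n → ℤ)) (hP : IsPosConeZ P) :
    ∃ F : Finset (Fin n → ℤ), ↑F ⊆ P ∧
      ∀ A : Matrix (Fin n) (Fin n) ℤ, IsLn A →
        ↑F ⊆ mulVecSet A P → mulVecSet A P = P := by
  classical
  obtain ⟨hPadd, hPtri, hPdisj, hP0⟩ := hP
  set ℓ : Fin n := ⟨n - 1, by omega⟩ with hℓdef
  set e₀ : Fin n → ℤ := fun i => if i = ℓ then 1 else 0 with he₀def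
  have he₀ne : e₀ ≠ 0 := by
    intro h
    have := congrFun h ℓ
    simp [he₀def] at this
  obtain ⟨ε, hεcases, he⟩ : ∃ ε : ℤ, (ε = 1 ∨ ε = -1) ∧ ε • e₀ ∈ P := by
    rcases hPtri e₀ with h | h | h
    · exact ⟨1, Or.inl rfl, by simpa using h⟩
    · exact ⟨-1, Or.inr rfl, by simpa using h⟩
    · exact absurd h he₀ne
  set e : Fin n → ℤ := ε • e₀ with hedef
  have hεε : ε * ε = 1 := by rcases hεcases with h | h <;> simp [h]
  -- positive multiples of e are in P
  have hkeN : ∀ k : ℕ, ((k : ℤ) + 1) • e ∈ P := by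
    intro k
    induction k with
    | zero => simpa using he
    | succ k ih =>
      have h1 : (((k + 1 : ℕ) : ℤ) + 1) • e = ((k : ℤ) + 1) • e + e := by
        push_cast
        rw [show ((k : ℤ) + 1 + 1) = ((k : ℤ) + 1) + 1 by ring, add_smul, one_smul]
      rw [h1]
      exact hPadd _ ih _ he
  have hke : ∀ k : ℤ, 1 ≤ k → k • e ∈ P := by
    intro k hk
    have h1 : k = ((k - 1).toNat : ℤ) + 1 := by omega
    rw [h1]
    exact hkeN _
  -- fibers are upward closed
  have hup : ∀ (v : Fin n → ℤ) (t s : ℤ), t ≤ s → v + t • e ∈ P → v + s • e ∈ P := by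
    intro v t s hts hv
    rcases eq_or_lt_of_le hts with rfl | h
    · exact hv
    · have heq : v + s • e = (v + t • e) + (s - t) • e := by
        rw [sub_smul]; abel
      rw [heq]
      exact hPadd _ hv _ (hke _ (by omega))
  -- the set of split fibers
  set B : Set (Fin n → ℤ) :=
    {v | (∃ t : ℤ, v + t • e ∈ P) ∧ (∃ t : ℤ, v + t • e ∉ P)} with hBdef
  have hBneg : ∀ v ∈ B, -v ∈ B := by
    rintro v ⟨⟨t1, ht1⟩, ⟨t0, ht0⟩⟩
    constructor
    · rcases hPtri (v + t0 • e) with h | h | h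
      · exact absurd h ht0
      · refine ⟨-t0, ?_⟩
        have : -v + (-t0) • e = -(v + t0 • e) := by rw [neg_smul]; abel
        rwa [this]
      · have hv : -v = t0 • e := by
          rw [← neg_eq_of_add_eq_zero_left h, neg_neg]
        refine ⟨1 - t0, ?_⟩
        have : -v + (1 - t0) • e = (1 : ℤ) • e := by
          rw [hv, ← add_smul]; ring_nf
        rw [this]
        simpa using he
    · refine ⟨-t1, fun hc => ?_⟩
      have hneg : -(v + t1 • e) = -v + (-t1) • e := by rw [neg_smul]; abel
      exact hPdisj _ ht1 (by rwa [hneg])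
  -- least element of each split fiber
  have hm_ex : ∀ w : Fin n → ℤ, ∃ mw : ℤ,
      w ∈ B → (w + mw • e ∈ P ∧ ∀ t : ℤ, w + t • e ∈ P → mw ≤ t) := by
    intro w
    by_cases hw : w ∈ B
    · obtain ⟨⟨t1, ht1⟩, ⟨t0, ht0⟩⟩ := hw
      obtain ⟨lb, hlb1, hlb2⟩ := Int.exists_least_of_bdd (P := fun t => w + t • e ∈ P)
        ⟨t0 + 1, fun z hz => by
          by_contra hc
          push_neg at hc
          exact ht0 (hup w z t0 (by omega) hz)⟩ ⟨t1, ht1⟩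
      exact ⟨lb, fun _ => ⟨hlb1, hlb2⟩⟩
    · exact ⟨0, fun h => absurd h hw⟩
  choose m hm using hm_ex
  -- a finite subset of B spanning span B
  have hfg : (Submodule.span ℤ B).FG := IsNoetherian.noetherian _
  obtain ⟨S, hSfin, hSspan⟩ := Submodule.fg_def.mp hfg
  have hTex : ∀ s : Fin n → ℤ, ∃ T : Finset (Fin n → ℤ),
      ↑T ⊆ B ∧ (s ∈ S → s ∈ Submodule.span ℤ (T : Set (Fin n → ℤ))) := by
    intro s
    by_cases hs : s ∈ S
    · have hsB : s ∈ Submodule.span ℤ B := by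
        rw [← hSspan]; exact Submodule.subset_span hs
      obtain ⟨T, hT1, hT2⟩ := Submodule.mem_span_finite_of_mem_span hsB
      exact ⟨T, hT1, fun _ => hT2⟩
    · exact ⟨∅, by simp, fun h => absurd h hs⟩
  choose T hT1 hT2 using hTex
  set Tall : Finset (Fin n → ℤ) := hSfin.toFinset.biUnion T with hTalldef
  have hTallB : ↑Tall ⊆ B := by
    intro x hx
    rw [Finset.mem_coe, hTalldef, Finset.mem_biUnion] at hx
    obtain ⟨s, _, hx⟩ := hx
    exact hT1 s hx
  have hBspan : B ⊆ (Submodule.span ℤ (Tall : Set (Fin n → ℤ)) : Set (Fin n → ℤ)) := by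
    intro v hv
    have h1 : v ∈ Submodule.span ℤ S := by
      rw [hSspan]; exact Submodule.subset_span hv
    have h2 : Submodule.span ℤ S ≤ Submodule.span ℤ (Tall : Set (Fin n → ℤ)) := by
      rw [Submodule.span_le]
      intro s hs
      have hmono : Submodule.span ℤ (↑(T s) : Set (Fin n → ℤ)) ≤
          Submodule.span ℤ (Tall : Set (Fin n → ℤ)) := by
        apply Submodule.span_mono
        intro x hx
        rw [Finset.mem_coe, hTalldef, Finset.mem_biUnion]
        exact ⟨s, hSfin.mem_toFinset.mpr hs, hx⟩
      exact hmono (hT2 s hs)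
    exact h2 h1
  -- the finite witness set
  set F : Finset (Fin n → ℤ) :=
    Tall.biUnion (fun w => {w + m w • e, -w + m (-w) • e}) with hFdef
  refine ⟨F, ?_, ?_⟩
  · -- F ⊆ P
    intro x hx
    rw [Finset.mem_coe, hFdef, Finset.mem_biUnion] at hx
    obtain ⟨w, hw, hx⟩ := hx
    have hwB : w ∈ B := hTallB hw
    rw [Finset.mem_insert, Finset.mem_singleton] at hx
    rcases hx with rfl | rfl
    · exact (hm w hwB).1
    · exact (hm (-w) (hBneg w hwB)).1
  · intro A hA hF
    -- the functional associated with A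
    set c : Fin n → ℤ := fun j => if j = ℓ then 0 else A ℓ j with hcdef
    set Sf : (Fin n → ℤ) →ₗ[ℤ] ℤ :=
      { toFun := fun v => ∑ j, c j * v j
        map_add' := by
          intro x y
          simp [mul_add, Finset.sum_add_distrib]
        map_smul' := by
          intro r x
          simp only [Pi.smul_apply, smul_eq_mul, RingHom.id_apply, Finset.mul_sum]
          apply Finset.sum_congr rfl
          intro j _
          ring } with hSfdef
    have hSfapp : ∀ v, Sf v = ∑ j, c j * v j := fun v => rfl
    have hSe₀ : Sf e₀ = 0 := by
      rw [hSfapp]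
      rw [Finset.sum_eq_single ℓ]
      · simp [he₀def, hcdef]
      · intro j _ hj
        simp [he₀def, hj]
      · intro h
        exact absurd (Finset.mem_univ ℓ) h
    have hSe : Sf e = 0 := by
      rw [hedef, map_smul, hSe₀, smul_eq_mul, mul_zero]
    -- the action of A is translation along e by ε * Sf
    have hmulVec : ∀ v, A.mulVec v = v + (ε * Sf v) • e := by
      intro v
      funext i
      by_cases hi : i = ℓ
      · subst hi
        have hrow : ∀ j, A ℓ j * v j = c j * v j + (if j = ℓ then v j else 0) := by
          intro j
          by_cases hj : j = ℓ
          · subst hj; simp [hcdef, hA.1]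
          · simp [hcdef, hj]
        have hL : A.mulVec v ℓ = ∑ j, A ℓ j * v j := by
          simp [Matrix.mulVec, dotProduct]
        have hR : (v + (ε * Sf v) • e) ℓ = v ℓ + Sf v := by
          have heℓ : e ℓ = ε := by simp [hedef, he₀def]
          simp only [Pi.add_apply, Pi.smul_apply, smul_eq_mul, heℓ]
          linear_combination Sf v * hεε
        rw [hL, hR, Finset.sum_congr rfl (fun j _ => hrow j), Finset.sum_add_distrib,
          Finset.sum_ite_eq' Finset.univ ℓ, ← hSfapp]
        simp [add_comm]
      · have hi' : (i : ℕ) + 1 ≠ n := by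
          intro h
          apply hi
          apply Fin.ext
          simp only [hℓdef]
          omega
        have hL : A.mulVec v i = ∑ j, A i j * v j := by
          simp [Matrix.mulVec, dotProduct]
        have hsum : ∑ j, A i j * v j = v i := by
          rw [Finset.sum_eq_single i]
          · rw [hA.1, one_mul]
          · intro j _ hj
            rw [hA.2 i j (Ne.symm hj) hi', zero_mul]
          · intro h
            exact absurd (Finset.mem_univ i) h
        have hR : (v + (ε * Sf v) • e) i = v i := by
          have hei : e i = 0 := by simp [hedef, he₀def, hi]
          simp [hei]
        rw [hL, hsum, hR]
    -- Sf vanishes on Tall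
    have hSw0 : ∀ w ∈ Tall, Sf w = 0 := by
      intro w hw
      have hwB : w ∈ B := hTallB hw
      have hwB' : -w ∈ B := hBneg w hwB
      have key : ∀ u : Fin n → ℤ, u ∈ B → u + m u • e ∈ mulVecSet A P → ε * Sf u ≤ 0 := by
        intro u huB hu
        obtain ⟨p, hp, hpe⟩ := hu
        simp only at hpe
        rw [hmulVec] at hpe
        have hSp : Sf p = Sf u := by
          have h1 : Sf (p + (ε * Sf p) • e) = Sf (u + m u • e) := congrArg Sf hpe
          simp only [map_add, map_smul, hSe, smul_zero, add_zero] at h1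
          exact h1
        have hpval : p = u + (m u - ε * Sf u) • e := by
          have h2 : p = u + m u • e - (ε * Sf p) • e := by
            rw [← hpe]; abel
          rw [h2, hSp, sub_smul]
          abel
        have := (hm u huB).2 (m u - ε * Sf u) (by rw [← hpval]; exact hp)
        omega
      have h1 : w + m w • e ∈ mulVecSet A P := by
        apply hF
        rw [Finset.mem_coe, hFdef, Finset.mem_biUnion]
        exact ⟨w, hw, by simp⟩
      have h2 : -w + m (-w) • e ∈ mulVecSet A P := by
        apply hF
        rw [Finset.mem_coe, hFdef, Finset.mem_biUnion]
        exact ⟨w, hw, by simp⟩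
      have k1 := key w hwB h1
      have k2 := key (-w) hwB' h2
      rw [map_neg, mul_neg] at k2
      have hz : ε * Sf w = 0 := by omega
      rcases hεcases with h | h <;> subst h <;> omega
    -- Sf vanishes on B
    have hSB : ∀ v ∈ B, Sf v = 0 := by
      intro v hv
      have hle : Submodule.span ℤ (Tall : Set (Fin n → ℤ)) ≤ LinearMap.ker Sf :=
        Submodule.span_le.mpr (fun w hw => LinearMap.mem_ker.mpr (hSw0 w hw))
      exact LinearMap.mem_ker.mp (hle (hBspan hv))
    -- A · P ⊆ P
    have hsub : mulVecSet A P ⊆ P := by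
      rintro x ⟨p, hp, rfl⟩
      simp only
      rw [hmulVec]
      by_cases hpB : p ∈ B
      · rw [hSB p hpB]
        simpa using hp
      · have hall : ∀ t : ℤ, p + t • e ∈ P := by
          by_contra hcon
          push_neg at hcon
          exact hpB ⟨⟨0, by simpa using hp⟩, hcon⟩
        exact hall _
    -- equality
    apply Set.Subset.antisymm hsub
    intro x hx
    set y : Fin n → ℤ := x - (ε * Sf x) • e with hydef
    have hSy : Sf y = Sf x := by
      rw [hydef, map_sub, map_smul, hSe, smul_zero, sub_zero]
    have hAy : A.mulVec y = x := by
      rw [hmulVec, hSy, hydef]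
      abel
    rcases hPtri y with h | h | h
    · exact ⟨y, h, hAy⟩
    · exfalso
      have hmem : A.mulVec (-y) ∈ P := hsub ⟨-y, h, rfl⟩
      have hxy : y + (ε * Sf x) • e = x := by
        have h3 := hAy
        rw [hmulVec, hSy] at h3
        exact h3
      have h4 : -(y + (ε * Sf x) • e) = -x := congrArg Neg.neg hxy
      have hneg : A.mulVec (-y) = -x := by
        rw [hmulVec, map_neg, hSy, mul_neg, neg_smul, ← h4]
        abel
      rw [hneg] at hmem
      exact hPdisj x hx hmem
    · exfalso
      rw [h] at hAy
      have h0 : A.mulVec 0 = 0 := by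
        rw [hmulVec]
        simp
      rw [h0] at hAy
      rw [← hAy] at hx
      exact hP0 hx
end

section
/- Let v = (x₁, …, xₙ) ∈ ℝⁿ with xₙ > 0, and let A ∈ L_n with A ≠ I_n. Then there exists an integer vector w ∈ ℤⁿ such that ⟨v, w⟩ > 0 but ⟨(A⁻¹)ᵗ v, w⟩ < 0, where (A⁻¹)ᵗ denotes the transpose of A⁻¹ and ⟨·,·⟩ is the standard Euclidean inner product on ℝⁿ. -/
/-- The Euclidean inner product of a real vector with an integer vector. -/
def ipZ {n : ℕ} (v : Fin n → ℝ) (w : Fin n → ℤ) : ℝ := ∑ i, v i * (w i : ℝ)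

/-- If `v ∈ ℝⁿ` has positive last coordinate and `A ∈ L n` is not the identity, then
there is an integer vector `w` with `⟨v, w⟩ > 0` but `⟨(A⁻¹)ᵗ v, w⟩ < 0`. -/
theorem exists_separating_integer_vector
    (n : ℕ) (hn : 1 ≤ n) (v : Fin n → ℝ) (hv : 0 < v ⟨n - 1, by omega⟩)
    (A : Matrix (Fin n) (Fin n) ℤ) (hA : IsLn A) (hA1 : A ≠ 1) :
    ∃ w : Fin n → ℤ,
      0 < ipZ v w ∧
      ipZ ((Matrix.transpose (A⁻¹.map (fun z => (z : ℝ)))).mulVec v) w < 0 := by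
  classical
  obtain ⟨hdiag, hoff⟩ := hA
  set last : Fin n := ⟨n - 1, by omega⟩ with hlast
  have hne_last : ∀ i : Fin n, i ≠ last → (i : ℕ) + 1 ≠ n := by
    intro i hi h
    have : (i : ℕ) = n - 1 := by omega
    exact hi (Fin.ext this)
  -- Find a nonzero off-diagonal entry in the last row.
  have hex : ∃ k : Fin n, k ≠ last ∧ A last k ≠ 0 := by
    by_contra h
    push_neg at h
    apply hA1
    ext i j
    by_cases hij : i = j
    · subst hij; simp [hdiag i, Matrix.one_apply]
    · rw [Matrix.one_apply_ne hij]
      by_cases hi : i = last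
      · subst hi
        exact h j (fun hj => hij hj.symm)
      · exact hoff i j hij (hne_last i hi)
  obtain ⟨k, hk_last, hk⟩ := hex
  -- (A - 1)^2 = 0
  have hsq : (A - 1) * (A - 1) = 0 := by
    ext i j
    simp only [Matrix.mul_apply, Matrix.zero_apply]
    apply Finset.sum_eq_zero
    intro l _
    by_cases hi : i = last
    · by_cases hl : l = last
      · subst hi; subst hl
        have h0 : (A - 1) last last = 0 := by
          simp [Matrix.sub_apply, Matrix.one_apply, hdiag]
        rw [h0, zero_mul]
      · have h2 : (A - 1) l j = 0 := by
          by_cases hlj : l = j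
          · subst hlj; simp [Matrix.sub_apply, Matrix.one_apply, hdiag]
          · simp [Matrix.sub_apply, Matrix.one_apply_ne hlj,
              hoff l j hlj (hne_last l hl)]
        rw [h2, mul_zero]
    · have h1 : (A - 1) i l = 0 := by
        by_cases hil : i = l
        · subst hil; simp [Matrix.sub_apply, Matrix.one_apply, hdiag]
        · simp [Matrix.sub_apply, Matrix.one_apply_ne hil,
            hoff i l hil (hne_last i hi)]
      rw [h1, zero_mul]
  have hmul : A * (2 - A) = 1 := by
    have h : A * (2 - A) = -((A - 1) * (A - 1)) + 1 := by noncomm_ring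
    rw [h, hsq]; simp
  have hAinv : A⁻¹ = 2 - A := Matrix.inv_eq_right_inv hmul
  -- the transformed vector, componentwise
  set u : Fin n → ℝ := (Matrix.transpose ((2 - A).map (fun z => (z : ℝ)))).mulVec v with hu
  have hucomp : ∀ j, u j = v j - ((A last j - if last = j then 1 else 0 : ℤ) : ℝ) * v last := by
    intro j
    have hterm : ∀ i : Fin n, (Matrix.transpose ((2 - A).map (fun z => (z : ℝ)))) j i * v i
        = (if i = j then v j else 0)
          + (if i = last then -(((A last j - if last = j then 1 else 0 : ℤ)) : ℝ) * v last else 0) := by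
      intro i
      have h2 : (2 : Matrix (Fin n) (Fin n) ℤ) i j = if i = j then 2 else 0 := by
        have h21 : (2 : Matrix (Fin n) (Fin n) ℤ) = 1 + 1 := by norm_num
        rw [h21, Matrix.add_apply, Matrix.one_apply]
        split_ifs <;> ring
      simp only [Matrix.transpose_apply, Matrix.map_apply, Matrix.sub_apply, h2]
      by_cases hij : i = j
      · subst hij
        by_cases hil : i = last
        · subst hil
          simp only [if_pos rfl, hdiag]
          push_cast; ring
        · simp only [if_pos rfl, if_neg hil, hdiag]
          push_cast; ring
      · by_cases hil : i = last
        · subst hil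
          simp only [if_neg hij, if_pos rfl]
          push_cast; ring
        · simp only [if_neg hij, if_neg hil, hoff i j hij (hne_last i hil)]
          push_cast; ring
    rw [hu]
    unfold Matrix.mulVec dotProduct
    rw [Finset.sum_congr rfl (fun i _ => hterm i), Finset.sum_add_distrib,
      Finset.sum_ite_eq', Finset.sum_ite_eq']
    simp only [Finset.mem_univ, if_pos]
    ring
  have huk : u k = v k - ((A last k : ℤ) : ℝ) * v last := by
    rw [hucomp k, if_neg (fun h => hk_last (Eq.symm h))]
    push_cast; ring
  have hul : u last = v last := by
    rw [hucomp last, if_pos rfl, hdiag]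
    push_cast; ring
  -- choose the sign and the integer m
  set s : ℤ := if 0 < A last k then 1 else -1 with hs
  have hsa : 1 ≤ s * A last k := by
    rcases lt_trichotomy (A last k) 0 with h | h | h
    · rw [hs, if_neg (by omega)]; omega
    · exact absurd h hk
    · rw [hs, if_pos h]; omega
  have hvlast : 0 < v last := hv
  set x : ℝ := -(2 * (s : ℝ) * v k) / v last with hx
  set m : ℤ := ⌊x⌋ + 1 with hm
  have hxm : x < (m : ℝ) := by rw [hm]; push_cast; exact Int.lt_floor_add_one x
  have hmx : (m : ℝ) ≤ x + 1 := by
    rw [hm]; push_cast; linarith [Int.floor_le x]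
  have hxc : x * v last = -(2 * (s : ℝ) * v k) := by
    rw [hx]; exact div_mul_cancel₀ _ (ne_of_gt hvlast)
  have hP1 : 0 < v k * (2 * (s : ℝ)) + v last * (m : ℝ) := by
    nlinarith [mul_lt_mul_of_pos_right hxm hvlast]
  have hP2 : v k * (2 * (s : ℝ)) + v last * (m : ℝ) ≤ v last := by
    nlinarith [mul_le_mul_of_nonneg_right hmx hvlast.le]
  -- the witnessing vector
  set w : Fin n → ℤ := fun i => if i = k then 2 * s else if i = last then m else 0 with hw
  have key : ∀ f : Fin n → ℝ, ipZ f w = f k * (2 * (s : ℝ)) + f last * (m : ℝ) := by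
    intro f
    unfold ipZ
    have hterm : ∀ i : Fin n, f i * ((w i : ℤ) : ℝ)
        = (if i = k then f k * (2 * (s : ℝ)) else 0)
          + (if i = last then f last * ((m : ℤ) : ℝ) else 0) := by
      intro i
      simp only [hw]
      by_cases h1 : i = k
      · subst h1
        simp only [if_pos rfl, if_neg hk_last]
        push_cast; ring
      · by_cases h2 : i = last
        · subst h2
          simp only [if_neg h1, if_pos rfl]
          push_cast; ring
        · simp only [if_neg h1, if_neg h2]
          push_cast; ring
    rw [Finset.sum_congr rfl (fun i _ => hterm i), Finset.sum_add_distrib,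
      Finset.sum_ite_eq', Finset.sum_ite_eq']
    simp only [Finset.mem_univ, if_pos]
  refine ⟨w, ?_, ?_⟩
  · rw [key v]; exact hP1
  · rw [hAinv]
    have hrw : (Matrix.transpose ((2 - A).map (fun z => (z : ℝ)))).mulVec v = u := rfl
    rw [hrw, key u, huk, hul]
    have hsa' : (1 : ℝ) ≤ (s : ℝ) * ((A last k : ℤ) : ℝ) := by exact_mod_cast hsa
    nlinarith [hP2, hvlast, hsa', mul_le_mul_of_nonneg_right hsa' (by linarith : (0:ℝ) ≤ 2 * v last)]
end

section
/- Let G be a finitely generated torsion-free nilpotent group such that the commutator subgroup [G,G] is cyclic and contained in the center Z(G). Then there exists g₀ ∈ G such that [G,G] ⊆ ⟨g₀⟩, the cyclic subgroup ⟨g₀⟩ is contained in Z(G), and the quotient group G/⟨g₀⟩ is a finitely generated torsion-free abelian group. -/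
/-- The former Mathlib definition (removed since): no nontrivial element has finite order. -/
def Monoid.IsTorsionFree (G : Type*) [Monoid G] : Prop :=
  ∀ g : G, g ≠ 1 → ¬IsOfFinOrder g

section Aux

variable {G : Type*} [Group G]

/-- A subgroup of a finitely generated commutative group is finitely generated. -/
lemma aux_subgroup_fg {A : Type*} [CommGroup A] [Group.FG A] (H : Subgroup A) :
    Group.FG H := by
  haveI : Module.Finite ℤ (Additive A) := Module.Finite.iff_addGroup_fg.mpr inferInstance
  have hfg : (AddSubgroup.toIntSubmodule (Subgroup.toAddSubgroup H)).FG :=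
    IsNoetherian.noetherian _
  rw [Group.fg_iff_subgroup_fg, Subgroup.fg_iff_add_fg]
  exact (Submodule.fg_iff_addSubgroup_fg _).mp hfg

/-- Conjugation by a power, when the commutator is central. -/
lemma aux_conj_pow (a y c : G) (hcdef : c = a * y * a⁻¹ * y⁻¹)
    (hcomm : ∀ b : G, b * c = c * b) (n : ℕ) :
    a ^ n * y * (a ^ n)⁻¹ = c ^ n * y := by
  have h1 : a * y * a⁻¹ = c * y := by rw [hcdef]; group
  have hpow : ∀ m : ℕ, a * c ^ m = c ^ m * a := by
    intro m; induction m with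
    | zero => simp
    | succ j ihj => rw [pow_succ, ← mul_assoc, ihj, mul_assoc, hcomm a, ← mul_assoc]
  induction n with
  | zero => simp
  | succ k ih =>
    have e1 : a ^ (k+1) * y * (a ^ (k+1))⁻¹ = a * (a ^ k * y * (a ^ k)⁻¹) * a⁻¹ := by
      rw [pow_succ']; group
    have e2 : a * (c ^ k * y) * a⁻¹ = c ^ k * (a * y * a⁻¹) := by
      calc a * (c ^ k * y) * a⁻¹ = a * c ^ k * y * a⁻¹ := by group
        _ = c ^ k * a * y * a⁻¹ := by rw [hpow k]
        _ = c ^ k * (a * y * a⁻¹) := by group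
    rw [e1, ih, e2, h1, pow_succ]
    exact (mul_assoc _ _ _).symm

end Aux

/-- If `G` is a finitely generated torsion-free nilpotent group whose commutator subgroup
is cyclic and central, then there is a central element `g₀` with `[G,G] ⊆ ⟨g₀⟩` such that
`G/⟨g₀⟩` is a finitely generated torsion-free abelian group. -/
theorem exists_central_cyclic_with_torsionFree_abelian_quotient
    {G : Type*} [Group G] [Group.FG G] [Group.IsNilpotent G]
    (htf : Monoid.IsTorsionFree G)
    (hcyc : ∃ g : G, commutator G = Subgroup.zpowers g)
    (hcen : commutator G ≤ Subgroup.center G) :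
    ∃ g₀ : G,
      commutator G ≤ Subgroup.zpowers g₀ ∧
      Subgroup.zpowers g₀ ≤ Subgroup.center G ∧
      ∃ _ : (Subgroup.zpowers g₀).Normal,
        Group.FG (G ⧸ Subgroup.zpowers g₀) ∧
        Monoid.IsTorsionFree (G ⧸ Subgroup.zpowers g₀) ∧
        ∀ x y : G ⧸ Subgroup.zpowers g₀, x * y = y * x := by
  classical
  obtain ⟨g, hg⟩ := hcyc
  -- the isolator of the commutator subgroup
  set S : Subgroup G :=
    { carrier := {x | x ∈ Subgroup.center G ∧ ∃ n : ℕ, 0 < n ∧ x ^ n ∈ commutator G}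
      one_mem' := ⟨Subgroup.one_mem _, 1, one_pos, by simpa using Subgroup.one_mem _⟩
      mul_mem' := by
        rintro x y ⟨hxZ, n, hn, hxn⟩ ⟨hyZ, m, hm, hym⟩
        refine ⟨Subgroup.mul_mem _ hxZ hyZ, n * m, Nat.mul_pos hn hm, ?_⟩
        have hcomm : Commute x y := (Subgroup.mem_center_iff.mp hxZ y).symm
        rw [hcomm.mul_pow]
        exact Subgroup.mul_mem _
          (by rw [pow_mul]; exact Subgroup.pow_mem _ hxn m)
          (by rw [mul_comm n m, pow_mul]; exact Subgroup.pow_mem _ hym n)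
      inv_mem' := by
        rintro x ⟨hxZ, n, hn, hxn⟩
        exact ⟨Subgroup.inv_mem _ hxZ, n, hn, by
          rw [inv_pow]; exact Subgroup.inv_mem _ hxn⟩ } with hSdef
  have hSmem : ∀ x : G, x ∈ S ↔
      x ∈ Subgroup.center G ∧ ∃ n : ℕ, 0 < n ∧ x ^ n ∈ commutator G := fun x => Iff.rfl
  have hSZ : S ≤ Subgroup.center G := fun x hx => ((hSmem x).mp hx).1
  -- key isolation property of S
  have hiso : ∀ (a : G) (n : ℕ), 0 < n → a ^ n ∈ S → a ∈ S := by
    intro a n hn haS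
    obtain ⟨hZ, m, hm, hC⟩ := (hSmem _).mp haS
    have haZ : a ∈ Subgroup.center G := by
      rw [Subgroup.mem_center_iff]
      intro y
      have hcC : a * y * a⁻¹ * y⁻¹ ∈ commutator G := by
        have h := Subgroup.commutator_mem_commutator (Subgroup.mem_top a) (Subgroup.mem_top y)
        rw [← commutator_def] at h
        simpa [commutatorElement_def, mul_assoc] using h
      have hcZ : a * y * a⁻¹ * y⁻¹ ∈ Subgroup.center G := hcen hcC
      have hfix : a ^ n * y * (a ^ n)⁻¹ = y := by
        rw [← Subgroup.mem_center_iff.mp hZ y]; group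
      have hkey := aux_conj_pow a y _ rfl
        (fun b => Subgroup.mem_center_iff.mp hcZ b) n
      rw [hfix] at hkey
      have hcn : (a * y * a⁻¹ * y⁻¹) ^ n = 1 :=
        mul_right_cancel (b := y) (by rw [one_mul, ← hkey])
      have hc1 : a * y * a⁻¹ * y⁻¹ = 1 := by
        by_contra hne
        exact htf _ hne (isOfFinOrder_iff_pow_eq_one.mpr ⟨n, hn, hcn⟩)
      calc y * a = (a * y * a⁻¹ * y⁻¹)⁻¹ * (a * y) := by group
        _ = a * y := by rw [hc1]; group
    refine (hSmem a).mpr ⟨haZ, n * m, Nat.mul_pos hn hm, ?_⟩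
    rw [pow_mul]; exact hC
  -- uniform exponent: there is e > 0 with x ^ e ∈ commutator G for all x ∈ S
  have hQfg : Group.FG (Abelianization G) :=
    Group.fg_of_surjective (f := Abelianization.of)
      (fun q => Quotient.inductionOn' q fun a => ⟨a, rfl⟩)
  have hker : ∀ x : G, Abelianization.of x = 1 ↔ x ∈ commutator G := fun x =>
    QuotientGroup.eq_one_iff x
  obtain ⟨e, he, hSe⟩ : ∃ e : ℕ, 0 < e ∧ ∀ x ∈ S, x ^ e ∈ commutator G := by
    set T : Subgroup (Abelianization G) := S.map Abelianization.of with hT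
    haveI : Group.FG T := aux_subgroup_fg T
    have hTtors : Monoid.IsTorsion T := by
      rintro ⟨t, ht⟩
      obtain ⟨x, hxS, rfl⟩ := ht
      obtain ⟨-, n, hn, hxn⟩ := (hSmem x).mp hxS
      refine isOfFinOrder_iff_pow_eq_one.mpr ⟨n, hn, ?_⟩
      ext
      push_cast
      rw [← map_pow]
      exact (hker _).mpr hxn
    haveI : Finite T := CommGroup.finite_of_fg_torsion T hTtors
    refine ⟨Nat.card T, Nat.card_pos, fun x hxS => ?_⟩
    have hmem : Abelianization.of x ∈ T := ⟨x, hxS, rfl⟩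
    have h1 : (⟨Abelianization.of x, hmem⟩ : T) ^ Nat.card T = 1 := pow_card_eq_one'
    have h2 : Abelianization.of x ^ Nat.card T = 1 := by
      have h3 := Subtype.ext_iff.mp h1
      simp only [SubgroupClass.coe_pow, OneMemClass.coe_one] at h3
      exact h3
    have : Abelianization.of (x ^ Nat.card T) = 1 := by rw [map_pow]; exact h2
    exact (hker _).mp this
  -- construct g₀
  have hgS : g ∈ S := by
    have hgC : g ∈ commutator G := by rw [hg]; exact Subgroup.mem_zpowers g
    exact (hSmem g).mpr ⟨hcen hgC, 1, one_pos, by simpa using hgC⟩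
  obtain ⟨g₀, hCle, hg₀S, hg₀gen⟩ :
      ∃ g₀ : G, commutator G ≤ Subgroup.zpowers g₀ ∧ g₀ ∈ S ∧
        ∀ x ∈ S, x ∈ Subgroup.zpowers g₀ := by
    by_cases hg1 : g = 1
    · refine ⟨1, ?_, Subgroup.one_mem _, fun x hxS => ?_⟩
      · rw [hg, hg1]
      · obtain ⟨-, n, hn, hxn⟩ := (hSmem x).mp hxS
        rw [hg, hg1, Subgroup.zpowers_one_eq_bot, Subgroup.mem_bot] at hxn
        have : x = 1 := by
          by_contra hne
          exact htf x hne (isOfFinOrder_iff_pow_eq_one.mpr ⟨n, hn, hxn⟩)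
        rw [this]; exact Subgroup.one_mem _
    · -- g ≠ 1 : embed S into ℤ
      have hginj : Function.Injective fun k : ℤ => g ^ k :=
        injective_zpow_iff_not_isOfFinOrder.mpr (fun h => htf g hg1 h)
      have hchoice : ∀ x : S, ∃ k : ℤ, g ^ k = (x : G) ^ e := by
        rintro ⟨x, hxS⟩
        have := hSe x hxS
        rw [hg, Subgroup.mem_zpowers_iff] at this
        exact this
      choose k hk using hchoice
      have hkadd : ∀ x y : S, k (x * y) = k x + k y := by
        intro x y
        apply hginj
        show g ^ k (x * y) = g ^ (k x + k y)
        rw [hk, zpow_add, hk, hk]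
        have hcomm : Commute (x : G) (y : G) :=
          (Subgroup.mem_center_iff.mp (hSZ x.2) (y : G)).symm
        push_cast
        rw [hcomm.mul_pow]
      have hkinj : ∀ x : S, k x = 0 → x = 1 := by
        intro x hx0
        have : (x : G) ^ e = 1 := by rw [← hk x, hx0, zpow_zero]
        have hx1 : (x : G) = 1 := by
          by_contra hne
          exact htf _ hne (isOfFinOrder_iff_pow_eq_one.mpr ⟨e, he, this⟩)
        exact Subtype.ext hx1
      -- S is cyclic
      let f : S →* Multiplicative ℤ :=
        { toFun := fun x => Multiplicative.ofAdd (k x)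
          map_one' := by
            have h1 : k (1 : S) = 0 := by
              have := hkadd 1 1
              simpa using this
            simp [h1]
          map_mul' := fun x y => by simp [hkadd] }
      have hfinj : Function.Injective f := by
        intro x y hxy
        have : k (x * y⁻¹) = 0 := by
          have hky : k x = k y := by
            simpa [f, Multiplicative.ofAdd] using hxy
          have h1 : k (y * y⁻¹) = k y + k y⁻¹ := hkadd y y⁻¹
          have h2 : k (1 : S) = 0 := by simpa using hkadd 1 1
          have h3 : k y⁻¹ = -k y := by
            have : k y + k y⁻¹ = 0 := by rw [← h1, mul_inv_cancel y]; exact h2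
            linarith
          rw [hkadd, h3, hky]; ring
        have := hkinj _ this
        rwa [mul_inv_eq_one] at this
      haveI : IsCyclic S := isCyclic_of_surjective
        (MonoidHom.ofInjective hfinj).symm (MonoidHom.ofInjective hfinj).symm.surjective
      obtain ⟨⟨g₀, hg₀S⟩, hgen⟩ := IsCyclic.exists_generator (α := S)
      refine ⟨g₀, ?_, hg₀S, ?_⟩
      · intro x hxC
        have hxS : x ∈ S := (hSmem x).mpr ⟨hcen hxC, 1, one_pos, by simpa using hxC⟩
        obtain ⟨m, hm⟩ := hgen ⟨x, hxS⟩
        exact ⟨m, by simpa using congrArg Subtype.val hm⟩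
      · intro x hxS
        obtain ⟨m, hm⟩ := hgen ⟨x, hxS⟩
        exact ⟨m, by simpa using congrArg Subtype.val hm⟩
  -- now wrap up
  have hZle : Subgroup.zpowers g₀ ≤ Subgroup.center G := by
    rw [Subgroup.zpowers_le]
    exact hSZ hg₀S
  have hiso' : ∀ (a : G) (n : ℕ), 0 < n → a ^ n ∈ Subgroup.zpowers g₀ → a ∈ Subgroup.zpowers g₀ := by
    intro a n hn han
    have haS : a ∈ S := by
      apply hiso a n hn
      have : Subgroup.zpowers g₀ ≤ S := by rw [Subgroup.zpowers_le]; exact hg₀S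
      exact this han
    exact hg₀gen a haS
  haveI hnormal : (Subgroup.zpowers g₀).Normal := by
    constructor
    intro h hm gg
    have hc : gg * h = h * gg := Subgroup.mem_center_iff.mp (hZle hm) gg
    rw [hc, mul_assoc, mul_inv_cancel, mul_one]
    exact hm
  refine ⟨g₀, hCle, hZle, hnormal, inferInstance, ?_, ?_⟩
  · -- torsion-free
    intro x hx hfin
    obtain ⟨n, hn, hxn⟩ := isOfFinOrder_iff_pow_eq_one.mp hfin
    obtain ⟨a, rfl⟩ := QuotientGroup.mk_surjective x
    apply hx
    have : ((a ^ n : G) : G ⧸ Subgroup.zpowers g₀) = 1 := by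
      rw [← hxn]; rfl
    have han : a ^ n ∈ Subgroup.zpowers g₀ := (QuotientGroup.eq_one_iff _).mp this
    exact (QuotientGroup.eq_one_iff _).mpr (hiso' a n hn han)
  · -- abelian
    intro x y
    obtain ⟨a, rfl⟩ := QuotientGroup.mk_surjective x
    obtain ⟨b, rfl⟩ := QuotientGroup.mk_surjective y
    show ((a * b : G) : G ⧸ Subgroup.zpowers g₀) = ((b * a : G) : G ⧸ Subgroup.zpowers g₀)
    rw [QuotientGroup.eq]
    apply hCle
    have := Subgroup.commutator_mem_commutator (Subgroup.mem_top b⁻¹) (Subgroup.mem_top a⁻¹)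
    rw [← commutator_def] at this
    simpa [commutatorElement_def, mul_assoc] using this
end

section
/- Let 𝒩 be the semidirect product ℤ³ ⋊_φ ℤ², where φ : ℤ² → GL₃(ℤ) sends (1,0) to I₃ + E₁₃ and (0,1) to I₃ + E₂₃. Then 𝒩 admits a condensed positive cone: there exists a positive cone P of 𝒩 such that for every finite subset F ⊆ P there exists g ∈ 𝒩 with g⁻¹Pg ≠ P and F ⊆ g⁻¹Pg. (Equivalently, E_lo(𝒩) is not smooth.) -/
open Multiplicative

lemma sqrt2_lin {a b : ℤ} (h : (a:ℝ) + Real.sqrt 2 * b = 0) : a = 0 ∧ b = 0 := by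
  by_cases hb : b = 0
  · subst hb; simp at h; exact ⟨mod_cast h, rfl⟩
  · exfalso
    have hb' : (b:ℝ) ≠ 0 := Int.cast_ne_zero.mpr hb
    have h2 : Real.sqrt 2 = ((-a / b : ℚ) : ℝ) := by push_cast; field_simp; linarith
    exact irrational_sqrt_two ⟨-a/b, h2.symm⟩

def cd : ℕ → ℤ × ℤ
  | 0 => (1, 0)
  | n+1 => (2*(cd n).2 - (cd n).1, (cd n).1 - (cd n).2)

lemma sqrt2_sq : Real.sqrt 2 * Real.sqrt 2 = 2 := Real.mul_self_sqrt (by norm_num)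

lemma one_lt_sqrt2 : 1 < Real.sqrt 2 := by
  nlinarith [sqrt2_sq, Real.sqrt_nonneg 2]

lemma sqrt2_lt : Real.sqrt 2 < 3/2 := by
  nlinarith [sqrt2_sq, Real.sqrt_nonneg 2]

lemma cd_spec (n : ℕ) : ((cd n).1 : ℝ) + Real.sqrt 2 * (cd n).2 = (Real.sqrt 2 - 1)^n := by
  induction n with
  | zero => simp [cd]
  | succ n ih =>
    rw [pow_succ, ← ih]
    show ((2*(cd n).2 - (cd n).1 : ℤ) : ℝ) + Real.sqrt 2 * (((cd n).1 - (cd n).2 : ℤ) : ℝ) = _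
    push_cast
    linear_combination (-((cd n).2 : ℝ)) * sqrt2_sq

section ActionLemma

variable (φ : Multiplicative (Fin 2 → ℤ) →* MulAut (Multiplicative (Fin 3 → ℤ)))

lemma key_action
    (hg0 : ∀ w : Fin 3 → ℤ, φ (ofAdd (Pi.single (0 : Fin 2) 1)) (ofAdd w)
      = ofAdd (fun i => w i + (if i = 0 then w 2 else 0)))
    (hg1 : ∀ w : Fin 3 → ℤ, φ (ofAdd (Pi.single (1 : Fin 2) 1)) (ofAdd w)
      = ofAdd (fun i => w i + (if i = 1 then w 2 else 0))) :
    ∀ (v : Fin 2 → ℤ) (w : Fin 3 → ℤ), φ (ofAdd v) (ofAdd w)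
      = ofAdd (fun i => w i + (if i = 0 then v 0 else if i = 1 then v 1 else 0) * w 2) := by
  have comp : ∀ (a b : Fin 2 → ℤ) (w : Fin 3 → ℤ),
      φ (ofAdd (a + b)) (ofAdd w) = φ (ofAdd a) (φ (ofAdd b) (ofAdd w)) := by
    intro a b w; rw [ofAdd_add, map_mul]; rfl
  have hzero : ∀ w : Fin 3 → ℤ, φ (ofAdd (0 : Fin 2 → ℤ)) (ofAdd w) = ofAdd w := by
    intro w
    have h1 : (ofAdd (0 : Fin 2 → ℤ)) = (1 : Multiplicative (Fin 2 → ℤ)) := rfl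
    rw [h1, map_one]; rfl
  have hpow : ∀ (j : Fin 2),
      (∀ w : Fin 3 → ℤ, φ (ofAdd (Pi.single j 1)) (ofAdd w)
        = ofAdd (fun i => w i + (if (i:ℕ) = (j:ℕ) then w 2 else 0))) →
      ∀ (k : ℤ) (w : Fin 3 → ℤ), φ (ofAdd ((Pi.single j k : Fin 2 → ℤ))) (ofAdd w)
      = ofAdd (fun i => w i + (if (i:ℕ) = (j:ℕ) then k * w 2 else 0)) := by
    intro j hgj k
    have h2j : (2 : ℕ) ≠ (j : ℕ) := by
      have hj := j.is_lt
      omega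
    have hgneg : ∀ w : Fin 3 → ℤ, φ (ofAdd ((Pi.single j (-1) : Fin 2 → ℤ))) (ofAdd w)
        = ofAdd (fun i => w i + (if (i:ℕ) = (j:ℕ) then -w 2 else 0)) := by
      intro w
      set w' : Fin 3 → ℤ := fun i => w i + (if (i:ℕ) = (j:ℕ) then -w 2 else 0) with hw'
      have hrt : φ (ofAdd (Pi.single j 1)) (ofAdd w') = ofAdd w := by
        rw [hgj w']
        congr 1
        funext i
        by_cases hij : (i:ℕ) = (j:ℕ) <;> simp [hw', hij, h2j]
      have hcm := comp (Pi.single j (-1) : Fin 2 → ℤ) (Pi.single j 1) w'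
      rw [hrt] at hcm
      rw [← hcm]
      have hsum : (Pi.single j (-1) : Fin 2 → ℤ) + Pi.single j 1 = 0 := by
        funext i
        by_cases hij : i = j
        · subst hij; simp
        · simp [hij]
      rw [hsum, hzero]
    induction k using Int.induction_on with
    | zero =>
      intro w
      have h0 : (Pi.single j (0:ℤ) : Fin 2 → ℤ) = 0 := Pi.single_zero j
      rw [h0, hzero]
      congr 1; funext i; by_cases hij : (i:ℕ) = (j:ℕ) <;> simp [hij]
    | succ k ih =>
      intro w
      have hsum : (Pi.single j ((k:ℤ)+1) : Fin 2 → ℤ)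
          = Pi.single j (k:ℤ) + Pi.single j 1 := by
        funext i
        by_cases hij : i = j
        · subst hij; simp
        · simp [hij]
      rw [hsum, comp, hgj w, ih]
      congr 1; funext i
      by_cases hij : (i:ℕ) = (j:ℕ) <;> simp [hij, h2j] <;> ring
    | pred k ih =>
      intro w
      have hsum : (Pi.single j (-(k:ℤ)-1) : Fin 2 → ℤ)
          = Pi.single j (-(k:ℤ)) + Pi.single j (-1) := by
        funext i
        by_cases hij : i = j
        · subst hij; simp; ring
        · simp [hij]
      rw [hsum, comp, hgneg w, ih]
      congr 1; funext i
      by_cases hij : (i:ℕ) = (j:ℕ) <;> simp [hij, h2j] <;> ring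
  intro v w
  have hv : v = Pi.single (0 : Fin 2) (v 0) + Pi.single (1 : Fin 2) (v 1) := by
    funext i; fin_cases i <;> simp
  have k0 := hpow 0 (by
    intro w
    rw [hg0 w]
    congr 1
    funext i
    fin_cases i <;> simp)
  have k1 := hpow 1 (by
    intro w
    rw [hg1 w]
    congr 1
    funext i
    fin_cases i <;> simp)
  rw [hv, comp, k1, k0]
  congr 1; funext i
  fin_cases i <;> simp <;> ring

end ActionLemma

/-- The semidirect product `ℤ³ ⋊_φ ℤ²`, where `φ` sends `(1,0)` to `I₃ + E₁₃` and `(0,1)`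
to `I₃ + E₂₃` (acting on `ℤ³` by matrix-vector multiplication), admits a condensed
positive cone. -/
theorem semidirect_product_has_condensed_cone
    (φ : Multiplicative (Fin 2 → ℤ) →* MulAut (Multiplicative (Fin 3 → ℤ)))
    (hφ1 : ∀ w : Fin 3 → ℤ,
      (φ (Multiplicative.ofAdd (Pi.single 0 1)) (Multiplicative.ofAdd w)).toAdd =
        ((1 : Matrix (Fin 3) (Fin 3) ℤ) + Matrix.single 0 2 1).mulVec w)
    (hφ2 : ∀ w : Fin 3 → ℤ,
      (φ (Multiplicative.ofAdd (Pi.single 1 1)) (Multiplicative.ofAdd w)).toAdd =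
        ((1 : Matrix (Fin 3) (Fin 3) ℤ) + Matrix.single 1 2 1).mulVec w) :
    ∃ P : Set (SemidirectProduct (Multiplicative (Fin 3 → ℤ))
        (Multiplicative (Fin 2 → ℤ)) φ),
      IsPositiveCone P ∧ IsCondensedCone P := by
  classical
  set G := SemidirectProduct (Multiplicative (Fin 3 → ℤ)) (Multiplicative (Fin 2 → ℤ)) φ
    with hG
  -- the action of φ on generators, in convenient form
  have hg0 : ∀ w : Fin 3 → ℤ, φ (ofAdd (Pi.single (0 : Fin 2) 1)) (ofAdd w)
      = ofAdd (fun i => w i + (if i = 0 then w 2 else 0)) := by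
    intro w
    apply Multiplicative.toAdd.injective
    rw [hφ1 w]
    funext i
    fin_cases i <;>
      simp [Matrix.mulVec, Matrix.one_apply, Matrix.single, Fin.sum_univ_three,
        dotProduct]
  have hg1 : ∀ w : Fin 3 → ℤ, φ (ofAdd (Pi.single (1 : Fin 2) 1)) (ofAdd w)
      = ofAdd (fun i => w i + (if i = 1 then w 2 else 0)) := by
    intro w
    apply Multiplicative.toAdd.injective
    rw [hφ2 w]
    funext i
    fin_cases i <;>
      simp [Matrix.mulVec, Matrix.one_apply, Matrix.single, Fin.sum_univ_three,
        dotProduct]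
  have key := key_action φ hg0 hg1
  -- the two functionals
  set Lf : (Fin 2 → ℤ) → ℝ := fun v => (v 0 : ℝ) + Real.sqrt 2 * (v 1 : ℝ) with hLf
  set lf : (Fin 3 → ℤ) → ℝ :=
    fun w => (w 0 : ℝ) + Real.sqrt 2 * ((w 1 : ℝ) + (w 2 : ℝ)) with hlf
  have hLadd : ∀ v v' : Fin 2 → ℤ, Lf (v + v') = Lf v + Lf v' := by
    intro v v'; simp only [hLf, Pi.add_apply]; push_cast; ring
  have hladd : ∀ w w' : Fin 3 → ℤ, lf (w + w') = lf w + lf w' := by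
    intro w w'; simp only [hlf, Pi.add_apply]; push_cast; ring
  have hLneg : ∀ v : Fin 2 → ℤ, Lf (-v) = - Lf v := by
    intro v; simp only [hLf, Pi.neg_apply]; push_cast; ring
  have hlneg : ∀ w : Fin 3 → ℤ, lf (-w) = - lf w := by
    intro w; simp only [hlf, Pi.neg_apply]; push_cast; ring
  have hLzero : Lf 0 = 0 := by simp [hLf]
  have hlzero : lf 0 = 0 := by simp [hlf]
  have hLeq0 : ∀ v : Fin 2 → ℤ, Lf v = 0 → v = 0 := by
    intro v hv
    obtain ⟨h0, h1⟩ := sqrt2_lin hv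
    funext i; fin_cases i <;> simp [h0, h1]
  have hleq0 : ∀ w : Fin 3 → ℤ, lf w = 0 → w 2 = 0 → w = 0 := by
    intro w hw h2
    have hw' : ((w 0 : ℤ) : ℝ) + Real.sqrt 2 * ((w 1 + w 2 : ℤ) : ℝ) = 0 := by
      push_cast; simpa [hlf] using hw
    obtain ⟨h0, h12⟩ := sqrt2_lin hw'
    have h1 : w 1 = 0 := by omega
    funext i; fin_cases i <;> simp [h0, h1, h2]
  -- the positive cone
  set P : Set G := {p | 0 < Lf p.right.toAdd ∨
      (p.right.toAdd = 0 ∧ (0 < lf p.left.toAdd ∨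
        (lf p.left.toAdd = 0 ∧ 0 < p.left.toAdd 2)))} with hP
  -- structural facts
  have htriv : ∀ p : G, p.right.toAdd = 0 → p.right = 1 := by
    intro p h
    apply Multiplicative.toAdd.injective
    simpa using h
  have hr_mul : ∀ a b : G, (a * b).right.toAdd = a.right.toAdd + b.right.toAdd := by
    intro a b; rw [SemidirectProduct.mul_right]; simp
  have hinv_right : ∀ a : G, (a⁻¹).right.toAdd = - a.right.toAdd := by
    intro a; rw [SemidirectProduct.inv_right]; simp
  have hl_mul0 : ∀ a b : G, a.right = 1 →
      (a * b).left.toAdd = a.left.toAdd + b.left.toAdd := by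
    intro a b ha
    rw [SemidirectProduct.mul_left, ha, map_one]
    simp
  have hinv_left0 : ∀ a : G, a.right = 1 → (a⁻¹).left.toAdd = - a.left.toAdd := by
    intro a ha
    rw [SemidirectProduct.inv_left, ha, inv_one, map_one]
    simp
  refine ⟨P, ⟨?_, ?_, ?_, ?_⟩, ?_⟩
  · -- closure under multiplication
    intro a ha b hb
    rcases ha with hA | ⟨hav, hA⟩ <;> rcases hb with hB | ⟨hbv, hB⟩
    · exact Or.inl (by rw [hr_mul, hLadd]; linarith)
    · exact Or.inl (by rw [hr_mul, hLadd, hbv, hLzero]; linarith)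
    · exact Or.inl (by rw [hr_mul, hLadd, hav, hLzero]; linarith)
    · have hra : a.right = 1 := htriv a hav
      have hlab := hl_mul0 a b hra
      have hlab2 : (a * b).left.toAdd 2 = a.left.toAdd 2 + b.left.toAdd 2 := by
        rw [hlab]; simp
      refine Or.inr ⟨by rw [hr_mul, hav, hbv, add_zero], ?_⟩
      rw [hlab, hladd]
      simp only [Pi.add_apply]
      rcases hA with hA | ⟨hA0, hA2⟩ <;> rcases hB with hB | ⟨hB0, hB2⟩
      · exact Or.inl (by linarith)
      · exact Or.inl (by linarith)
      · exact Or.inl (by linarith)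
      · exact Or.inr ⟨by linarith, by omega⟩
  · -- trichotomy
    intro g
    rcases lt_trichotomy 0 (Lf g.right.toAdd) with h | h | h
    · exact Or.inl (Or.inl h)
    · have hv : g.right.toAdd = 0 := hLeq0 _ h.symm
      have hgr : g.right = 1 := htriv g hv
      have hvinv : (g⁻¹).right.toAdd = 0 := by rw [hinv_right, hv, neg_zero]
      have hlinv : (g⁻¹).left.toAdd = - g.left.toAdd := hinv_left0 g hgr
      rcases lt_trichotomy 0 (lf g.left.toAdd) with h' | h' | h'
      · exact Or.inl (Or.inr ⟨hv, Or.inl h'⟩)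
      · rcases lt_trichotomy 0 (g.left.toAdd 2) with h'' | h'' | h''
        · exact Or.inl (Or.inr ⟨hv, Or.inr ⟨h'.symm, h''⟩⟩)
        · refine Or.inr (Or.inr ?_)
          have hw0 : g.left.toAdd = 0 := hleq0 _ h'.symm h''.symm
          have hgl : g.left = 1 := by
            apply Multiplicative.toAdd.injective
            simpa using hw0
          exact SemidirectProduct.ext hgl hgr
        · refine Or.inr (Or.inl (Or.inr ⟨hvinv, Or.inr ⟨?_, ?_⟩⟩))
          · rw [hlinv, hlneg, ← h', neg_zero]
          · rw [hlinv]; simpa using h''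
      · refine Or.inr (Or.inl (Or.inr ⟨hvinv, Or.inl ?_⟩))
        rw [hlinv, hlneg]; linarith
    · refine Or.inr (Or.inl (Or.inl ?_))
      rw [hinv_right, hLneg]; linarith
  · -- asymmetry
    intro g hg hginv
    rcases hg with hA | ⟨hav, hA⟩ <;> rcases hginv with hB | ⟨hbv, hB⟩
    · rw [hinv_right, hLneg] at hB; linarith
    · rw [hinv_right] at hbv
      have : g.right.toAdd = 0 := by
        have := congrArg Neg.neg hbv
        simpa using this
      rw [this, hLzero] at hA; linarith
    · have : (g⁻¹).right.toAdd = 0 := by rw [hinv_right, hav, neg_zero]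
      rw [this, hLzero] at hB; linarith
    · have hgr : g.right = 1 := htriv g hav
      have hlinv : (g⁻¹).left.toAdd = - g.left.toAdd := hinv_left0 g hgr
      rw [hlinv, hlneg] at hB
      have hB2 : (- g.left.toAdd) 2 = - (g.left.toAdd 2) := by simp
      rcases hA with hA | ⟨hA0, hA2⟩ <;> rcases hB with hB | ⟨hB0, hB2'⟩
      · linarith
      · linarith
      · linarith
      · rw [hB2] at hB2'; omega
  · -- 1 ∉ P
    intro h
    rcases h with h | ⟨_, h⟩
    · have : (1 : G).right.toAdd = 0 := by simp
      rw [this, hLzero] at h; linarith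
    · have h1 : (1 : G).left.toAdd = 0 := by simp
      rw [h1] at h
      rcases h with h | ⟨_, h⟩
      · rw [hlzero] at h; linarith
      · simp at h
  · -- condensedness
    intro F hF
    -- a positive lower bound from the finite set
    set bnd : G → ℝ := fun p => if 0 < lf p.left.toAdd ∧ p.left.toAdd 2 < 0
        then lf p.left.toAdd / (-(p.left.toAdd 2 : ℝ)) else 1 with hbnd
    have hbndpos : ∀ p : G, 0 < bnd p := by
      intro p
      by_cases h : 0 < lf p.left.toAdd ∧ p.left.toAdd 2 < 0
      · rw [hbnd]; simp only [if_pos h]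
        apply div_pos h.1
        have : ((p.left.toAdd 2 : ℤ) : ℝ) < 0 := by exact_mod_cast h.2
        linarith
      · rw [hbnd]; simp only [if_neg h]; norm_num
    set S : Finset ℝ := insert 1 (F.image bnd) with hS
    have hSne : S.Nonempty := ⟨1, Finset.mem_insert_self 1 _⟩
    set ε := S.min' hSne with hε
    have hεpos : 0 < ε := by
      have hmem := S.min'_mem hSne
      rw [← hε] at hmem
      rw [hS] at hmem
      rcases Finset.mem_insert.mp hmem with h | h
      · rw [h]; norm_num
      · obtain ⟨p, _, hp⟩ := Finset.mem_image.mp h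
        rw [← hp]; exact hbndpos p
    obtain ⟨n, hn⟩ : ∃ n, (Real.sqrt 2 - 1)^n < ε :=
      exists_pow_lt_of_lt_one hεpos (by nlinarith [sqrt2_lt])
    set δ := (Real.sqrt 2 - 1)^n with hδdef
    have hδpos : 0 < δ := pow_pos (by nlinarith [one_lt_sqrt2]) n
    set r : Fin 2 → ℤ := fun i => if i = 0 then (cd n).1 else (cd n).2 with hr
    have hδr : ((r 0 : ℝ) + Real.sqrt 2 * (r 1 : ℝ)) = δ := by
      rw [hr]; simpa using cd_spec n
    set g : G := ⟨1, ofAdd r⟩ with hgdef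
    -- the conjugation formula
    have hconj : ∀ x : G, g * x * g⁻¹ =
        (⟨ofAdd (fun i => x.left.toAdd i +
          (if i = 0 then r 0 else if i = 1 then r 1 else 0) * x.left.toAdd 2),
          x.right⟩ : G) := by
      intro x
      apply SemidirectProduct.ext
      · rw [SemidirectProduct.mul_left, SemidirectProduct.mul_left,
          SemidirectProduct.inv_left]
        have hgl : g.left = 1 := rfl
        have hgr : g.right = ofAdd r := rfl
        rw [hgl, inv_one, map_one, map_one, mul_one, one_mul, hgr]
        rw [show x.left = ofAdd x.left.toAdd from rfl, key r x.left.toAdd]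
        simp
      · rw [SemidirectProduct.mul_right, SemidirectProduct.mul_right,
          SemidirectProduct.inv_right]
        have hgr : g.right = ofAdd r := rfl
        rw [mul_comm g.right x.right, mul_inv_cancel_right]
    have hmemcc : ∀ x : G, x ∈ conjCone g P ↔ g * x * g⁻¹ ∈ P := by
      intro x
      constructor
      · rintro ⟨p, hp, rfl⟩
        have hgp : g * (g⁻¹ * p * g) * g⁻¹ = p := by
          have e : g * g⁻¹ = 1 := mul_inv_cancel g
          have e2 : ∀ y : G, g * (g⁻¹ * y) = y := fun y => mul_inv_cancel_left g y
          simp only [mul_assoc, e, mul_one, e2]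
        rw [hgp]; exact hp
      · intro h
        exact ⟨g * x * g⁻¹, h, by
          have e : g⁻¹ * g = 1 := inv_mul_cancel g
          have e2 : ∀ y : G, g⁻¹ * (g * y) = y := fun y => inv_mul_cancel_left g y
          simp only [mul_assoc, e, mul_one, e2]⟩
    -- the shifted functional
    have hshift : ∀ w : Fin 3 → ℤ,
        lf (fun i => w i + (if i = 0 then r 0 else if i = 1 then r 1 else 0) * w 2)
          = lf w + δ * (w 2 : ℝ) := by
      intro w
      rw [hlf]
      simp only
      rw [← hδr]
      push_cast
      ring
    refine ⟨g, ?_, ?_⟩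
    · -- conjCone g P ≠ P
      obtain ⟨m, hm⟩ := exists_nat_ge (1/δ)
      have hm1 : (1 : ℝ) ≤ δ * m := by
        rw [div_le_iff₀ hδpos] at hm; linarith
      have hmne : (m : ℝ) ≠ 0 := by
        intro h; rw [h, mul_zero] at hm1; linarith
      have hm0 : m ≠ 0 := by exact_mod_cast hmne
      have hmpos : (0:ℝ) < m := lt_of_le_of_ne (Nat.cast_nonneg m) (Ne.symm hmne)
      set A : ℤ := ⌈Real.sqrt 2 * m⌉ with hA
      have hirr : Irrational (Real.sqrt 2 * m) := irrational_sqrt_two.mul_natCast hm0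
      have hA1 : Real.sqrt 2 * m < A := lt_of_le_of_ne (Int.le_ceil _) (hirr.ne_int A)
      have hA2 : (A:ℝ) < Real.sqrt 2 * m + δ * m :=
        lt_of_lt_of_le (Int.ceil_lt_add_one _) (by linarith)
      set wx : Fin 3 → ℤ := fun i => if i = 0 then A else if i = 1 then 0 else -(m:ℤ)
        with hwx
      set x : G := ⟨ofAdd wx, 1⟩ with hx
      have hwx0 : wx 0 = A := by norm_num [hwx]
      have hwx1 : wx 1 = 0 := by norm_num [hwx]
      have hwx2 : wx 2 = -(m:ℤ) := by simp [hwx]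
      have hx_lf : lf wx = A - Real.sqrt 2 * m := by
        rw [hlf]; simp only [hwx0, hwx1, hwx2]; push_cast; ring
      have hxl : x.left.toAdd = wx := by rw [hx]; simp
      have hxr : x.right.toAdd = 0 := by rw [hx]; simp
      have hxP : x ∈ P := by
        refine Or.inr ⟨hxr, Or.inl ?_⟩
        rw [hxl, hx_lf]; linarith
      have hxnot : x ∉ conjCone g P := by
        rw [hmemcc, hconj]
        intro hmem
        rcases hmem with h | ⟨_, h⟩
        · rw [hxr, hLzero] at h; linarith
        · rw [hxl] at h
          simp only [toAdd_ofAdd] at h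
          rw [hshift wx, hx_lf, hwx2] at h
          have hcast : ((-(m:ℤ) : ℤ) : ℝ) = -(m:ℝ) := by push_cast; ring
          rw [hcast] at h
          rcases h with h | ⟨h, _⟩ <;> nlinarith
      intro heq
      rw [heq] at hxnot
      exact hxnot hxP
    · -- F ⊆ conjCone g P
      intro p hp
      have hpP := hF hp
      rw [hmemcc, hconj]
      rcases hpP with h | ⟨hv, hcase⟩
      · exact Or.inl h
      · refine Or.inr ⟨hv, Or.inl ?_⟩
        simp only [toAdd_ofAdd]
        rw [hshift]
        rcases hcase with hlw | ⟨hlw0, hlw2⟩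
        · by_cases hw2 : (0:ℝ) ≤ (p.left.toAdd 2 : ℝ)
          · nlinarith
          · push_neg at hw2
            have hw2' : p.left.toAdd 2 < 0 := by exact_mod_cast hw2
            have hbp : bnd p = lf p.left.toAdd / (-(p.left.toAdd 2 : ℝ)) := by
              rw [hbnd]; simp only [if_pos (And.intro hlw hw2')]
            have hle : ε ≤ bnd p := by
              apply Finset.min'_le
              rw [hS]
              exact Finset.mem_insert_of_mem (Finset.mem_image_of_mem bnd hp)
            have hδb : δ < lf p.left.toAdd / (-(p.left.toAdd 2 : ℝ)) := by
              rw [← hbp]; linarith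
            have hpos : (0:ℝ) < -(p.left.toAdd 2 : ℝ) := by linarith
            rw [lt_div_iff₀ hpos] at hδb
            nlinarith
        · have : (0:ℝ) < (p.left.toAdd 2 : ℝ) := by exact_mod_cast hlw2
          nlinarith
end

section
/- The group N₄ of 4×4 lower triangular integer matrices with all diagonal entries 1 admits a condensed positive cone: there exists a positive cone P of N₄ such that for every finite subset F ⊆ P there exists g ∈ N₄ with g⁻¹Pg ≠ P and F ⊆ g⁻¹Pg. (Equivalently, E_lo(N₄) is not smooth.) -/
open Matrix

/-- The pattern of a lower unitriangular matrix: ones on the diagonal and zeros above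
the diagonal. -/
def IsUniLower (k : ℕ) (M : Matrix (Fin k) (Fin k) ℤ) : Prop :=
  (∀ i, M i i = 1) ∧ ∀ i j : Fin k, i < j → M i j = 0

namespace IsUniLower

variable {k : ℕ}

lemma one (k : ℕ) : IsUniLower k 1 := by
  constructor
  · intro i; simp
  · intro i j hij; exact Matrix.one_apply_ne (Fin.ne_of_lt hij)

lemma mul {M N : Matrix (Fin k) (Fin k) ℤ}
    (hM : IsUniLower k M) (hN : IsUniLower k N) : IsUniLower k (M * N) := by
  constructor
  · intro i
    rw [Matrix.mul_apply, Finset.sum_eq_single i]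
    · rw [hM.1, hN.1, one_mul]
    · intro l _ hl
      rcases lt_or_gt_of_ne hl with h | h
      · rw [hN.2 l i h, mul_zero]
      · rw [hM.2 i l h, zero_mul]
    · intro hi; exact absurd (Finset.mem_univ i) hi
  · intro i j hij
    rw [Matrix.mul_apply, Finset.sum_eq_zero]
    intro l _
    rcases lt_or_ge i l with h | h
    · rw [hM.2 i l h, zero_mul]
    · rw [hN.2 l j (lt_of_le_of_lt h hij), mul_zero]

lemma pow_strictLower {X : Matrix (Fin k) (Fin k) ℤ}
    (hX : ∀ i j : Fin k, (i : ℕ) ≤ (j : ℕ) → X i j = 0) :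
    ∀ m : ℕ, ∀ i j : Fin k, (i : ℕ) < (j : ℕ) + m → (X ^ m) i j = 0 := by
  intro m
  induction m with
  | zero =>
    intro i j hij
    rw [pow_zero]
    exact Matrix.one_apply_ne (by intro h; subst h; omega)
  | succ m ih =>
    intro i j hij
    rw [pow_succ, Matrix.mul_apply, Finset.sum_eq_zero]
    intro l _
    rcases le_or_gt (l : ℕ) (j : ℕ) with h | h
    · rw [hX l j h, mul_zero]
    · rw [ih i l (by omega), zero_mul]

lemma pow_eq_zero {X : Matrix (Fin k) (Fin k) ℤ}
    (hX : ∀ i j : Fin k, (i : ℕ) ≤ (j : ℕ) → X i j = 0) : X ^ k = 0 := by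
  ext i j
  rw [Matrix.zero_apply]
  exact pow_strictLower hX k i j (by have := i.isLt; omega)

end IsUniLower

/-- The group `N_k` of `k × k` lower triangular integer matrices with all diagonal
entries equal to `1`, realized as a subgroup of the units of the matrix ring. -/
def Nk (k : ℕ) : Subgroup (Matrix (Fin k) (Fin k) ℤ)ˣ where
  carrier := {U | IsUniLower k U.val}
  one_mem' := IsUniLower.one k
  mul_mem' hA hB := IsUniLower.mul hA hB
  inv_mem' := by
    intro U hU
    replace hU : IsUniLower k U.val := hU
    set M : Matrix (Fin k) (Fin k) ℤ := U.val with hMdef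
    set X : Matrix (Fin k) (Fin k) ℤ := M - 1 with hXdef
    have hX : ∀ i j : Fin k, (i : ℕ) ≤ (j : ℕ) → X i j = 0 := by
      intro i j hij
      rcases eq_or_lt_of_le hij with h | h
      · have : i = j := Fin.ext h
        subst this
        simp [hXdef, Matrix.sub_apply, hU.1 i]
      · have hij' : i < j := h
        have hne : i ≠ j := Fin.ne_of_lt hij'
        simp [hXdef, Matrix.sub_apply, hU.2 i j hij', Matrix.one_apply_ne hne]
    have hXneg : ∀ i j : Fin k, (i : ℕ) ≤ (j : ℕ) → (-X) i j = 0 := by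
      intro i j hij; simp [hX i j hij]
    have hpow : (-X) ^ k = 0 := IsUniLower.pow_eq_zero hXneg
    set N : Matrix (Fin k) (Fin k) ℤ := ∑ j ∈ Finset.range k, (-X) ^ j with hNdef
    have hMX : M = X + 1 := by rw [hXdef]; abel
    have hNM : N * M = 1 := by
      have h1 : N * (-X - 1) = (-X) ^ k - 1 := geom_sum_mul (-X) k
      rw [hpow] at h1
      have h2 : N * (-X - 1) = -(N * M) := by rw [hMX]; noncomm_ring
      rw [h2] at h1
      have := congrArg Neg.neg h1
      simpa using this
    have hMN : M * N = 1 := by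
      have h1 : (-X - 1) * N = (-X) ^ k - 1 := mul_geom_sum (-X) k
      rw [hpow] at h1
      have h2 : (-X - 1) * N = -(M * N) := by rw [hMX]; noncomm_ring
      rw [h2] at h1
      have := congrArg Neg.neg h1
      simpa using this
    have hinv : (U⁻¹).val = N := Units.inv_eq_of_mul_eq_one_right hMN
    show IsUniLower k _
    rw [hinv]
    constructor
    · intro i
      have hk : 0 < k := i.pos
      rw [hNdef, Matrix.sum_apply, Finset.sum_eq_single 0]
      · simp
      · intro m hm hm0
        exact IsUniLower.pow_strictLower hXneg m i i (by omega)
      · intro h; exact absurd (Finset.mem_range.mpr hk) h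
    · intro i j hij
      rw [hNdef, Matrix.sum_apply, Finset.sum_eq_zero]
      intro m _
      exact IsUniLower.pow_strictLower hXneg m i j (by have : (i:ℕ) < (j:ℕ) := hij; omega)




/-! ### Auxiliary construction for the condensed cone on `N₄` -/

namespace CondensedN4

open Matrix Polynomial

/-- The transcendental number used for all irrational slopes. -/
noncomputable def xi : ℝ := liouvilleNumber 3

lemma xi_trans : Transcendental ℤ xi := transcendental_liouvilleNumber (by norm_num)

lemma lin_indep {x y : ℤ} (h : (x : ℝ) + xi * y = 0) : x = 0 ∧ y = 0 := by
  by_cases hy : y = 0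
  · subst hy
    simp at h
    exact ⟨by exact_mod_cast h, rfl⟩
  · exfalso
    apply xi_trans
    refine ⟨Polynomial.C x + Polynomial.C y * Polynomial.X, ?_, ?_⟩
    · intro hp
      apply hy
      have h2 := congrArg (fun p => Polynomial.coeff p 1) hp
      simp only [Polynomial.coeff_add, Polynomial.coeff_C, Polynomial.coeff_C_mul,
        Polynomial.coeff_X, Polynomial.coeff_X_pow, Polynomial.coeff_zero] at h2
      norm_num at h2
      exact h2
    · simp only [map_add, _root_.map_mul, Polynomial.aeval_C, Polynomial.aeval_X]
      simp only [algebraMap_int_eq, eq_intCast]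
      linarith [h]

lemma quad_indep {x a c : ℤ} (h : xi^2 * x + xi * a + c = 0) : x = 0 ∧ a = 0 ∧ c = 0 := by
  by_cases hx : x = 0
  · subst hx
    have h' : (c : ℝ) + xi * a = 0 := by push_cast at h ⊢; linarith
    obtain ⟨hc, ha⟩ := lin_indep h'
    exact ⟨rfl, ha, hc⟩
  · exfalso
    apply xi_trans
    refine ⟨Polynomial.C c + Polynomial.C a * Polynomial.X +
      Polynomial.C x * Polynomial.X^2, ?_, ?_⟩
    · intro hp
      apply hx
      have h2 := congrArg (fun p => Polynomial.coeff p 2) hp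
      simp only [Polynomial.coeff_add, Polynomial.coeff_C, Polynomial.coeff_C_mul,
        Polynomial.coeff_X, Polynomial.coeff_X_pow, Polynomial.coeff_zero] at h2
      norm_num at h2
      exact h2
    · simp only [map_add, _root_.map_mul, _root_.map_pow, Polynomial.aeval_C, Polynomial.aeval_X]
      simp only [algebraMap_int_eq, eq_intCast]
      linarith [h]

lemma dense_xi : Dense ((AddSubgroup.closure {1, xi} : AddSubgroup ℝ) : Set ℝ) := by
  rcases AddSubgroup.dense_or_cyclic (AddSubgroup.closure {1, xi}) with h | ⟨a, ha⟩
  · exact h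
  · exfalso
    have h1 : (1:ℝ) ∈ AddSubgroup.closure ({1, xi} : Set ℝ) :=
      AddSubgroup.subset_closure (by simp)
    have h2 : xi ∈ AddSubgroup.closure ({1, xi} : Set ℝ) :=
      AddSubgroup.subset_closure (by simp)
    rw [ha, AddSubgroup.mem_closure_singleton] at h1 h2
    obtain ⟨n, hn⟩ := h1
    obtain ⟨m, hm⟩ := h2
    rw [zsmul_eq_mul] at hn hm
    have hn0 : n ≠ 0 := by rintro rfl; simp at hn
    apply xi_trans
    refine ⟨Polynomial.C (-m) + Polynomial.C n * Polynomial.X, ?_, ?_⟩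
    · intro hp
      apply hn0
      have h2 := congrArg (fun p => Polynomial.coeff p 1) hp
      simp only [Polynomial.coeff_add, Polynomial.coeff_C, Polynomial.coeff_C_mul,
        Polynomial.coeff_X, Polynomial.coeff_X_pow, Polynomial.coeff_zero] at h2
      norm_num at h2
      exact h2
    · simp only [map_add, _root_.map_mul, Polynomial.aeval_C, Polynomial.aeval_X]
      simp only [algebraMap_int_eq, eq_intCast]
      have key : (n:ℝ) * xi = m := by
        calc (n:ℝ) * xi = (n:ℝ) * ((m:ℝ) * a) := by rw [hm]
          _ = (m:ℝ) * ((n:ℝ) * a) := by ring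
          _ = m := by rw [hn, mul_one]
      push_cast
      linarith

lemma exists_delta (lo hi : ℝ) (h : lo < hi) :
    ∃ m n : ℤ, lo < (m : ℝ) + n * xi ∧ (m : ℝ) + n * xi < hi := by
  obtain ⟨x, hxS, hxI⟩ := dense_xi.exists_mem_open isOpen_Ioo (Set.nonempty_Ioo.mpr h)
  rw [SetLike.mem_coe, AddSubgroup.mem_closure_pair] at hxS
  obtain ⟨m, n, hmn⟩ := hxS
  refine ⟨m, n, ?_, ?_⟩ <;>
    · rw [show (m:ℝ) + n * xi = x by rw [← hmn]; push_cast [zsmul_eq_mul]; ring]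
      first | exact hxI.1 | exact hxI.2

/-- Explicit parametrization of `4 × 4` lower unitriangular matrices. -/
def M6 (x₁ x₂ x₃ a b c : ℤ) : Matrix (Fin 4) (Fin 4) ℤ :=
  !![1,0,0,0; x₁,1,0,0; a,x₂,1,0; c,b,x₃,1]

set_option maxHeartbeats 1000000 in
lemma M6_mul (x₁ x₂ x₃ a b c y₁ y₂ y₃ d e f : ℤ) :
    M6 x₁ x₂ x₃ a b c * M6 y₁ y₂ y₃ d e f =
      M6 (x₁+y₁) (x₂+y₂) (x₃+y₃) (a+d+x₂*y₁) (b+e+x₃*y₂) (c+f+b*y₁+x₃*d) := by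
  ext i j
  fin_cases i <;> fin_cases j <;>
    · simp [M6, Matrix.mul_apply, Fin.sum_univ_succ]
      try ring

lemma M6_one : M6 0 0 0 0 0 0 = 1 := by
  ext i j
  fin_cases i <;> fin_cases j <;> simp [M6, Matrix.one_apply] <;> rfl

lemma M6_mul_inv (x₁ x₂ x₃ a b c : ℤ) :
    M6 x₁ x₂ x₃ a b c *
      M6 (-x₁) (-x₂) (-x₃) (x₂*x₁-a) (x₃*x₂-b) (-c+b*x₁+x₃*a-x₃*x₂*x₁) = 1 := by
  rw [M6_mul, ← M6_one]
  congr 1 <;> ring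

lemma M6_inv_mul (x₁ x₂ x₃ a b c : ℤ) :
    M6 (-x₁) (-x₂) (-x₃) (x₂*x₁-a) (x₃*x₂-b) (-c+b*x₁+x₃*a-x₃*x₂*x₁) *
      M6 x₁ x₂ x₃ a b c = 1 := by
  rw [M6_mul, ← M6_one]
  congr 1 <;> ring

lemma M6_isUniLower (x₁ x₂ x₃ a b c : ℤ) : IsUniLower 4 (M6 x₁ x₂ x₃ a b c) := by
  constructor
  · intro i; fin_cases i <;> rfl
  · intro i j hij
    fin_cases i <;> fin_cases j <;> first | rfl | exact absurd hij (by decide)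

/-- Building an element of `N₄` from the six lower entries. -/
def mkU (x₁ x₂ x₃ a b c : ℤ) : ↥(Nk 4) :=
  ⟨⟨M6 x₁ x₂ x₃ a b c,
    M6 (-x₁) (-x₂) (-x₃) (x₂*x₁-a) (x₃*x₂-b) (-c+b*x₁+x₃*a-x₃*x₂*x₁),
    M6_mul_inv x₁ x₂ x₃ a b c, M6_inv_mul x₁ x₂ x₃ a b c⟩,
   M6_isUniLower x₁ x₂ x₃ a b c⟩

lemma mkU_val (x₁ x₂ x₃ a b c : ℤ) :
    (mkU x₁ x₂ x₃ a b c).val.val = M6 x₁ x₂ x₃ a b c := rfl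

lemma repr (U : ↥(Nk 4)) :
    U.val.val = M6 (U.val.val 1 0) (U.val.val 2 1) (U.val.val 3 2)
      (U.val.val 2 0) (U.val.val 3 1) (U.val.val 3 0) := by
  obtain ⟨hd, hu⟩ := (U.2 : IsUniLower 4 U.val.val)
  ext i j
  fin_cases i <;> fin_cases j <;>
    first | rfl | exact hd _ | exact hu _ _ (by decide)

lemma mul_val (U V : ↥(Nk 4)) : (U * V).val.val = U.val.val * V.val.val := rfl

lemma inv_repr (U : ↥(Nk 4)) {x₁ x₂ x₃ a b c : ℤ} (h : U.val.val = M6 x₁ x₂ x₃ a b c) :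
    (U⁻¹).val.val =
      M6 (-x₁) (-x₂) (-x₃) (x₂*x₁-a) (x₃*x₂-b) (-c+b*x₁+x₃*a-x₃*x₂*x₁) := by
  have h2 : (U⁻¹).val = (U.val)⁻¹ := rfl
  rw [h2]
  exact Units.inv_eq_of_mul_eq_one_right (by rw [h]; exact M6_mul_inv _ _ _ _ _ _)

/-- Top-level functional (on the abelianization coordinates `x₂, x₃`). -/
noncomputable def phix (x₂ x₃ : ℤ) : ℝ := x₂ + xi * x₃

/-- Bottom-level functional on the abelian subgroup `{x₂ = x₃ = b = 0} ≅ ℤ³`. -/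
noncomputable def lamx (x₁ a c : ℤ) : ℝ := xi^2 * x₁ + xi * a + c

lemma phix_add (p r q s : ℤ) : phix (p+q) (r+s) = phix p r + phix q s := by
  unfold phix; push_cast; ring

lemma phix_zero : phix 0 0 = 0 := by unfold phix; push_cast; ring

lemma phix_neg (p r : ℤ) : phix (-p) (-r) = - phix p r := by
  unfold phix; push_cast; ring

lemma lamx_add (x a c y d f : ℤ) :
    lamx (x+y) (a+d) (c+f) = lamx x a c + lamx y d f := by
  unfold lamx; push_cast; ring

lemma lamx_neg (x a c : ℤ) : lamx (-x) (-a) (-c) = - lamx x a c := by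
  unfold lamx; push_cast; ring

/-- The condensed positive cone. -/
noncomputable def Pos : Set ↥(Nk 4) :=
  {U | 0 < phix (U.val.val 2 1) (U.val.val 3 2)
     ∨ (U.val.val 2 1 = 0 ∧ U.val.val 3 2 = 0 ∧ 0 < U.val.val 3 1)
     ∨ (U.val.val 2 1 = 0 ∧ U.val.val 3 2 = 0 ∧ U.val.val 3 1 = 0 ∧
        0 < lamx (U.val.val 1 0) (U.val.val 2 0) (U.val.val 3 0))}

lemma mem_Pos_iff {U : ↥(Nk 4)} {x₁ x₂ x₃ a b c : ℤ}
    (h : U.val.val = M6 x₁ x₂ x₃ a b c) :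
    U ∈ Pos ↔ (0 < phix x₂ x₃ ∨ (x₂ = 0 ∧ x₃ = 0 ∧ 0 < b) ∨
      (x₂ = 0 ∧ x₃ = 0 ∧ b = 0 ∧ 0 < lamx x₁ a c)) := by
  unfold Pos
  rw [Set.mem_setOf_eq, h]
  exact Iff.rfl


lemma exists_repr (U : ↥(Nk 4)) : ∃ p₁ p₂ p₃ pa pb pc : ℤ,
    U.val.val = M6 p₁ p₂ p₃ pa pb pc :=
  ⟨_, _, _, _, _, _, repr U⟩

lemma Pos_mul {U V : ↥(Nk 4)} (hU : U ∈ Pos) (hV : V ∈ Pos) : U * V ∈ Pos := by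
  obtain ⟨p₁, p₂, p₃, pa, pb, pc, hu⟩ := exists_repr U
  obtain ⟨q₁, q₂, q₃, qa, qb, qc, hv⟩ := exists_repr V
  have hprod : (U * V).val.val = M6 (p₁+q₁) (p₂+q₂) (p₃+q₃) (pa+qa+p₂*q₁)
      (pb+qb+p₃*q₂) (pc+qc+pb*q₁+p₃*qa) := by
    rw [mul_val, hu, hv, M6_mul]
  rw [mem_Pos_iff hprod]
  rw [mem_Pos_iff hu] at hU
  rw [mem_Pos_iff hv] at hV
  rcases hU with h1 | ⟨h2, h3, h4⟩ | ⟨h2, h3, h4, h5⟩ <;>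
    rcases hV with g1 | ⟨g2, g3, g4⟩ | ⟨g2, g3, g4, g5⟩
  · exact Or.inl (by rw [phix_add]; linarith)
  · exact Or.inl (by rw [phix_add, g2, g3, phix_zero]; linarith)
  · exact Or.inl (by rw [phix_add, g2, g3, phix_zero]; linarith)
  · exact Or.inl (by rw [phix_add, h2, h3, phix_zero]; linarith)
  · exact Or.inr (Or.inl ⟨by omega, by omega,
      by simp only [h3, zero_mul, add_zero]; omega⟩)
  · exact Or.inr (Or.inl ⟨by omega, by omega,
      by simp only [h3, g4, zero_mul, add_zero]; omega⟩)
  · exact Or.inl (by rw [phix_add, h2, h3, phix_zero]; linarith)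
  · exact Or.inr (Or.inl ⟨by omega, by omega,
      by simp only [h3, h4, zero_mul, add_zero, zero_add]; omega⟩)
  · refine Or.inr (Or.inr ⟨by omega, by omega,
      by simp only [h3, h4, g4, zero_mul, add_zero], ?_⟩)
    have e1 : pa + qa + p₂ * q₁ = pa + qa := by rw [h2]; ring
    have e2 : pc + qc + pb * q₁ + p₃ * qa = pc + qc := by rw [h3, h4]; ring
    rw [e1, e2, lamx_add]
    linarith

lemma Pos_tri (U : ↥(Nk 4)) : U ∈ Pos ∨ U⁻¹ ∈ Pos ∨ U = 1 := by
  obtain ⟨p₁, p₂, p₃, pa, pb, pc, hu⟩ := exists_repr U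
  rw [mem_Pos_iff hu, mem_Pos_iff (inv_repr U hu)]
  rcases lt_trichotomy (0:ℝ) (phix p₂ p₃) with h | h | h
  · exact Or.inl (Or.inl h)
  · obtain ⟨hx2, hx3⟩ := lin_indep (show (p₂:ℝ) + xi * p₃ = 0 from h.symm)
    rcases lt_trichotomy (0:ℤ) pb with hb | hb | hb
    · exact Or.inl (Or.inr (Or.inl ⟨hx2, hx3, hb⟩))
    · rcases lt_trichotomy (0:ℝ) (lamx p₁ pa pc) with hl | hl | hl
      · exact Or.inl (Or.inr (Or.inr ⟨hx2, hx3, hb.symm, hl⟩))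
      · obtain ⟨e1, e2, e3⟩ := quad_indep (show xi^2 * p₁ + xi * pa + pc = 0 from hl.symm)
        refine Or.inr (Or.inr ?_)
        apply Subtype.ext
        apply Units.ext
        show U.val.val = 1
        rw [hu, hx2, hx3, ← hb, e1, e2, e3]
        exact M6_one
      · refine Or.inr (Or.inl (Or.inr (Or.inr ⟨by omega, by omega, by rw [hx3, ← hb]; ring, ?_⟩)))
        have e1 : p₂ * p₁ - pa = -pa := by rw [hx2]; ring
        have e2 : -pc + pb * p₁ + p₃ * pa - p₃ * p₂ * p₁ = -pc := by
          rw [hx3, ← hb]; ring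
        rw [e1, e2, lamx_neg]
        linarith
    · refine Or.inr (Or.inl (Or.inr (Or.inl ⟨by omega, by omega, ?_⟩)))
      have e1 : p₃ * p₂ - pb = -pb := by rw [hx3]; ring
      rw [e1]
      omega
  · refine Or.inr (Or.inl (Or.inl ?_))
    rw [phix_neg]
    linarith

lemma Pos_disjoint (U : ↥(Nk 4)) (hU : U ∈ Pos) (hUi : U⁻¹ ∈ Pos) : False := by
  obtain ⟨p₁, p₂, p₃, pa, pb, pc, hu⟩ := exists_repr U
  rw [mem_Pos_iff hu] at hU
  rw [mem_Pos_iff (inv_repr U hu)] at hUi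
  rcases hU with h1 | ⟨h2, h3, h4⟩ | ⟨h2, h3, h4, h5⟩ <;>
    rcases hUi with g1 | ⟨g2, g3, g4⟩ | ⟨g2, g3, g4, g5⟩
  · rw [phix_neg] at g1; linarith
  · have : p₂ = 0 := by omega
    have : p₃ = 0 := by omega
    rw [‹p₂ = 0›, ‹p₃ = 0›, phix_zero] at h1
    linarith
  · have : p₂ = 0 := by omega
    have : p₃ = 0 := by omega
    rw [‹p₂ = 0›, ‹p₃ = 0›, phix_zero] at h1
    linarith
  · rw [h2, h3, neg_zero, phix_zero] at g1
    linarith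
  · have e1 : p₃ * p₂ - pb = -pb := by rw [h3]; ring
    rw [e1] at g4
    omega
  · have e1 : p₃ * p₂ - pb = -pb := by rw [h3]; ring
    rw [e1] at g4
    omega
  · rw [h2, h3, neg_zero, phix_zero] at g1
    linarith
  · have e1 : p₃ * p₂ - pb = -pb := by rw [h3]; ring
    rw [e1] at g4
    omega
  · have e1 : p₂ * p₁ - pa = -pa := by rw [h2]; ring
    have e2 : -pc + pb * p₁ + p₃ * pa - p₃ * p₂ * p₁ = -pc := by rw [h3, h4]; ring
    rw [e1, e2, lamx_neg] at g5
    linarith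

lemma one_notin_Pos : (1 : ↥(Nk 4)) ∉ Pos := by
  have h1 : (1 : ↥(Nk 4)).val.val = M6 0 0 0 0 0 0 := by rw [M6_one]; rfl
  rw [mem_Pos_iff h1]
  rintro (h | ⟨-, -, h⟩ | ⟨-, -, -, h⟩)
  · rw [phix_zero] at h; linarith
  · omega
  · have hz : lamx 0 0 0 = 0 := by unfold lamx; push_cast; ring
    rw [hz] at h; linarith

lemma Pos_isPositiveCone : IsPositiveCone Pos :=
  ⟨fun _ ha _ hb => Pos_mul ha hb, Pos_tri, Pos_disjoint, one_notin_Pos⟩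


lemma mem_conjCone {G : Type*} [Group G] (g q : G) (P : Set G) :
    q ∈ conjCone g P ↔ g * q * g⁻¹ ∈ P := by
  constructor
  · rintro ⟨p, hp, rfl⟩
    convert hp using 1
    group
  · intro h
    exact ⟨g * q * g⁻¹, h, by group⟩

lemma finset_eps {α : Type*} (F : Finset α) (Q : α → ℝ → Prop)
    (h : ∀ f ∈ F, ∃ ε > 0, ∀ δ : ℝ, |δ| < ε → Q f δ) :
    ∃ ε > 0, ∀ f ∈ F, ∀ δ : ℝ, |δ| < ε → Q f δ := by
  classical
  induction F using Finset.induction_on with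
  | empty => exact ⟨1, one_pos, by simp⟩
  | @insert a s hni ih =>
    obtain ⟨ε₁, hε₁, h₁⟩ := h a (Finset.mem_insert_self a s)
    obtain ⟨ε₂, hε₂, h₂⟩ := ih (fun f hf => h f (Finset.mem_insert_of_mem hf))
    refine ⟨min ε₁ ε₂, lt_min hε₁ hε₂, ?_⟩
    intro f hf δ hδ
    rcases Finset.mem_insert.mp hf with rfl | hf'
    · exact h₁ δ (lt_of_lt_of_le hδ (min_le_left _ _))
    · exact h₂ f hf' δ (lt_of_lt_of_le hδ (min_le_right _ _))

lemma Pos_isCondensed : IsCondensedCone Pos := by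
  intro F hF
  have key : ∀ f ∈ F, ∃ ε > 0, ∀ δ : ℝ, |δ| < ε →
      (0 < phix (f.val.val 2 1) (f.val.val 3 2) ∨
       (f.val.val 2 1 = 0 ∧ f.val.val 3 2 = 0 ∧ 0 < f.val.val 3 1) ∨
       (f.val.val 2 1 = 0 ∧ f.val.val 3 2 = 0 ∧ f.val.val 3 1 = 0 ∧
        0 < lamx (f.val.val 1 0) (f.val.val 2 0) (f.val.val 3 0) +
          δ * (f.val.val 1 0 : ℝ))) := by
    intro f hf
    have hfP := hF hf
    rw [mem_Pos_iff (repr f)] at hfP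
    rcases hfP with h1 | h2 | ⟨h3a, h3b, h3c, h3d⟩
    · exact ⟨1, one_pos, fun δ _ => Or.inl h1⟩
    · exact ⟨1, one_pos, fun δ _ => Or.inr (Or.inl h2)⟩
    · by_cases hx : f.val.val 1 0 = 0
      · refine ⟨1, one_pos, fun δ _ => Or.inr (Or.inr ⟨h3a, h3b, h3c, ?_⟩)⟩
        rw [hx] at h3d ⊢
        push_cast
        simpa using h3d
      · have hxne : ((f.val.val 1 0 : ℤ) : ℝ) ≠ 0 := by exact_mod_cast hx
        have habs : (0:ℝ) < |(f.val.val 1 0 : ℝ)| := abs_pos.mpr hxne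
        refine ⟨lamx (f.val.val 1 0) (f.val.val 2 0) (f.val.val 3 0) /
          |(f.val.val 1 0 : ℝ)|, div_pos h3d habs, ?_⟩
        intro δ hδ
        refine Or.inr (Or.inr ⟨h3a, h3b, h3c, ?_⟩)
        have hprod : |δ * (f.val.val 1 0 : ℝ)| <
            lamx (f.val.val 1 0) (f.val.val 2 0) (f.val.val 3 0) := by
          rw [abs_mul]
          calc |δ| * |(f.val.val 1 0 : ℝ)|
              < (lamx (f.val.val 1 0) (f.val.val 2 0) (f.val.val 3 0) /
                  |(f.val.val 1 0 : ℝ)|) * |(f.val.val 1 0 : ℝ)| :=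
                mul_lt_mul_of_pos_right hδ habs
            _ = lamx (f.val.val 1 0) (f.val.val 2 0) (f.val.val 3 0) :=
                div_mul_cancel₀ _ (ne_of_gt habs)
        have hneg := neg_abs_le (δ * (f.val.val 1 0 : ℝ))
        linarith
  obtain ⟨ε, hε, hkey⟩ := finset_eps F _ key
  obtain ⟨m, n, hδ1, hδ2⟩ := exists_delta 0 ε hε
  have hginv : ((mkU 0 n 0 0 m 0)⁻¹).val.val = M6 0 (-n) 0 0 (-m) 0 := by
    rw [inv_repr (mkU 0 n 0 0 m 0) (mkU_val 0 n 0 0 m 0)]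
    norm_num
  have conj_repr : ∀ (q : ↥(Nk 4)) (x₁ x₂ x₃ a b c : ℤ),
      q.val.val = M6 x₁ x₂ x₃ a b c →
      (mkU 0 n 0 0 m 0 * q * (mkU 0 n 0 0 m 0)⁻¹).val.val =
        M6 x₁ x₂ x₃ (a + n*x₁) (b - n*x₃) (c + m*x₁) := by
    intro q x₁ x₂ x₃ a b c hq
    rw [mul_val, mul_val, hq, hginv, mkU_val, M6_mul, M6_mul]
    congr 1 <;> ring
  have lam_conj : ∀ x₁ a c : ℤ, lamx x₁ (a + n*x₁) (c + m*x₁) =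
      lamx x₁ a c + ((m:ℝ) + n * xi) * (x₁ : ℝ) := by
    intro x₁ a c
    unfold lamx
    push_cast
    ring
  refine ⟨mkU 0 n 0 0 m 0, ?_, ?_⟩
  · obtain ⟨m', n', hw1, hw2⟩ := exists_delta (xi^2) (xi^2 + ((m:ℝ) + n * xi))
      (by linarith)
    have hqP : mkU (-1) 0 0 n' 0 m' ∈ Pos := by
      rw [mem_Pos_iff (mkU_val (-1) 0 0 n' 0 m')]
      refine Or.inr (Or.inr ⟨rfl, rfl, rfl, ?_⟩)
      unfold lamx
      push_cast
      linarith
    have hqC : mkU (-1) 0 0 n' 0 m' ∉ conjCone (mkU 0 n 0 0 m 0) Pos := by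
      rw [mem_conjCone]
      have hrep := conj_repr (mkU (-1) 0 0 n' 0 m') (-1) 0 0 n' 0 m'
        (mkU_val _ _ _ _ _ _)
      rw [mem_Pos_iff hrep]
      rintro (h | ⟨-, -, h⟩ | ⟨-, -, -, h⟩)
      · rw [phix_zero] at h; linarith
      · simp at h
      · rw [lam_conj] at h
        unfold lamx at h
        push_cast at h
        nlinarith [h, hw2]
    intro hC
    exact hqC (hC.symm ▸ hqP)
  · intro f hf
    refine (mem_conjCone (mkU 0 n 0 0 m 0) f Pos).mpr ?_
    have hrep := conj_repr f _ _ _ _ _ _ (repr f)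
    rw [mem_Pos_iff hrep]
    have hQ := hkey f hf ((m:ℝ) + n * xi) (by rw [abs_of_pos hδ1]; exact hδ2)
    rcases hQ with h1 | h2 | ⟨h3a, h3b, h3c, h3d⟩
    · exact Or.inl h1
    · refine Or.inr (Or.inl ⟨h2.1, h2.2.1, ?_⟩)
      rw [h2.2.1]
      simpa using h2.2.2
    · refine Or.inr (Or.inr ⟨h3a, h3b, ?_, ?_⟩)
      · rw [h3b, h3c]; ring
      · rw [lam_conj]
        exact h3d

end CondensedN4

/-- The group `N₄` of `4 × 4` lower unitriangular integer matrices admits a condensed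
positive cone. -/
theorem N4_has_condensed_cone :
    ∃ P : Set ↥(Nk 4), IsPositiveCone P ∧ IsCondensedCone P :=
  ⟨CondensedN4.Pos, CondensedN4.Pos_isPositiveCone, CondensedN4.Pos_isCondensed⟩
end

section
/- For every k ≥ 1, let ι : N_k → N_{k+1} be the injective group homomorphism sending a matrix B to the block matrix (B 0; 0 1). Then there exists a positive cone Q of N_{k+1} such that the image ι(N_k) is a convex subgroup of N_{k+1} with respect to Q. -/
open Matrix

/-- The block-diagonal embedding `B ↦ (B 0; 0 1)` of `k × k` matrices into
`(k+1) × (k+1)` matrices. -/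
def embMat (k : ℕ) (M : Matrix (Fin k) (Fin k) ℤ) :
    Matrix (Fin (k + 1)) (Fin (k + 1)) ℤ :=
  Matrix.of fun i j =>
    if h : (i : ℕ) < k ∧ (j : ℕ) < k then M ⟨i, h.1⟩ ⟨j, h.2⟩
    else if i = j then 1 else 0

namespace ConeAux

variable {k : ℕ}

lemma mem_nk {m : ℕ} (g : ↥(Nk m)) : IsUniLower m ((g : (Matrix (Fin m) (Fin m) ℤ)ˣ) : Matrix (Fin m) (Fin m) ℤ) := g.2

def LexPos (v : Fin k → ℤ) : Prop := ∃ j, 0 < v j ∧ ∀ j', j < j' → v j' = 0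

lemma LexPos.ne_zero {v : Fin k → ℤ} (h : LexPos v) : v ≠ 0 := by
  obtain ⟨j, hj, -⟩ := h
  intro h0
  rw [h0] at hj
  simp at hj

lemma lexpos_or {v : Fin k → ℤ} (hv : v ≠ 0) : LexPos v ∨ LexPos (-v) := by
  have hex : ∃ j, v j ≠ 0 := Function.ne_iff.mp hv
  set S := Finset.univ.filter (fun j => v j ≠ 0) with hS
  have hne : S.Nonempty := ⟨hex.choose, by simp [hS, hex.choose_spec]⟩
  set j0 := S.max' hne with hj0def
  have hj0 : v j0 ≠ 0 := by
    have : j0 ∈ S := S.max'_mem hne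
    rw [hS, Finset.mem_filter] at this
    exact this.2
  have hz : ∀ j', j0 < j' → v j' = 0 := by
    intro j' hj'
    by_contra h
    exact absurd (S.le_max' j' (by simp [hS, h])) (not_le.mpr hj')
  rcases lt_or_gt_of_ne hj0 with h | h
  · right
    exact ⟨j0, by simpa using h, fun j' hj' => by simp [hz j' hj']⟩
  · left
    exact ⟨j0, h, hz⟩

lemma LexPos.not_neg {v : Fin k → ℤ} (h : LexPos v) : ¬ LexPos (-v) := by
  obtain ⟨j0, h0, hz0⟩ := h
  rintro ⟨j1, h1, hz1⟩
  simp only [Pi.neg_apply] at h1 hz1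
  rcases lt_trichotomy j0 j1 with h | h | h
  · have := hz0 j1 h; omega
  · subst h; omega
  · have := hz1 j0 h; omega

lemma LexPos.add {v w : Fin k → ℤ} (hv : LexPos v) (hw : LexPos w) : LexPos (v + w) := by
  obtain ⟨j0, h0, hz0⟩ := hv
  obtain ⟨j1, h1, hz1⟩ := hw
  refine ⟨max j0 j1, ?_, ?_⟩
  · rcases lt_trichotomy j0 j1 with h | h | h
    · rw [max_eq_right h.le]; have := hz0 j1 h; simp [this]; omega
    · subst h; simp; omega
    · rw [max_eq_left h.le]; have := hz1 j0 h; simp [this]; omega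
  · intro j' hj'
    have := hz0 j' (lt_of_le_of_lt (le_max_left j0 j1) hj')
    have := hz1 j' (lt_of_le_of_lt (le_max_right j0 j1) hj')
    simp [*]


def Rvec (g : ↥(Nk (k + 1))) : Fin k → ℤ :=
  fun j => ((g : (Matrix (Fin (k+1)) (Fin (k+1)) ℤ)ˣ) : Matrix (Fin (k+1)) (Fin (k+1)) ℤ) (Fin.last k) j.castSucc

def blockMat (g : ↥(Nk (k + 1))) : Matrix (Fin k) (Fin k) ℤ :=
  fun i j => ((g : (Matrix (Fin (k+1)) (Fin (k+1)) ℤ)ˣ) : Matrix (Fin (k+1)) (Fin (k+1)) ℤ) i.castSucc j.castSucc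

def mvec (v : Fin k → ℤ) (g : ↥(Nk (k + 1))) : Fin k → ℤ :=
  fun j => ∑ l, v l * blockMat g l j

lemma Rvec_one : Rvec (1 : ↥(Nk (k + 1))) = 0 := by
  funext j
  show (1 : Matrix (Fin (k+1)) (Fin (k+1)) ℤ) (Fin.last k) j.castSucc = 0
  exact Matrix.one_apply_ne (Fin.castSucc_lt_last j).ne'

lemma blockMat_one : blockMat (1 : ↥(Nk (k + 1))) = 1 := by
  funext i j
  show (1 : Matrix (Fin (k+1)) (Fin (k+1)) ℤ) i.castSucc j.castSucc = (1 : Matrix (Fin k) (Fin k) ℤ) i j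
  by_cases h : i = j
  · subst h; simp
  · rw [Matrix.one_apply_ne h, Matrix.one_apply_ne (fun hc => h (Fin.castSucc_injective k hc))]

lemma blockMat_mul (g h : ↥(Nk (k + 1))) : blockMat (g * h) = blockMat g * blockMat h := by
  funext i j
  show ((g : (Matrix (Fin (k+1)) (Fin (k+1)) ℤ)ˣ).val * (h : (Matrix (Fin (k+1)) (Fin (k+1)) ℤ)ˣ).val) i.castSucc j.castSucc = _
  rw [Matrix.mul_apply, Fin.sum_univ_castSucc]
  have hzero : (g : (Matrix (Fin (k+1)) (Fin (k+1)) ℤ)ˣ).val i.castSucc (Fin.last k) = 0 :=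
    (mem_nk g).2 i.castSucc (Fin.last k) (Fin.castSucc_lt_last i)
  rw [hzero, zero_mul, add_zero]
  rfl

lemma Rvec_mul (g h : ↥(Nk (k + 1))) :
    Rvec (g * h) = fun j => mvec (Rvec g) h j + Rvec h j := by
  funext j
  show ((g : (Matrix (Fin (k+1)) (Fin (k+1)) ℤ)ˣ).val * (h : (Matrix (Fin (k+1)) (Fin (k+1)) ℤ)ˣ).val) (Fin.last k) j.castSucc = _
  rw [Matrix.mul_apply, Fin.sum_univ_castSucc]
  have hdiag : (g : (Matrix (Fin (k+1)) (Fin (k+1)) ℤ)ˣ).val (Fin.last k) (Fin.last k) = 1 :=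
    (mem_nk g).1 (Fin.last k)
  rw [hdiag, one_mul]
  rfl

lemma mvec_zero (g : ↥(Nk (k + 1))) : mvec 0 g = 0 := by
  funext j; simp [mvec]

lemma mvec_neg (v : Fin k → ℤ) (g : ↥(Nk (k + 1))) : mvec (-v) g = -(mvec v g) := by
  funext j; simp [mvec, neg_mul, Finset.sum_neg_distrib]

lemma mvec_lexpos {v : Fin k → ℤ} (g : ↥(Nk (k + 1))) (hv : LexPos v) : LexPos (mvec v g) := by
  obtain ⟨j0, h0, hz⟩ := hv
  refine ⟨j0, ?_, ?_⟩
  · show 0 < ∑ l, v l * blockMat g l j0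
    rw [Finset.sum_eq_single j0]
    · have : blockMat g j0 j0 = 1 := (mem_nk g).1 j0.castSucc
      rw [this, mul_one]; exact h0
    · intro l _ hl
      rcases lt_or_gt_of_ne hl with h | h
      · have : blockMat g l j0 = 0 :=
          (mem_nk g).2 l.castSucc j0.castSucc (by exact Fin.castSucc_lt_castSucc_iff.mpr h)
        rw [this, mul_zero]
      · rw [hz l h, zero_mul]
    · intro hj; exact absurd (Finset.mem_univ j0) hj
  · intro j' hj'
    show (∑ l, v l * blockMat g l j') = 0
    apply Finset.sum_eq_zero
    intro l _
    rcases le_or_gt l j0 with h | h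
    · have : blockMat g l j' = 0 :=
        (mem_nk g).2 l.castSucc j'.castSucc (Fin.castSucc_lt_castSucc_iff.mpr (lt_of_le_of_lt h hj'))
      rw [this, mul_zero]
    · rw [hz l h, zero_mul]

lemma mvec_eq_zero {v : Fin k → ℤ} (g : ↥(Nk (k + 1))) (h : mvec v g = 0) : v = 0 := by
  by_contra hv
  rcases lexpos_or hv with hp | hp
  · exact (mvec_lexpos g hp).ne_zero h
  · have := mvec_lexpos g hp
    rw [mvec_neg] at this
    exact this.ne_zero (by rw [h, neg_zero])


lemma blockMat_isUniLower (g : ↥(Nk (k + 1))) : IsUniLower k (blockMat g) := by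
  constructor
  · intro i; exact (mem_nk g).1 i.castSucc
  · intro i j hij
    exact (mem_nk g).2 i.castSucc j.castSucc (Fin.castSucc_lt_castSucc_iff.mpr hij)

def blockUnit (g : ↥(Nk (k + 1))) : (Matrix (Fin k) (Fin k) ℤ)ˣ where
  val := blockMat g
  inv := blockMat g⁻¹
  val_inv := by rw [← blockMat_mul, mul_inv_cancel, blockMat_one]
  inv_val := by rw [← blockMat_mul, inv_mul_cancel, blockMat_one]

def blockHom : ↥(Nk (k + 1)) →* ↥(Nk k) where
  toFun g := ⟨blockUnit g, blockMat_isUniLower g⟩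
  map_one' := by
    apply Subtype.ext
    apply Units.ext
    exact blockMat_one
  map_mul' g h := by
    apply Subtype.ext
    apply Units.ext
    exact blockMat_mul g h

lemma eq_of_parts {g h : ↥(Nk (k + 1))} (hg : Rvec g = 0) (hh : Rvec h = 0)
    (hb : blockMat g = blockMat h) : g = h := by
  apply Subtype.ext
  apply Units.ext
  funext i j
  induction i using Fin.lastCases with
  | last =>
    induction j using Fin.lastCases with
    | last => rw [(mem_nk g).1, (mem_nk h).1]
    | cast j =>
      have h1 : Rvec g j = 0 := by rw [hg]; rfl
      have h2 : Rvec h j = 0 := by rw [hh]; rfl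
      exact h1.trans h2.symm
  | cast i =>
    induction j using Fin.lastCases with
    | last =>
      rw [(mem_nk g).2 i.castSucc (Fin.last k) (Fin.castSucc_lt_last i),
        (mem_nk h).2 i.castSucc (Fin.last k) (Fin.castSucc_lt_last i)]
    | cast j => exact congrFun (congrFun hb i) j

lemma Rvec_inv_mvec (g : ↥(Nk (k + 1))) : mvec (Rvec g⁻¹) g = -(Rvec g) := by
  have h := Rvec_mul g⁻¹ g
  rw [inv_mul_cancel, Rvec_one] at h
  funext j
  have := congrFun h.symm j
  simp only [Pi.zero_apply] at this
  simp only [Pi.neg_apply]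
  omega

lemma Rvec_inv_zero {g : ↥(Nk (k + 1))} (hg : Rvec g = 0) : Rvec g⁻¹ = 0 := by
  have h := Rvec_inv_mvec g
  rw [hg, neg_zero] at h
  exact mvec_eq_zero g h

lemma lexpos_inv {g : ↥(Nk (k + 1))} (hg : LexPos (-(Rvec g))) : LexPos (Rvec g⁻¹) := by
  by_contra hc
  by_cases h0 : Rvec g⁻¹ = 0
  · have h := Rvec_inv_mvec g
    rw [h0, mvec_zero] at h
    exact hg.ne_zero h.symm
  · rcases lexpos_or h0 with hp | hp
    · exact hc hp
    · have := mvec_lexpos g hp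
      rw [mvec_neg, Rvec_inv_mvec] at this
      exact hg.not_neg this


def stepCone (P : Set ↥(Nk k)) : Set ↥(Nk (k + 1)) :=
  {g | LexPos (Rvec g) ∨ (Rvec g = 0 ∧ blockHom g ∈ P)}

lemma blockMat_eq_of_blockHom {g h : ↥(Nk (k + 1))} (he : blockHom g = blockHom h) :
    blockMat g = blockMat h := congrArg (fun x => ((x : ↥(Nk k)) : (Matrix (Fin k) (Fin k) ℤ)ˣ).val) he

theorem stepCone_pos (P : Set ↥(Nk k)) (hP : IsPositiveCone P) :
    IsPositiveCone (stepCone P) := by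
  obtain ⟨hPmul, hPtri, hPdisj, hPone⟩ := hP
  refine ⟨?_, ?_, ?_, ?_⟩
  · intro a ha b hb
    rcases ha with ha | ⟨ha0, haP⟩
    · left
      rw [Rvec_mul]
      rcases hb with hb | ⟨hb0, hbP⟩
      · exact (mvec_lexpos b ha).add hb
      · have := mvec_lexpos b ha
        simpa [hb0] using this
    · rcases hb with hb | ⟨hb0, hbP⟩
      · left
        rw [Rvec_mul, ha0]
        simpa [mvec_zero] using hb
      · right
        constructor
        · rw [Rvec_mul, ha0, hb0]
          funext j; simp [mvec_zero]
        · rw [_root_.map_mul]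
          exact hPmul _ haP _ hbP
  · intro g
    by_cases h0 : Rvec g = 0
    · rcases hPtri (blockHom g) with hp | hp | hp
      · exact Or.inl (Or.inr ⟨h0, hp⟩)
      · refine Or.inr (Or.inl (Or.inr ⟨Rvec_inv_zero h0, ?_⟩))
        rw [_root_.map_inv]
        exact hp
      · refine Or.inr (Or.inr ?_)
        apply eq_of_parts h0 Rvec_one
        have heq : blockHom g = blockHom (1 : ↥(Nk (k + 1))) := by
          rw [hp, _root_.map_one]
        exact blockMat_eq_of_blockHom heq
    · rcases lexpos_or h0 with hp | hp
      · exact Or.inl (Or.inl hp)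
      · exact Or.inr (Or.inl (Or.inl (lexpos_inv hp)))
  · intro g hg hginv
    rcases hg with hg | ⟨hg0, hgP⟩
    · rcases hginv with hi | ⟨hi0, hiP⟩
      · have := mvec_lexpos g hi
        rw [Rvec_inv_mvec] at this
        exact hg.not_neg this
      · have : Rvec g = 0 := by
          have := Rvec_inv_zero hi0
          rwa [inv_inv] at this
        exact hg.ne_zero this
    · rcases hginv with hi | ⟨hi0, hiP⟩
      · exact hi.ne_zero (Rvec_inv_zero hg0)
      · rw [_root_.map_inv] at hiP
        exact hPdisj _ hgP hiP
  · intro h1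
    rcases h1 with h | ⟨-, hP1⟩
    · exact h.ne_zero Rvec_one
    · rw [_root_.map_one] at hP1
      exact hPone hP1

theorem cone_exists : ∀ m : ℕ, ∃ P : Set ↥(Nk m), IsPositiveCone P := by
  intro m
  induction m with
  | zero =>
    refine ⟨∅, ?_, ?_, ?_, ?_⟩
    · intro a ha; exact absurd ha (Set.notMem_empty a)
    · intro g
      refine Or.inr (Or.inr ?_)
      apply Subtype.ext
      apply Units.ext
      funext i
      exact i.elim0
    · intro g hg; exact absurd hg (Set.notMem_empty g)
    · exact Set.notMem_empty 1
  | succ m ih =>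
    obtain ⟨P, hP⟩ := ih
    exact ⟨stepCone P, stepCone_pos P hP⟩


theorem main (k : ℕ) (hk : 1 ≤ k)
    (ι : ↥(Nk k) →* ↥(Nk (k + 1)))
    (hι : ∀ B : ↥(Nk k), ((ι B : ↥(Nk (k + 1))) : (Matrix (Fin (k + 1)) (Fin (k + 1)) ℤ)ˣ).val
      = embMat k ((B : (Matrix (Fin k) (Fin k) ℤ)ˣ)).val)
    (hinj : Function.Injective ι) :
    ∃ Q : Set ↥(Nk (k + 1)), IsPositiveCone Q ∧
      IsConvexIn Q ((ι.range : Subgroup ↥(Nk (k + 1))) : Set ↥(Nk (k + 1))) := by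
  obtain ⟨P, hP⟩ := cone_exists k
  refine ⟨stepCone P, stepCone_pos P hP, ?_⟩
  have hR0 : ∀ B : ↥(Nk k), Rvec (ι B) = 0 := by
    intro B
    funext j
    show ((ι B : ↥(Nk (k + 1))) : (Matrix (Fin (k + 1)) (Fin (k + 1)) ℤ)ˣ).val (Fin.last k) j.castSucc = 0
    rw [hι B]
    show (embMat k _) (Fin.last k) j.castSucc = 0
    unfold embMat
    rw [Matrix.of_apply, dif_neg (by simp), if_neg (Fin.castSucc_lt_last j).ne']
  have hrange : ∀ f : ↥(Nk (k + 1)),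
      f ∈ ((ι.range : Subgroup ↥(Nk (k + 1))) : Set ↥(Nk (k + 1))) ↔ Rvec f = 0 := by
    intro f
    constructor
    · rintro ⟨B, rfl⟩
      exact hR0 B
    · intro h0
      refine ⟨blockHom f, ?_⟩
      apply eq_of_parts (hR0 _) h0
      funext i j
      show ((ι (blockHom f) : ↥(Nk (k + 1))) : (Matrix (Fin (k + 1)) (Fin (k + 1)) ℤ)ˣ).val i.castSucc j.castSucc = blockMat f i j
      rw [hι]
      show (embMat k _) i.castSucc j.castSucc = blockMat f i j
      unfold embMat
      rw [Matrix.of_apply, dif_pos ⟨by simp, by simp⟩]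
      show blockMat f _ _ = blockMat f i j
      congr 1 <;> exact Fin.ext (by simp)
  intro g hg h hh f h1 h2
  have hg0 : Rvec g = 0 := (hrange g).mp hg
  have hh0 : Rvec h = 0 := (hrange h).mp hh
  have hgi0 : Rvec g⁻¹ = 0 := Rvec_inv_zero hg0
  have e1 : Rvec (g⁻¹ * f) = Rvec f := by
    rw [Rvec_mul, hgi0]
    funext j
    simp [mvec_zero]
  have e2 : Rvec (f⁻¹ * h) = mvec (Rvec f⁻¹) h := by
    rw [Rvec_mul]
    funext j
    have : Rvec h j = 0 := by rw [hh0]; rfl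
    simp [this]
  have HF : LexPos (Rvec f) ∨ Rvec f = 0 := by
    rcases h1 with h1 | h1
    · rcases h1 with hl | ⟨hz, -⟩
      · left; rwa [e1] at hl
      · right; rwa [e1] at hz
    · right
      rw [← e1, h1, Rvec_one]
  rw [hrange f]
  rcases HF with HF | HF
  · exfalso
    have hneg : LexPos (-(Rvec f⁻¹)) := by
      by_contra hc
      by_cases hz : Rvec f⁻¹ = 0
      · have hmv := Rvec_inv_mvec f
        rw [hz, mvec_zero] at hmv
        exact HF.ne_zero (neg_eq_zero.mp hmv.symm)
      · rcases lexpos_or hz with hp | hp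
        · have := mvec_lexpos f hp
          rw [Rvec_inv_mvec] at this
          exact HF.not_neg this
        · exact hc hp
    have hlex2 : LexPos (-(mvec (Rvec f⁻¹) h)) := by
      rw [← mvec_neg]
      exact mvec_lexpos h hneg
    rcases h2 with h2 | h2
    · rcases h2 with hl | ⟨hz, -⟩
      · rw [e2] at hl
        exact hl.not_neg hlex2
      · rw [e2] at hz
        exact hlex2.ne_zero (by rw [hz, neg_zero])
    · have hz : Rvec (f⁻¹ * h) = 0 := by rw [h2, Rvec_one]
      rw [e2] at hz
      exact hlex2.ne_zero (by rw [hz, neg_zero])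
  · exact HF

end ConeAux
/-- For the group homomorphism `ι : N_k → N_{k+1}` sending `B` to the block matrix
`(B 0; 0 1)`, there is a positive cone `Q` of `N_{k+1}` such that the image `ι(N_k)` is
convex with respect to `Q`. -/
theorem image_Nk_convex_in_Nk_succ (k : ℕ) (hk : 1 ≤ k)
    (ι : ↥(Nk k) →* ↥(Nk (k + 1)))
    (hι : ∀ B : ↥(Nk k), ((ι B : ↥(Nk (k + 1))) : (Matrix (Fin (k + 1)) (Fin (k + 1)) ℤ)ˣ).val
      = embMat k ((B : (Matrix (Fin k) (Fin k) ℤ)ˣ)).val)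
    (hinj : Function.Injective ι) :
    ∃ Q : Set ↥(Nk (k + 1)), IsPositiveCone Q ∧
      IsConvexIn Q ((ι.range : Subgroup ↥(Nk (k + 1))) : Set ↥(Nk (k + 1))) :=
  ConeAux.main k hk ι hι hinj
end
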